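/- arXiv:1602.03904 — 7 statements merged into one kernel-verified Lean document; each statement's English description precedes it below -/
import Mathlib

section
/- For every integer r ≥ 3 and every graph G on n vertices the following holds: if G has minimum degree δ(G) > ((3r−7)/(3r−4))·n and G contains no copy of the complete graph K_r, then G is (r−1)-colourable (its chromatic number is at most r−1). -/
open Finset

namespace AESProof

variable {V : Type*} [Fintype V]

/-- Turán-type minimum degree lemma: if every vertex of `P` has at most `t` non-neighbours
inside `P` and `k * t < #P`, then `P` contains a clique on `k+1` vertices. -/
lemma clique_of_large_min_degree [DecidableEq V] (G : SimpleGraph V) [DecidableRel G.Adj]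
    (t : ℝ) (ht : 0 ≤ t) :
    ∀ (k : ℕ) (P : Finset V), (k : ℝ) * t < P.card →
      (∀ p ∈ P, ((P \ G.neighborFinset p).card : ℝ) ≤ t) →
      ∃ K : Finset V, K ⊆ P ∧ G.IsNClique (k + 1) K := by
  intro k
  induction k with
  | zero =>
    intro P hP _
    have h0 : (0 : ℝ) < P.card := by simpa using hP
    have : 0 < P.card := by exact_mod_cast h0
    obtain ⟨p, hp⟩ := Finset.card_pos.mp this
    refine ⟨{p}, by simpa using hp, ?_⟩
    constructor
    · simp [SimpleGraph.IsClique]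
    · simp
  | succ k ih =>
    intro P hP hdeg
    have hPpos : 0 < P.card := by
      have h1 : (0 : ℝ) ≤ (k + 1 : ℕ) * t := by positivity
      have : (0 : ℝ) < P.card := lt_of_le_of_lt h1 hP
      exact_mod_cast this
    obtain ⟨p, hp⟩ := Finset.card_pos.mp hPpos
    set P' := P ∩ G.neighborFinset p with hP'def
    have hcard : (P'.card : ℝ) = P.card - (P \ G.neighborFinset p).card := by
      have h := Finset.card_inter_add_card_sdiff P (G.neighborFinset p)
      have h' : (P'.card : ℝ) + ((P \ G.neighborFinset p).card : ℝ) = P.card := by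
        exact_mod_cast h
      linarith
    have hP'big : (k : ℝ) * t < P'.card := by
      have h1 := hdeg p hp
      have h2 : ((k : ℕ) + 1 : ℝ) * t < P.card := by push_cast at hP ⊢; linarith
      rw [hcard]; linarith
    have hdeg' : ∀ q ∈ P', ((P' \ G.neighborFinset q).card : ℝ) ≤ t := by
      intro q hq
      refine le_trans ?_ (hdeg q (Finset.mem_of_mem_inter_left hq))
      exact_mod_cast Finset.card_le_card
        (Finset.sdiff_subset_sdiff Finset.inter_subset_left le_rfl)
    obtain ⟨K, hKP', hK⟩ := ih P' hP'big hdeg'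
    have hadjP' : ∀ q ∈ P', G.Adj p q := by
      intro q hq
      have := Finset.mem_of_mem_inter_right hq
      rwa [SimpleGraph.mem_neighborFinset] at this
    refine ⟨insert p K, ?_, ?_⟩
    · intro a ha
      rcases Finset.mem_insert.mp ha with rfl | ha
      · exact hp
      · exact Finset.mem_of_mem_inter_left (hKP' ha)
    · exact hK.insert fun b hb => hadjP' b (hKP' hb)

/-- The core argument: an edge-maximal `K_r`-free graph with min degree above the
Andrásfai–Erdős–Sós threshold is complete multipartite with at most `r-1` parts. -/
lemma colorable_of_maximal (r : ℕ) (hr : 3 ≤ r) (G : SimpleGraph V) [DecidableRel G.Adj]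
    (hfree : G.CliqueFree r)
    (hdeg : ∀ v, (3 * (r : ℝ) - 7) / (3 * (r : ℝ) - 4) * (Fintype.card V) < G.degree v)
    (hmax : ∀ u w : V, u ≠ w → ¬G.Adj u w →
      ∃ K : Finset V, (∀ a ∈ K, G.Adj u a ∧ G.Adj w a) ∧ G.IsNClique (r - 2) K) :
    G.Colorable (r - 1) := by
  classical
  set n := Fintype.card V with hn
  set s : ℝ := n / (3 * (r : ℝ) - 4) with hs
  have hr3 : (3 : ℝ) ≤ (r : ℝ) := by exact_mod_cast hr
  have hr4 : (0 : ℝ) < 3 * (r : ℝ) - 4 := by linarith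
  have hns : (n : ℝ) = (3 * (r : ℝ) - 4) * s := by
    rw [hs]; field_simp
  have hs0 : 0 ≤ s := by positivity
  set M : V → Finset V := fun v => (G.neighborFinset v)ᶜ with hM
  have hMmem : ∀ v a, a ∈ M v ↔ ¬ G.Adj v a := by
    intro v a; simp [hM]
  have budget : ∀ v, ((M v).card : ℝ) < 3 * s := by
    intro v
    have hdle : G.degree v ≤ n := by
      rw [hn]; exact Finset.card_le_univ _
    have h1 : ((M v).card : ℝ) = (n : ℝ) - G.degree v := by
      have h0 : (M v).card = n - G.degree v := by
        rw [hM]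
        simp only
        rw [Finset.card_compl, ← hn]
        rfl
      rw [h0, Nat.cast_sub hdle]
    have h2 := hdeg v
    have h3 : (3 * (r : ℝ) - 7) / (3 * (r : ℝ) - 4) * n = n - 3 * s := by
      rw [hs]; field_simp; ring
    rw [h1]; rw [h3] at h2; linarith
  -- (A) adjacent vertices have few common non-neighbours
  have hA : ∀ x y, G.Adj x y → ((M x ∩ M y).card : ℝ) < s := by
    intro x y hxy
    by_contra hcon
    push_neg at hcon
    set P : Finset V := (M x ∪ M y)ᶜ with hP
    have hPmem : ∀ v, v ∈ P ↔ G.Adj x v ∧ G.Adj y v := by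
      intro v
      rw [hP, Finset.mem_compl, Finset.mem_union, hMmem, hMmem]
      tauto
    have hPcard : ((r : ℝ) - 3) * (3 * s) < P.card := by
      have hle : (M x ∪ M y).card ≤ n := by rw [hn]; exact Finset.card_le_univ _
      have e1 : (P.card : ℝ) = (n : ℝ) - (M x ∪ M y).card := by
        have h0 : P.card = n - (M x ∪ M y).card := by
          rw [hP, Finset.card_compl, ← hn]
        rw [h0, Nat.cast_sub hle]
      have e2 : ((M x ∪ M y).card : ℝ) + ((M x ∩ M y).card : ℝ)
          = ((M x).card : ℝ) + ((M y).card : ℝ) := by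
        exact_mod_cast Finset.card_union_add_card_inter (M x) (M y)
      have bx := budget x
      have by' := budget y
      nlinarith [hcon, e1, e2]
    have hdegP : ∀ p ∈ P, ((P \ G.neighborFinset p).card : ℝ) ≤ 3 * s := by
      intro p hp
      have hsub : P \ G.neighborFinset p ⊆ M p := by
        intro v hv
        rw [Finset.mem_sdiff] at hv
        rw [hMmem]
        intro h
        exact hv.2 (by rwa [SimpleGraph.mem_neighborFinset])
      calc ((P \ G.neighborFinset p).card : ℝ) ≤ (M p).card := by
            exact_mod_cast Finset.card_le_card hsub
        _ ≤ 3 * s := le_of_lt (budget p)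
    have hcast : (((r - 3 : ℕ) : ℝ)) = (r : ℝ) - 3 := by
      rw [Nat.cast_sub hr]; norm_num
    obtain ⟨K, hKP, hK⟩ := clique_of_large_min_degree G (3 * s) (by positivity) (r - 3) P
      (by rw [hcast]; exact hPcard) hdegP
    have hyK : y ∉ K := fun h => G.irrefl ((hPmem y).1 (hKP h)).2
    have c1 : G.IsNClique (r - 3 + 1 + 1) (insert y K) :=
      hK.insert fun b hb => ((hPmem b).1 (hKP hb)).2
    have hxK : x ∉ insert y K := by
      rw [Finset.mem_insert]
      rintro (rfl | h)
      · exact G.irrefl hxy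
      · exact G.irrefl ((hPmem x).1 (hKP h)).1
    have c2 : G.IsNClique (r - 3 + 1 + 1 + 1) (insert x (insert y K)) := by
      refine c1.insert fun b hb => ?_
      rcases Finset.mem_insert.mp hb with rfl | hb
      · exact hxy
      · exact ((hPmem b).1 (hKP hb)).1
    have hreq : r - 3 + 1 + 1 + 1 = r := by omega
    rw [hreq] at c2
    exact hfree _ c2
  -- (B) non-adjacent vertices have many common non-neighbours
  have hB : ∀ u w, u ≠ w → ¬ G.Adj u w → 2 * s < ((M u ∩ M w).card : ℝ) := by
    intro u w hne hnadj
    obtain ⟨K, hKadj, hK⟩ := hmax u w hne hnadj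
    set W : Finset V := univ.filter (fun v => ∀ a ∈ K, G.Adj a v) with hW
    have hWmem : ∀ v, v ∈ W ↔ ∀ a ∈ K, G.Adj a v := by
      intro v; simp [hW]
    have hKcard : K.card = r - 2 := hK.2
    have hKne : K.Nonempty := by
      rw [← Finset.card_pos, hKcard]; omega
    have hWind : ∀ v₁ ∈ W, ∀ v₂ ∈ W, ¬ G.Adj v₁ v₂ := by
      intro v₁ h₁ v₂ h₂ hadj
      have hv₂K : v₂ ∉ K := fun h => G.irrefl ((hWmem v₂).1 h₂ v₂ h)
      have c1 : G.IsNClique (r - 2 + 1) (insert v₂ K) :=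
        hK.insert fun b hb => ((hWmem v₂).1 h₂ b hb).symm
      have c2 : G.IsNClique (r - 2 + 1 + 1) (insert v₁ (insert v₂ K)) := by
        refine c1.insert fun b hb => ?_
        rcases Finset.mem_insert.mp hb with rfl | hb
        · exact hadj
        · exact ((hWmem v₁).1 h₁ b hb).symm
      have hreq : r - 2 + 1 + 1 = r := by omega
      rw [hreq] at c2
      exact hfree _ c2
    have huW : u ∈ W := (hWmem u).2 fun a ha => (hKadj a ha).1.symm
    have hwW : w ∈ W := (hWmem w).2 fun a ha => (hKadj a ha).2.symm
    have hWsub : W ⊆ M u ∩ M w := by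
      intro v hv
      rw [Finset.mem_inter, hMmem, hMmem]
      exact ⟨hWind u huW v hv, hWind w hwW v hv⟩
    have hcompl : Wᶜ ⊆ K.biUnion (fun a => M a) := by
      intro v hv
      rw [Finset.mem_compl, hWmem] at hv
      push_neg at hv
      obtain ⟨a, ha, hna⟩ := hv
      exact Finset.mem_biUnion.mpr ⟨a, ha, (hMmem a v).2 hna⟩
    have h1 : ((Wᶜ).card : ℝ) < ((r : ℝ) - 2) * (3 * s) := by
      calc ((Wᶜ).card : ℝ) ≤ ((K.biUnion fun a => M a).card : ℝ) := by
            exact_mod_cast Finset.card_le_card hcompl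
        _ ≤ ((∑ a ∈ K, (M a).card : ℕ) : ℝ) := by
            exact_mod_cast Finset.card_biUnion_le
        _ = ∑ a ∈ K, ((M a).card : ℝ) := by push_cast; rfl
        _ < ∑ _a ∈ K, 3 * s := Finset.sum_lt_sum_of_nonempty hKne fun a _ => budget a
        _ = (K.card : ℝ) * (3 * s) := by rw [Finset.sum_const, nsmul_eq_mul]
        _ = ((r : ℝ) - 2) * (3 * s) := by
            rw [hKcard, Nat.cast_sub (by omega : 2 ≤ r)]; norm_num
    have h2 : (W.card : ℝ) + ((Wᶜ).card : ℝ) = (n : ℝ) := by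
      have := Finset.card_add_card_compl W
      rw [← hn] at this
      exact_mod_cast this
    have h3 : 2 * s < (W.card : ℝ) := by nlinarith [h1, hns, h2]
    calc 2 * s < (W.card : ℝ) := h3
      _ ≤ ((M u ∩ M w).card : ℝ) := by exact_mod_cast Finset.card_le_card hWsub
  -- (C) non-adjacency is transitive, giving a setoid
  have htrans : ∀ {a b c : V}, ¬ G.Adj a b → ¬ G.Adj b c → ¬ G.Adj a c := by
    intro a b c hab hbc hac
    by_cases h1 : a = b
    · exact hbc (h1 ▸ hac)
    by_cases h2 : b = c
    · exact hab (h2 ▸ hac)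
    have hBab := hB a b h1 hab
    have hBbc := hB b c h2 hbc
    have hAac := hA a c hac
    have hbud := budget b
    have key : (((M a ∩ M b) ∪ (M b ∩ M c)).card : ℝ)
        + (((M a ∩ M b) ∩ (M b ∩ M c)).card : ℝ)
        = ((M a ∩ M b).card : ℝ) + ((M b ∩ M c).card : ℝ) := by
      exact_mod_cast Finset.card_union_add_card_inter (M a ∩ M b) (M b ∩ M c)
    have sub1 : (M a ∩ M b) ∪ (M b ∩ M c) ⊆ M b := by
      intro v hv
      rcases Finset.mem_union.mp hv with h | h
      · exact (Finset.mem_inter.mp h).2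
      · exact (Finset.mem_inter.mp h).1
    have sub2 : (M a ∩ M b) ∩ (M b ∩ M c) ⊆ M a ∩ M c := by
      intro v hv
      rw [Finset.mem_inter] at hv ⊢
      exact ⟨(Finset.mem_inter.mp hv.1).1, (Finset.mem_inter.mp hv.2).2⟩
    have k1 : (((M a ∩ M b) ∪ (M b ∩ M c)).card : ℝ) ≤ ((M b).card : ℝ) := by
      exact_mod_cast Finset.card_le_card sub1
    have k2 : (((M a ∩ M b) ∩ (M b ∩ M c)).card : ℝ) ≤ ((M a ∩ M c).card : ℝ) := by
      exact_mod_cast Finset.card_le_card sub2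
    linarith
  -- (D) build the coloring from the quotient
  let st : Setoid V := ⟨fun a b => ¬ G.Adj a b,
    ⟨fun a => G.loopless.irrefl a, fun h hadj => h hadj.symm, fun h1 h2 => htrans h1 h2⟩⟩
  haveI : DecidableRel ((· ≈ ·) : V → V → Prop) := fun _ _ => instDecidableNot
  let C : G.Coloring (Quotient st) := SimpleGraph.Coloring.mk (fun v => Quotient.mk st v)
    (fun {a b} hadj heq => (Quotient.eq.mp heq) hadj)
  have hcard : Fintype.card (Quotient st) ≤ r - 1 := by
    by_contra hcon
    push_neg at hcon
    have hle : r ≤ Fintype.card (Quotient st) := by omega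
    have hle' : Fintype.card (Fin r) ≤ Fintype.card (Quotient st) := by simpa using hle
    obtain ⟨f⟩ := Function.Embedding.nonempty_of_card_le hle'
    set g : Fin r → V := fun i => (f i).out with hg
    have hadj : ∀ i j : Fin r, i ≠ j → G.Adj (g i) (g j) := by
      intro i j hij
      by_contra hna
      have : f i = f j := by
        rw [← Quotient.out_eq (f i), ← Quotient.out_eq (f j)]
        exact Quotient.sound hna
      exact hij (f.injective this)
    have hginj : Function.Injective g := by
      intro i j h
      by_contra hij
      exact (hadj i j hij).ne h
    have hclique : G.IsNClique r (univ.image g) := by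
      constructor
      · intro a ha b hb hab
        simp only [Finset.coe_image, Set.mem_image] at ha hb
        obtain ⟨i, _, rfl⟩ := ha
        obtain ⟨j, _, rfl⟩ := hb
        exact hadj i j (fun h => hab (by rw [h]))
      · rw [Finset.card_image_of_injective _ hginj, Finset.card_univ, Fintype.card_fin]
    exact hfree _ hclique
  exact C.colorable.mono hcard

/-- Adding a single edge `uw` to a graph. -/
def addEdge (G : SimpleGraph V) (u w : V) : SimpleGraph V where
  Adj a b := G.Adj a b ∨ (a ≠ b ∧ ((a = u ∧ b = w) ∨ (a = w ∧ b = u)))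
  symm := by
    constructor
    intro a b h
    rcases h with h | ⟨hne, h⟩
    · exact Or.inl h.symm
    · exact Or.inr ⟨hne.symm, by tauto⟩
  loopless := by
    constructor
    intro a h
    rcases h with h | ⟨hne, _⟩
    · exact G.irrefl h
    · exact hne rfl

lemma le_addEdge (G : SimpleGraph V) (u w : V) : G ≤ addEdge G u w := by
  intro a b h
  exact Or.inl h

instance addEdge.adjDecidable [DecidableEq V] (G : SimpleGraph V) [DecidableRel G.Adj]
    (u w : V) : DecidableRel (addEdge G u w).Adj := by
  intro a b
  unfold addEdge
  simp only
  infer_instance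

/-- Number of (ordered) non-adjacent pairs of distinct vertices. -/
noncomputable def nonEdgeCount (G : SimpleGraph V) : ℕ :=
  letI := Classical.decEq V
  letI : DecidableRel G.Adj := Classical.decRel _
  (Finset.univ.filter (fun p : V × V => p.1 ≠ p.2 ∧ ¬ G.Adj p.1 p.2)).card

lemma nonEdgeCount_lt [DecidableEq V] (G : SimpleGraph V) [DecidableRel G.Adj] (u w : V)
    (hne : u ≠ w) (hnadj : ¬ G.Adj u w) :
    nonEdgeCount (addEdge G u w) < nonEdgeCount G := by
  classical
  unfold nonEdgeCount
  apply Finset.card_lt_card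
  rw [Finset.ssubset_iff_of_subset]
  · refine ⟨(u, w), ?_, ?_⟩
    · simp only [Finset.mem_filter, Finset.mem_univ, true_and]
      exact ⟨hne, hnadj⟩
    · simp only [Finset.mem_filter, Finset.mem_univ, true_and, not_and, not_not]
      intro _
      exact Or.inr ⟨hne, Or.inl ⟨rfl, rfl⟩⟩
  · intro p hp
    simp only [Finset.mem_filter, Finset.mem_univ, true_and] at hp ⊢
    exact ⟨hp.1, fun h => hp.2 (le_addEdge G u w h)⟩

lemma degree_le_addEdge [DecidableEq V] (G : SimpleGraph V) [DecidableRel G.Adj] (u w : V)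
    (v : V) : G.degree v ≤ (addEdge G u w).degree v := by
  apply Finset.card_le_card
  intro a ha
  rw [SimpleGraph.mem_neighborFinset] at ha ⊢
  exact le_addEdge G u w ha

/-- Main induction: repeatedly add edges keeping `K_r`-freeness until edge-maximal. -/
lemma aes_rec [DecidableEq V] (r : ℕ) (hr : 3 ≤ r) :
    ∀ (N : ℕ) (G : SimpleGraph V) (_inst : DecidableRel G.Adj),
      nonEdgeCount G ≤ N → G.CliqueFree r →
      (∀ v, (3 * (r : ℝ) - 7) / (3 * (r : ℝ) - 4) * (Fintype.card V) < G.degree v) →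
      G.Colorable (r - 1) := by
  intro N
  induction N with
  | zero =>
    intro G inst hcount hfree hdeg
    apply colorable_of_maximal r hr G hfree hdeg
    intro u w hne hnadj
    exfalso
    have : 0 < nonEdgeCount G := by
      unfold nonEdgeCount
      rw [Finset.card_pos]
      refine ⟨(u, w), ?_⟩
      simp only [Finset.mem_filter, Finset.mem_univ, true_and]
      exact ⟨hne, hnadj⟩
    omega
  | succ N ih =>
    intro G inst hcount hfree hdeg
    by_cases hm : ∀ u w : V, u ≠ w → ¬G.Adj u w → ¬ (addEdge G u w).CliqueFree r
    · -- G is edge-maximal: extract the clique structure and conclude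
      apply colorable_of_maximal r hr G hfree hdeg
      intro u w hne hnadj
      have hnotfree := hm u w hne hnadj
      rw [SimpleGraph.CliqueFree] at hnotfree
      push_neg at hnotfree
      obtain ⟨T, hT⟩ := hnotfree
      -- u and w belong to T
      have huT : u ∈ T := by
        by_contra huT
        apply hfree T
        refine ⟨?_, hT.2⟩
        intro a ha b hb hab
        rcases hT.1 ha hb hab with h' | ⟨_, h'⟩
        · exact h'
        · exfalso
          rcases h' with ⟨h1, _⟩ | ⟨_, h2⟩
          · exact huT (h1 ▸ ha)
          · exact huT (h2 ▸ hb)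
      have hwT : w ∈ T := by
        by_contra hwT
        apply hfree T
        refine ⟨?_, hT.2⟩
        intro a ha b hb hab
        rcases hT.1 ha hb hab with h' | ⟨_, h'⟩
        · exact h'
        · exfalso
          rcases h' with ⟨_, h2⟩ | ⟨h1, _⟩
          · exact hwT (h2 ▸ hb)
          · exact hwT (h1 ▸ ha)
      set K : Finset V := (T.erase u).erase w with hK
      have hKmem : ∀ a, a ∈ K ↔ a ≠ w ∧ a ≠ u ∧ a ∈ T := by
        intro a; simp [hK, Finset.mem_erase, and_assoc]
      refine ⟨K, ?_, ?_, ?_⟩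
      · intro a ha
        rw [hKmem] at ha
        obtain ⟨haw, hau, haT⟩ := ha
        constructor
        · have := hT.1 (Finset.mem_coe.mpr huT) (Finset.mem_coe.mpr haT) (Ne.symm hau)
          rcases this with h' | ⟨_, h'⟩
          · exact h'
          · exfalso
            rcases h' with ⟨_, h2⟩ | ⟨h1, _⟩
            · exact haw h2
            · exact hne h1
        · have := hT.1 (Finset.mem_coe.mpr hwT) (Finset.mem_coe.mpr haT) (Ne.symm haw)
          rcases this with h' | ⟨_, h'⟩
          · exact h'
          · exfalso
            rcases h' with ⟨h1, _⟩ | ⟨_, h2⟩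
            · exact hne h1.symm
            · exact hau h2
      · intro a ha b hb hab
        rw [Finset.mem_coe, hKmem] at ha hb
        have := hT.1 (Finset.mem_coe.mpr ha.2.2) (Finset.mem_coe.mpr hb.2.2) hab
        rcases this with h' | ⟨_, h'⟩
        · exact h'
        · exfalso
          rcases h' with ⟨h1, _⟩ | ⟨h1, _⟩
          · exact ha.2.1 h1
          · exact ha.1 h1
      · have h1 : w ∈ T.erase u := Finset.mem_erase.mpr ⟨hne.symm, hwT⟩
        rw [hK, Finset.card_erase_of_mem h1, Finset.card_erase_of_mem huT, hT.2]
        omega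
    · -- add an edge and recurse
      push_neg at hm
      obtain ⟨u, w, hne, hnadj, hfree'⟩ := hm
      have hcount' : nonEdgeCount (addEdge G u w) ≤ N := by
        have := nonEdgeCount_lt G u w hne hnadj
        omega
      have hdeg' : ∀ v, (3 * (r : ℝ) - 7) / (3 * (r : ℝ) - 4) * (Fintype.card V)
          < (addEdge G u w).degree v := by
        intro v
        calc (3 * (r : ℝ) - 7) / (3 * (r : ℝ) - 4) * (Fintype.card V)
            < G.degree v := hdeg v
          _ ≤ (addEdge G u w).degree v := by
              exact_mod_cast degree_le_addEdge G u w v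
      have := ih (addEdge G u w) (addEdge.adjDecidable G u w) hcount' hfree' hdeg'
      exact SimpleGraph.Colorable.mono_left (le_addEdge G u w) this

end AESProof

set_option maxHeartbeats 1000000 in
theorem stmt_0 {V : Type*} [Fintype V] (r n : ℕ) (hr : 3 ≤ r)
    (G : SimpleGraph V) [DecidableRel G.Adj] (hn : Fintype.card V = n)
    (hdeg : (3 * (r : ℝ) - 7) / (3 * (r : ℝ) - 4) * n < G.minDegree)
    (hfree : G.CliqueFree r) :
    G.Colorable (r - 1) := by
  classical
  subst hn
  have hdeg' : ∀ v, (3 * (r : ℝ) - 7) / (3 * (r : ℝ) - 4) * (Fintype.card V) < G.degree v := by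
    intro v
    calc (3 * (r : ℝ) - 7) / (3 * (r : ℝ) - 4) * (Fintype.card V)
        < (G.minDegree : ℝ) := hdeg
      _ ≤ (G.degree v : ℝ) := by exact_mod_cast G.minDegree_le_degree v
  have h := AESProof.aes_rec (V := V) r hr (AESProof.nonEdgeCount G) G ‹DecidableRel G.Adj›
  exact h (Nat.le_refl _) hfree hdeg'
end

section
/- Every triangle-free graph G on n vertices with minimum degree δ(G) > 3n/8 is homomorphic to the cycle C_5 of length 5. -/
open SimpleGraph Finset

set_option linter.unusedSectionVars false


lemma J_classify (s : Finset (ZMod 5))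
    (h1 : ∀ c : ZMod 5, c ∈ s ∨ c + 1 ∈ s ∨ c + 2 ∈ s)
    (h2 : ∀ c : ZMod 5, ¬(c ∈ s ∧ c + 2 ∈ s ∧ c + 3 ∈ s))
    (h3 : ∀ c : ZMod 5, c ∈ s → (c + 2 ∈ s ∨ c + 3 ∈ s)) :
    ∃ i : ZMod 5, s = insert (i - 1) ({i + 1} : Finset (ZMod 5)) := by
  revert h1 h2 h3
  revert s
  decide

section counting
variable {V : Type*} [Fintype V] [DecidableEq V] {H : SimpleGraph V} [DecidableRel H.Adj] {δ n : ℕ}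

lemma four_disjoint_contra (hn : Fintype.card V = n) (h8 : 3 * n < 8 * δ)
    {S1 S2 S3 S4 : Finset V}
    (c1 : δ ≤ S1.card) (c2 : δ ≤ S2.card)
    (c3 : 3*(δ:ℤ) - n ≤ S3.card) (c4 : 3*(δ:ℤ) - n ≤ S4.card)
    (d12 : Disjoint S1 S2) (d13 : Disjoint S1 S3) (d14 : Disjoint S1 S4)
    (d23 : Disjoint S2 S3) (d24 : Disjoint S2 S4) (d34 : Disjoint S3 S4) : False := by
  have e1 : (S1 ∪ S2 ∪ S3 ∪ S4).card = S1.card + S2.card + S3.card + S4.card := by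
    rw [card_union_of_disjoint, card_union_of_disjoint, card_union_of_disjoint]
    · exact d12
    · exact disjoint_union_left.mpr ⟨d13, d23⟩
    · exact disjoint_union_left.mpr ⟨disjoint_union_left.mpr ⟨d14, d24⟩, d34⟩
  have e2 : (S1 ∪ S2 ∪ S3 ∪ S4).card ≤ n := hn ▸ card_le_univ _
  omega

lemma nbr_disj (hTF : ∀ ⦃p q r : V⦄, H.Adj p q → H.Adj q r → H.Adj p r → False)
    {a b : V} (hab : H.Adj a b) : Disjoint (H.neighborFinset a) (H.neighborFinset b) := by
  rw [Finset.disjoint_left]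
  intro y hy1 hy2
  rw [mem_neighborFinset] at hy1 hy2
  exact hTF hy1 hy2.symm hab

lemma common_nbr_card (hn : Fintype.card V = n) (hδ : ∀ v, δ ≤ H.degree v)
    (hTF : ∀ ⦃p q r : V⦄, H.Adj p q → H.Adj q r → H.Adj p r → False)
    {u v z : V} (hu : H.Adj u z) (hv : H.Adj v z) :
    3*(δ:ℤ) - n ≤ ((H.neighborFinset u ∩ H.neighborFinset v).card : ℤ) := by
  have d1 : Disjoint (H.neighborFinset u ∪ H.neighborFinset v) (H.neighborFinset z) :=
    disjoint_union_left.mpr ⟨nbr_disj hTF hu, nbr_disj hTF hv⟩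
  have e2 : (H.neighborFinset u ∪ H.neighborFinset v).card + (H.neighborFinset z).card ≤ n := by
    rw [← card_union_of_disjoint d1]
    exact hn ▸ card_le_univ _
  have e3 : (H.neighborFinset u ∩ H.neighborFinset v).card
      + (H.neighborFinset u ∪ H.neighborFinset v).card
      = (H.neighborFinset u).card + (H.neighborFinset v).card := card_inter_add_card_union _ _
  have hu' : δ ≤ (H.neighborFinset u).card := by rw [card_neighborFinset_eq_degree]; exact hδ u
  have hv' : δ ≤ (H.neighborFinset v).card := by rw [card_neighborFinset_eq_degree]; exact hδ v
  have hz' : δ ≤ (H.neighborFinset z).card := by rw [card_neighborFinset_eq_degree]; exact hδ z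
  omega

end counting

section pentagon

variable {V : Type*} [Fintype V] [DecidableEq V] (H : SimpleGraph V) [DecidableRel H.Adj]
  (x : ZMod 5 → V)

/-- the blow-up class of position `i` w.r.t. the pentagon `x` -/
def Bcl (i : ZMod 5) : Finset V :=
  H.neighborFinset (x (i+4)) ∩ H.neighborFinset (x (i+1))

lemma mem_Bcl {y : V} {i : ZMod 5} :
    y ∈ Bcl H x i ↔ H.Adj (x (i+4)) y ∧ H.Adj (x (i+1)) y := by
  simp [Bcl, mem_neighborFinset]

/-- `w` has a neighbor in class `i` -/
def Jm (w : V) (i : ZMod 5) : Prop := ∃ a ∈ Bcl H x i, H.Adj w a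

instance (w : V) (i : ZMod 5) : Decidable (Jm H x w i) := by
  unfold Jm; infer_instance

variable {H x}

section claims

variable (hx : ∀ i, H.Adj (x i) (x (i+1)))
  (hTF : ∀ ⦃p q r : V⦄, H.Adj p q → H.Adj q r → H.Adj p r → False)
  (hcn : ∀ u v : V, u ≠ v → ¬H.Adj u v → ∃ z, H.Adj u z ∧ H.Adj v z)
  {δ n : ℕ} (hn : Fintype.card V = n) (hδ : ∀ v, δ ≤ H.degree v) (h8 : 3 * n < 8 * δ)

include hx

lemma hx4 : ∀ c : ZMod 5, H.Adj (x (c+4)) (x c) := by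
  intro c
  have h := hx (c+4)
  have e : ∀ c : ZMod 5, c + 4 + 1 = c := by decide
  rwa [e c] at h

lemma xBm : ∀ i : ZMod 5, x i ∈ Bcl H x i := by
  intro i
  exact (mem_Bcl H x).mpr ⟨hx4 hx i, (hx i).symm⟩

include hTF

lemma chord1 : ∀ c : ZMod 5, ¬ H.Adj (x c) (x (c+2)) := by
  intro c h
  have h2 := hx (c+1)
  have e : ∀ c : ZMod 5, c + 1 + 1 = c + 2 := by decide
  rw [e c] at h2
  exact hTF (hx c) h2 h

lemma Bdisj1 : ∀ i : ZMod 5, Disjoint (Bcl H x i) (Bcl H x (i+1)) := by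
  intro i
  rw [Finset.disjoint_left]
  intro y h1 h2
  rw [mem_Bcl] at h1 h2
  have e14 : ∀ c : ZMod 5, c+1+4 = c := by decide
  rw [e14 i] at h2
  exact hTF (hx i) h1.2 h2.1

lemma Bdisj2 : ∀ i : ZMod 5, Disjoint (Bcl H x i) (Bcl H x (i+2)) := by
  intro i
  rw [Finset.disjoint_left]
  intro y h1 h2
  rw [mem_Bcl] at h1 h2
  have e24 : ∀ c : ZMod 5, c+2+4 = c+1 := by decide
  have e21 : ∀ c : ZMod 5, c+2+1 = c+3 := by decide
  have e31 : ∀ c : ZMod 5, c+3+1 = c+4 := by decide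
  rw [e24 i, e21 i] at h2
  have hx34 : H.Adj (x (i+3)) (x (i+4)) := by have := hx (i+3); rwa [e31 i] at this
  exact hTF hx34 h1.1 h2.2

lemma Bdisj {i j : ZMod 5} (hne : i ≠ j) : Disjoint (Bcl H x i) (Bcl H x j) := by
  have hcases : ∀ i j : ZMod 5, i ≠ j → (j = i+1 ∨ j = i+2 ∨ i = j+1 ∨ i = j+2) := by decide
  rcases hcases i j hne with h | h | h | h
  · exact h ▸ Bdisj1 hx hTF i
  · exact h ▸ Bdisj2 hx hTF i
  · exact (h ▸ Bdisj1 hx hTF j).symm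
  · exact (h ▸ Bdisj2 hx hTF j).symm

include hcn hn hδ h8

/-- window claim: `J(w)` meets every window of three consecutive classes -/
lemma claimC1 (w : V) (hw : ∀ i, w ∉ Bcl H x i) (c : ZMod 5) :
    Jm H x w c ∨ Jm H x w (c+1) ∨ Jm H x w (c+2) := by
  by_contra hcon
  push_neg at hcon
  obtain ⟨h0, h1, h2⟩ := hcon
  have nadj : ∀ j, ¬Jm H x w j → ¬H.Adj w (x j) := by
    intro j hj hadj
    exact hj ⟨x j, xBm hx j, hadj⟩
  have hne : ∀ j, w ≠ x j := by
    intro j h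
    exact hw j (h ▸ xBm hx j)
  obtain ⟨z, hz1, hz2⟩ := hcn w (x (c+1)) (hne _) (nadj _ h1)
  obtain ⟨z3, hz31, hz32⟩ := hcn w (x c) (hne _) (nadj _ h0)
  obtain ⟨z4, hz41, hz42⟩ := hcn w (x (c+2)) (hne _) (nadj _ h2)
  refine four_disjoint_contra hn h8
    (S1 := H.neighborFinset z) (S2 := H.neighborFinset (x (c+1)))
    (S3 := H.neighborFinset w ∩ H.neighborFinset (x c))
    (S4 := H.neighborFinset w ∩ H.neighborFinset (x (c+2)))
    ?_ ?_ ?_ ?_ ?_ ?_ ?_ ?_ ?_ ?_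
  · rw [card_neighborFinset_eq_degree]; exact hδ z
  · rw [card_neighborFinset_eq_degree]; exact hδ _
  · exact common_nbr_card hn hδ hTF hz31 hz32
  · exact common_nbr_card hn hδ hTF hz41 hz42
  · exact nbr_disj hTF hz2.symm
  · exact ((nbr_disj hTF hz1.symm).mono_right inter_subset_left)
  · exact ((nbr_disj hTF hz1.symm).mono_right inter_subset_left)
  · exact ((nbr_disj hTF (hx c).symm).mono_right inter_subset_right)
  · exact ((nbr_disj hTF (by
      have e : ∀ c : ZMod 5, c + 1 + 1 = c + 2 := by decide
      have := hx (c+1); rwa [e c] at this)).mono_right inter_subset_right)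
  · rw [Finset.disjoint_left]
    intro y hy3 hy4
    rw [mem_inter, mem_neighborFinset, mem_neighborFinset] at hy3 hy4
    refine h1 ⟨y, (mem_Bcl H x).mpr ⟨?_, ?_⟩, hy3.1⟩
    · have e : ∀ c : ZMod 5, c + 1 + 4 = c := by decide
      rw [e c]; exact hy3.2
    · have e : ∀ c : ZMod 5, c + 1 + 1 = c + 2 := by decide
      rw [e c]; exact hy4.2


/-- pattern claim: classes `c, c+2, c+3` cannot all be hit -/
lemma claimC2 (w : V) (c : ZMod 5)
    (h0 : Jm H x w c) (h2 : Jm H x w (c+2)) (h3 : Jm H x w (c+3)) : False := by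
  have e24 : ∀ c : ZMod 5, c+2+4 = c+1 := by decide
  have e21 : ∀ c : ZMod 5, c+2+1 = c+3 := by decide
  have e34 : ∀ c : ZMod 5, c+3+4 = c+2 := by decide
  have e31 : ∀ c : ZMod 5, c+3+1 = c+4 := by decide
  have e11 : ∀ c : ZMod 5, c+1+1 = c+2 := by decide
  obtain ⟨a, haB, haw⟩ := h0
  obtain ⟨d, hdB, hdw⟩ := h2
  obtain ⟨g, hgB, hgw⟩ := h3
  rw [mem_Bcl] at haB hdB hgB
  rw [e24 c, e21 c] at hdB
  rw [e34 c, e31 c] at hgB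
  have hx34 : H.Adj (x (c+3)) (x (c+4)) := by have := hx (c+3); rwa [e31 c] at this
  have hx12 : H.Adj (x (c+1)) (x (c+2)) := by have := hx (c+1); rwa [e11 c] at this
  refine four_disjoint_contra hn h8
    (S1 := H.neighborFinset w) (S2 := H.neighborFinset a)
    (S3 := H.neighborFinset d ∩ H.neighborFinset (x (c+4)))
    (S4 := H.neighborFinset g ∩ H.neighborFinset (x (c+1)))
    ?_ ?_ ?_ ?_ ?_ ?_ ?_ ?_ ?_ ?_
  · rw [card_neighborFinset_eq_degree]; exact hδ _
  · rw [card_neighborFinset_eq_degree]; exact hδ _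
  · exact common_nbr_card hn hδ hTF hdB.2.symm hx34.symm
  · exact common_nbr_card hn hδ hTF hgB.1.symm hx12
  · exact nbr_disj hTF haw
  · exact (nbr_disj hTF hdw).mono_right inter_subset_left
  · exact (nbr_disj hTF hgw).mono_right inter_subset_left
  · exact (nbr_disj hTF haB.1.symm).mono_right inter_subset_right
  · exact (nbr_disj hTF haB.2.symm).mono_right inter_subset_right
  · exact (nbr_disj hTF hgB.2).mono inter_subset_right inter_subset_left

/-- forward claim: a hit class forces a hit two or three further -/
lemma claimC3 (w : V) (hw : ∀ i, w ∉ Bcl H x i) (c : ZMod 5)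
    (h1 : Jm H x w (c+1)) : Jm H x w (c+3) ∨ Jm H x w (c+4) := by
  by_contra hcon
  push_neg at hcon
  obtain ⟨h3, h4⟩ := hcon
  have e14 : ∀ c : ZMod 5, c+1+4 = c := by decide
  have e11 : ∀ c : ZMod 5, c+1+1 = c+2 := by decide
  have e21 : ∀ c : ZMod 5, c+2+1 = c+3 := by decide
  have e31 : ∀ c : ZMod 5, c+3+1 = c+4 := by decide
  have e34 : ∀ c : ZMod 5, c+3+4 = c+2 := by decide
  obtain ⟨a, haB, haw⟩ := h1
  rw [mem_Bcl, e14 c, e11 c] at haB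
  have nadj : ∀ j, ¬Jm H x w j → ¬H.Adj w (x j) := by
    intro j hj hadj
    exact hj ⟨x j, xBm hx j, hadj⟩
  have hne : ∀ j, w ≠ x j := by
    intro j h
    exact hw j (h ▸ xBm hx j)
  obtain ⟨z3, hz31, hz32⟩ := hcn w (x (c+4)) (hne _) (nadj _ h4)
  obtain ⟨z4, hz41, hz42⟩ := hcn w (x (c+3)) (hne _) (nadj _ h3)
  have hx23 : H.Adj (x (c+2)) (x (c+3)) := by have := hx (c+2); rwa [e21 c] at this
  have hx34 : H.Adj (x (c+3)) (x (c+4)) := by have := hx (c+3); rwa [e31 c] at this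
  refine four_disjoint_contra hn h8
    (S1 := H.neighborFinset a) (S2 := H.neighborFinset (x (c+2)))
    (S3 := H.neighborFinset w ∩ H.neighborFinset (x (c+4)))
    (S4 := H.neighborFinset w ∩ H.neighborFinset (x (c+3)))
    ?_ ?_ ?_ ?_ ?_ ?_ ?_ ?_ ?_ ?_
  · rw [card_neighborFinset_eq_degree]; exact hδ _
  · rw [card_neighborFinset_eq_degree]; exact hδ _
  · exact common_nbr_card hn hδ hTF hz31 hz32
  · exact common_nbr_card hn hδ hTF hz41 hz42
  · exact nbr_disj hTF haB.2.symm
  · exact (nbr_disj hTF haw.symm).mono_right inter_subset_left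
  · exact (nbr_disj hTF haw.symm).mono_right inter_subset_left
  · rw [Finset.disjoint_left]
    intro y hy2 hy3
    rw [mem_neighborFinset] at hy2
    rw [mem_inter, mem_neighborFinset, mem_neighborFinset] at hy3
    refine h3 ⟨y, (mem_Bcl H x).mpr ⟨?_, ?_⟩, hy3.1⟩
    · rw [e34 c]; exact hy2
    · rw [e31 c]; exact hy3.2
  · exact (nbr_disj hTF hx23).mono_right inter_subset_right
  · exact (nbr_disj hTF hx34).symm.mono inter_subset_right inter_subset_right

/-- two adjacent vertices cannot both have a neighbor in the same class -/
lemma claimC7 {w w' : V} (hww : H.Adj w w') {c : ZMod 5}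
    (h1 : Jm H x w c) (h2 : Jm H x w' c) : False := by
  have e11 : ∀ c : ZMod 5, c+1+1 = c+2 := by decide
  have e31 : ∀ c : ZMod 5, c+3+1 = c+4 := by decide
  obtain ⟨a, haB, haw⟩ := h1
  obtain ⟨a', haB', haw'⟩ := h2
  rw [mem_Bcl] at haB haB'
  by_cases heq : a = a'
  · subst heq
    exact hTF hww haw' haw
  have hx12 : H.Adj (x (c+1)) (x (c+2)) := by have := hx (c+1); rwa [e11 c] at this
  have hx34 : H.Adj (x (c+3)) (x (c+4)) := by have := hx (c+3); rwa [e31 c] at this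
  have e21 : ∀ c : ZMod 5, c+2+1 = c+3 := by decide
  have hx23 : H.Adj (x (c+2)) (x (c+3)) := by have := hx (c+2); rwa [e21 c] at this
  refine four_disjoint_contra hn h8
    (S1 := H.neighborFinset a) (S2 := H.neighborFinset (x (c+1)))
    (S3 := H.neighborFinset w ∩ H.neighborFinset a')
    (S4 := H.neighborFinset (x (c+4)) ∩ H.neighborFinset (x (c+2)))
    ?_ ?_ ?_ ?_ ?_ ?_ ?_ ?_ ?_ ?_
  · rw [card_neighborFinset_eq_degree]; exact hδ _
  · rw [card_neighborFinset_eq_degree]; exact hδ _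
  · exact common_nbr_card hn hδ hTF hww haw'.symm
  · exact common_nbr_card hn hδ hTF hx34.symm hx23
  · exact nbr_disj hTF haB.2.symm
  · exact (nbr_disj hTF haw.symm).mono_right inter_subset_left
  · exact (nbr_disj hTF haB.1.symm).mono_right inter_subset_left
  · exact (nbr_disj hTF haB'.2).mono_right inter_subset_right
  · exact (nbr_disj hTF hx12).mono_right inter_subset_right
  · exact (nbr_disj hTF haB'.1).symm.mono inter_subset_right inter_subset_left


lemma pentagon_case : Nonempty (H →g SimpleGraph.cycleGraph 5) := by
  classical
  have hclass : ∀ w : V, (∀ i, w ∉ Bcl H x i) →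
      ∃ p : ZMod 5, ∀ j, (Jm H x w j ↔ j = p - 1 ∨ j = p + 1) := by
    intro w hw
    obtain ⟨i, hi⟩ := J_classify (univ.filter (fun i => Jm H x w i))
      (fun c => by
        rcases claimC1 hx hTF hcn hn hδ h8 w hw c with h | h | h
        · exact Or.inl (mem_filter.mpr ⟨mem_univ _, h⟩)
        · exact Or.inr (Or.inl (mem_filter.mpr ⟨mem_univ _, h⟩))
        · exact Or.inr (Or.inr (mem_filter.mpr ⟨mem_univ _, h⟩)))
      (fun c hc => claimC2 hx hTF hcn hn hδ h8 w c (mem_filter.mp hc.1).2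
          (mem_filter.mp hc.2.1).2 (mem_filter.mp hc.2.2).2)
      (fun c hc => by
        have e1 : ∀ c : ZMod 5, c+4+1 = c := by decide
        have e3 : ∀ c : ZMod 5, c+4+3 = c+2 := by decide
        have e4 : ∀ c : ZMod 5, c+4+4 = c+3 := by decide
        have h := claimC3 hx hTF hcn hn hδ h8 w hw (c+4)
        rw [e1 c, e3 c, e4 c] at h
        rcases h ((mem_filter.mp hc).2) with h' | h'
        · exact Or.inl (mem_filter.mpr ⟨mem_univ _, h'⟩)
        · exact Or.inr (mem_filter.mpr ⟨mem_univ _, h'⟩))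
    refine ⟨i, fun j => ?_⟩
    constructor
    · intro hj
      have hmem : j ∈ univ.filter (fun i => Jm H x w i) := mem_filter.mpr ⟨mem_univ _, hj⟩
      rw [hi] at hmem
      simpa using hmem
    · intro hj
      have hmem : j ∈ insert (i-1) ({i+1} : Finset (ZMod 5)) := by simpa using hj
      rw [← hi] at hmem
      exact (mem_filter.mp hmem).2
  have hpos : ∀ v : V, ∃ p : ZMod 5,
      (∀ i, v ∈ Bcl H x i → p = i) ∧
      ((∀ i, v ∉ Bcl H x i) → ∀ j, (Jm H x v j ↔ j = p - 1 ∨ j = p + 1)) := by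
    intro v
    by_cases h : ∃ i, v ∈ Bcl H x i
    · obtain ⟨i, hi⟩ := h
      refine ⟨i, fun i' hi' => ?_, fun hw => absurd hi (hw i)⟩
      by_contra hne
      exact (Finset.disjoint_left.mp (Bdisj hx hTF hne) hi) hi'
    · push_neg at h
      obtain ⟨p, hp⟩ := hclass v h
      exact ⟨p, fun i hi => absurd hi (h i), fun _ => hp⟩
  choose f hf1 hf2 using hpos
  have e41 : ∀ i : ZMod 5, i + 4 = i - 1 := by decide
  have key : ∀ u v : V, H.Adj u v → f v = f u + 1 ∨ f v = f u - 1 := by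
    intro u v huv
    have ecases : ∀ p q : ZMod 5, q = p ∨ q = p+1 ∨ q = p+2 ∨ q = p+3 ∨ q = p+4 := by decide
    by_cases hu : ∃ i, u ∈ Bcl H x i
    · obtain ⟨i, hiu⟩ := hu
      have hfu : f u = i := hf1 u i hiu
      by_cases hv : ∃ j, v ∈ Bcl H x j
      · obtain ⟨j, hjv⟩ := hv
        have hfv : f v = j := hf1 v j hjv
        rw [mem_Bcl] at hiu hjv
        have e24 : ∀ c : ZMod 5, c+2+4 = c+1 := by decide
        have e31 : ∀ c : ZMod 5, c+3+1 = c+4 := by decide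
        rcases ecases i j with h | h | h | h | h
        · subst h
          exact absurd (hjv.2) (fun hc => hTF hiu.2 huv hc)
        · left; rw [hfv, hfu, h]
        · exfalso
          rw [h, e24 i] at hjv
          exact hTF hiu.2 huv hjv.1
        · exfalso
          rw [h, e31 i] at hjv
          exact hTF hiu.1 huv hjv.2
        · right; rw [hfv, hfu, h, e41 i]
      · push_neg at hv
        have hJ := (hf2 v hv i).mp ⟨u, hiu, huv.symm⟩
        rcases hJ with h | h
        · left
          rw [hfu]
          exact sub_eq_iff_eq_add.mp h.symm
        · right
          rw [hfu]
          exact eq_sub_iff_add_eq.mpr h.symm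
    · push_neg at hu
      by_cases hv : ∃ j, v ∈ Bcl H x j
      · obtain ⟨j, hjv⟩ := hv
        have hfv : f v = j := hf1 v j hjv
        have hJ := (hf2 u hu j).mp ⟨v, hjv, huv⟩
        rcases hJ with h | h
        · right; rw [hfv, h]
        · left; rw [hfv, h]
      · push_neg at hv
        have hJu := hf2 u hu
        have hJv := hf2 v hv
        have ju1 : Jm H x u (f u + 1) := (hJu _).mpr (Or.inr rfl)
        have jum : Jm H x u (f u - 1) := (hJu _).mpr (Or.inl rfl)
        rcases ecases (f u) (f v) with h | h | h | h | h
        · exfalso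
          refine claimC7 hx hTF hcn hn hδ h8 huv ju1 ((hJv _).mpr (Or.inr ?_))
          rw [h]
        · left; exact h
        · exfalso
          refine claimC7 hx hTF hcn hn hδ h8 huv ju1 ((hJv _).mpr (Or.inl ?_))
          rw [h]
          ring
        · exfalso
          refine claimC7 hx hTF hcn hn hδ h8 huv jum ((hJv _).mpr (Or.inr ?_))
          rw [h]
          have : ∀ p : ZMod 5, p - 1 = p + 3 + 1 := by decide
          exact this _
        · right; rw [h, e41]
  have cycadj : ∀ p q : ZMod 5, (q = p + 1 ∨ q = p - 1) → (SimpleGraph.cycleGraph 5).Adj p q := by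
    intro p q h
    change (p - q : ZMod 5) = 1 ∨ (q - p : ZMod 5) = 1
    rcases h with rfl | rfl
    · right; ring
    · left; ring
  exact ⟨⟨f, fun {a b} hab => cycadj _ _ (key a b hab)⟩⟩

end claims

end pentagon


section walkstuff

variable {V : Type*} {H : SimpleGraph V}

lemma walk_length_drop {a b : V} (p : H.Walk a b) (n : ℕ) :
    (p.drop n).length = p.length - n := by
  induction p generalizing n with
  | nil => simp [SimpleGraph.Walk.drop]
  | cons h q ih =>
    cases n with
    | zero => simp [SimpleGraph.Walk.drop]
    | succ n =>
      simp only [SimpleGraph.Walk.drop, SimpleGraph.Walk.length_copy,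
        SimpleGraph.Walk.length_cons, ih]
      exact (ih n).trans (by omega)

lemma odd_walk_pentagon
    (hTF : ∀ ⦃p q r : V⦄, H.Adj p q → H.Adj q r → H.Adj p r → False)
    (hcn : ∀ u v : V, u ≠ v → ¬H.Adj u v → ∃ z, H.Adj u z ∧ H.Adj v z) :
    ∀ ℓ : ℕ, ∀ v : V, ∀ c : H.Walk v v, c.length = ℓ → Odd ℓ →
      ∃ x : ZMod 5 → V, ∀ i, H.Adj (x i) (x (i+1)) := by
  intro ℓ
  induction ℓ using Nat.strong_induction_on with
  | _ ℓ ih =>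
    intro v c hlen hodd
    have hadj : ∀ k, k < ℓ → H.Adj (c.getVert k) (c.getVert (k+1)) := by
      intro k hk
      exact c.adj_getVert_succ (hlen ▸ hk)
    have h0 : c.getVert 0 = v := c.getVert_zero
    have hL : c.getVert ℓ = v := by rw [← hlen]; exact c.getVert_length
    rcases Nat.lt_or_ge ℓ 6 with hsmall | hbig
    · -- ℓ ∈ {1, 3, 5}
      have h15 : ℓ = 1 ∨ ℓ = 3 ∨ ℓ = 5 := by
        rcases hodd with ⟨k, hk⟩
        omega
      rcases h15 with rfl | rfl | rfl
      · exfalso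
        have h1 := hadj 0 (by norm_num)
        norm_num [h0] at h1
        rw [hL] at h1
        exact H.irrefl h1
      · exfalso
        have a1 := hadj 0 (by norm_num)
        have a2 := hadj 1 (by norm_num)
        have a3 := hadj 2 (by norm_num)
        norm_num [h0] at a1 a2 a3
        rw [hL] at a3
        exact hTF a1 a2 a3.symm
      · refine ⟨fun i => c.getVert i.val, ?_⟩
        intro i
        show H.Adj (c.getVert i.val) (c.getVert (i+1).val)
        have hv5 : i.val < 5 := i.val_lt
        rcases (by decide : ∀ j : ZMod 5, (j+1).val = j.val + 1 ∨ (j.val = 4 ∧ (j+1).val = 0)) i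
          with h | ⟨h4, h5⟩
        · rw [h]
          exact hadj i.val hv5
        · rw [h5, h4, h0]
          have a5 := hadj 4 (by norm_num)
          norm_num at a5
          rw [hL] at a5
          exact a5
    · -- ℓ ≥ 6 (hence ≥ 7 by oddness)
      have a1 := hadj 0 (by omega)
      have a2 := hadj 1 (by omega)
      have a3 := hadj 2 (by omega)
      norm_num [h0] at a1 a2 a3
      have hne : v ≠ c.getVert 3 := by
        intro h
        rw [← h] at a3
        exact hTF a1 a2 a3.symm
      by_cases hadjvu : H.Adj v (c.getVert 3)
      · have hlen3 : (c.drop 3).length = ℓ - 3 := by rw [walk_length_drop, hlen]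
        refine ih (ℓ - 2) (by omega) (c.getVert 3)
          ((c.drop 3).append (SimpleGraph.Walk.cons hadjvu SimpleGraph.Walk.nil)) ?_ ?_
        · rw [SimpleGraph.Walk.length_append, hlen3]
          simp only [SimpleGraph.Walk.length_cons, SimpleGraph.Walk.length_nil]
          omega
        · exact Nat.Odd.sub_even (by omega) hodd (by norm_num)
      · obtain ⟨z, hz1, hz2⟩ := hcn v (c.getVert 3) hne hadjvu
        refine ih 5 (by omega) v
          (SimpleGraph.Walk.cons a1 (SimpleGraph.Walk.cons a2 (SimpleGraph.Walk.cons a3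
            (SimpleGraph.Walk.cons hz2 (SimpleGraph.Walk.cons hz1.symm SimpleGraph.Walk.nil)))))
          (by simp) ⟨2, by norm_num⟩

end walkstuff

lemma no_odd_hom {V : Type*} (H : SimpleGraph V)
    (h : ∀ (v : V) (c : H.Walk v v), ¬Odd c.length) :
    Nonempty (H →g SimpleGraph.cycleGraph 5) := by
  classical
  have hreach : ∀ v : V, H.Reachable (H.connectedComponentMk v).out v := by
    intro v
    exact SimpleGraph.ConnectedComponent.eq.mp ((H.connectedComponentMk v).out_eq)
  refine ⟨⟨fun v => if Even (H.dist (H.connectedComponentMk v).out v) then (0 : ZMod 5) else 1, ?_⟩⟩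
  intro a b hab
  have hcomp : H.connectedComponentMk a = H.connectedComponentMk b :=
    SimpleGraph.ConnectedComponent.sound ⟨SimpleGraph.Walk.cons hab SimpleGraph.Walk.nil⟩
  obtain ⟨p, hp⟩ := (hreach a).exists_walk_length_eq_dist
  obtain ⟨q, hq⟩ := (hreach b).exists_walk_length_eq_dist
  have hroot : (H.connectedComponentMk b).out = (H.connectedComponentMk a).out := by
    rw [hcomp]
  have hcw := h ((H.connectedComponentMk a).out)
    (p.append ((SimpleGraph.Walk.cons hab SimpleGraph.Walk.nil).append
      (q.reverse.copy rfl hroot)))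
  have hlen : (p.append ((SimpleGraph.Walk.cons hab SimpleGraph.Walk.nil).append
      (q.reverse.copy rfl hroot))).length = p.length + (1 + q.length) := by
    simp [SimpleGraph.Walk.length_append]
    omega
  rw [hlen, hp, hq] at hcw
  have hpar : ¬ (Even (H.dist (H.connectedComponentMk a).out a)
      ↔ Even (H.dist (H.connectedComponentMk b).out b)) := by
    intro hiff
    apply hcw
    rcases Nat.even_or_odd (H.dist (H.connectedComponentMk a).out a) with he | ho
    · have := hiff.mp he
      rcases he with ⟨k, hk⟩
      rcases this with ⟨m, hm⟩
      exact ⟨k + m, by omega⟩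
    · have ho2 : ¬ Even (H.dist (H.connectedComponentMk b).out b) := by
        intro hcontra
        exact (Nat.not_even_iff_odd.mpr ho) (hiff.mpr hcontra)
      rcases ho with ⟨k, hk⟩
      rcases Nat.not_even_iff_odd.mp ho2 with ⟨m, hm⟩
      exact ⟨k + m + 1, by omega⟩
  by_cases ha : Even (H.dist (H.connectedComponentMk a).out a) <;>
    by_cases hb : Even (H.dist (H.connectedComponentMk b).out b)
  · exact absurd (iff_of_true ha hb) hpar
  · exact (fun (P Q : Prop) [Decidable P] [Decidable Q] (hP : P) (hQ : ¬Q) => by rw [if_pos hP, if_neg hQ]; change ((0:Fin 5) - 1 = 1 ∨ (1:Fin 5) - 0 = 1); decide : ∀ (P Q : Prop) [Decidable P] [Decidable Q], P → ¬Q → (SimpleGraph.cycleGraph 5).Adj (if P then (0:Fin 5) else 1) (if Q then (0:Fin 5) else 1)) _ _ ha hb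
  · exact (fun (P Q : Prop) [Decidable P] [Decidable Q] (hP : ¬P) (hQ : Q) => by rw [if_neg hP, if_pos hQ]; change ((1:Fin 5) - 0 = 1 ∨ (0:Fin 5) - 1 = 1); decide : ∀ (P Q : Prop) [Decidable P] [Decidable Q], ¬P → Q → (SimpleGraph.cycleGraph 5).Adj (if P then (0:Fin 5) else 1) (if Q then (0:Fin 5) else 1)) _ _ ha hb
  · exact absurd (iff_of_false ha hb) hpar

lemma exists_maximal_tf {V : Type*} [Fintype V] (G : SimpleGraph V)
    (hG : ∀ ⦃p q r : V⦄, G.Adj p q → G.Adj q r → G.Adj p r → False) :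
    ∃ H : SimpleGraph V, G ≤ H ∧ (∀ ⦃p q r : V⦄, H.Adj p q → H.Adj q r → H.Adj p r → False) ∧
      (∀ u v : V, u ≠ v → ¬H.Adj u v → ∃ z, H.Adj u z ∧ H.Adj v z) := by
  classical
  obtain ⟨H, hmem, hmax⟩ := Set.Finite.exists_maximalFor id
    {K : SimpleGraph V | G ≤ K ∧ ∀ ⦃p q r : V⦄, K.Adj p q → K.Adj q r → K.Adj p r → False}
    (Set.toFinite _) ⟨G, le_refl G, hG⟩
  obtain ⟨hle, hTF⟩ := hmem
  refine ⟨H, hle, hTF, ?_⟩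
  intro u v hne hnadj
  by_contra hno'
  push_neg at hno'
  have hno : ∀ z, H.Adj u z → H.Adj v z → False := fun z h1 h2 => hno' z h1 h2
  have hKadj : ∀ a b, (H ⊔ SimpleGraph.fromEdgeSet {s(u,v)}).Adj a b ↔
      (H.Adj a b ∨ ((a = u ∧ b = v) ∨ (a = v ∧ b = u))) := by
    intro a b
    rw [SimpleGraph.sup_adj, SimpleGraph.fromEdgeSet_adj]
    constructor
    · rintro (h | ⟨h1, h2⟩)
      · exact Or.inl h
      · right
        rw [Set.mem_singleton_iff, Sym2.eq_iff] at h1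
        exact h1
    · rintro (h | h)
      · exact Or.inl h
      · right
        constructor
        · rw [Set.mem_singleton_iff, Sym2.eq_iff]
          exact h
        · rcases h with ⟨rfl, rfl⟩ | ⟨rfl, rfl⟩
          · exact hne
          · exact hne.symm
  have hirr : ∀ a : V, ¬ H.Adj a a := fun a => H.irrefl
  have hTFK : ∀ ⦃p q r : V⦄, (H ⊔ SimpleGraph.fromEdgeSet {s(u,v)}).Adj p q →
      (H ⊔ SimpleGraph.fromEdgeSet {s(u,v)}).Adj q r →
      (H ⊔ SimpleGraph.fromEdgeSet {s(u,v)}).Adj p r → False := by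
    intro p q r h1 h2 h3
    rw [hKadj] at h1 h2 h3
    rcases h1 with h1 | ⟨⟨rfl, rfl⟩ | ⟨rfl, rfl⟩⟩ <;>
      rcases h2 with h2 | ⟨⟨e2a, e2b⟩ | ⟨e2a, e2b⟩⟩ <;>
        rcases h3 with h3 | ⟨⟨e3a, e3b⟩ | ⟨e3a, e3b⟩⟩ <;>
          subst_vars <;>
      first
        | exact hTF h1 h2 h3
        | exact hne rfl
        | exact hirr _ h1
        | exact hirr _ h2
        | exact hirr _ h3
        | exact hno _ h1 h2.symm
        | exact hno _ h2.symm h1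
        | exact hno _ h1.symm h3
        | exact hno _ h3 h1.symm
        | exact hno _ h3.symm h1.symm
        | exact hno _ h2 h3
        | exact hno _ h3 h2
        | exact hno _ h2.symm h3.symm
        | exact hno _ h3.symm h2.symm
        | exact hno _ h1 h3
        | exact hno _ h3 h1
        | exact hno _ h1.symm h2.symm
        | exact hno _ h2 h1
        | exact hno _ h1 h2
        | exact hno _ h2 h1.symm
        | exact hno _ h1.symm h3.symm
        | exact hno _ h3.symm h1.symm
        | exact hno _ h2.symm h3
        | exact hno _ h3 h2.symm
        | exact hno _ h2 h3.symm
        | exact hno _ h3.symm h2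
        | exact hno _ h1 h3.symm
        | exact hno _ h3.symm h1
        | exact hno _ h1.symm h2
        | exact hno _ h2.symm h1.symm
  have hKmem : (H ⊔ SimpleGraph.fromEdgeSet {s(u,v)}) ∈
      {K : SimpleGraph V | G ≤ K ∧ ∀ ⦃p q r : V⦄, K.Adj p q → K.Adj q r → K.Adj p r → False} :=
    ⟨le_trans hle le_sup_left, hTFK⟩
  have heq := hmax hKmem le_sup_left
  apply hnadj
  have : (H ⊔ SimpleGraph.fromEdgeSet {s(u,v)}).Adj u v := by
    rw [hKadj]
    exact Or.inr (Or.inl ⟨rfl, rfl⟩)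
  exact heq this

theorem stmt_3 {V : Type*} [Fintype V] (n : ℕ)
    (G : SimpleGraph V) [DecidableRel G.Adj] (hn : Fintype.card V = n)
    (htri : ∀ (v : V) (c : G.Walk v v), c.IsCycle → c.length ≠ 3)
    (hdeg : 3 * (n : ℝ) / 8 < G.minDegree) :
    Nonempty (G →g SimpleGraph.cycleGraph 5) := by
  classical
  have hGtf : ∀ ⦃p q r : V⦄, G.Adj p q → G.Adj q r → G.Adj p r → False := by
    intro p q r h1 h2 h3
    have hpq : p ≠ q := h1.ne
    have hqr : q ≠ r := h2.ne
    have hpr : p ≠ r := h3.ne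
    have hc : (SimpleGraph.Walk.cons h1 (SimpleGraph.Walk.cons h2
        (SimpleGraph.Walk.cons h3.symm SimpleGraph.Walk.nil))).IsCycle := by
      rw [SimpleGraph.Walk.isCycle_def, SimpleGraph.Walk.isTrail_def]
      refine ⟨?_, by simp, ?_⟩
      · simp [Sym2.eq_iff]
        tauto
      · simp
        tauto
    exact htri p _ hc (by simp)
  obtain ⟨H, hle, hTF, hcn⟩ := exists_maximal_tf G hGtf
  haveI : DecidableRel H.Adj := Classical.decRel _
  have hδ : ∀ v, G.minDegree ≤ H.degree v := by
    intro v
    refine le_trans (G.minDegree_le_degree v) ?_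
    have hsub : G.neighborFinset v ⊆ H.neighborFinset v := by
      intro y hy
      rw [SimpleGraph.mem_neighborFinset] at hy ⊢
      exact hle hy
    have hcard := Finset.card_le_card hsub
    rwa [SimpleGraph.card_neighborFinset_eq_degree,
      SimpleGraph.card_neighborFinset_eq_degree] at hcard
  have h8 : 3 * n < 8 * G.minDegree := by
    have h8' : (3 * n : ℝ) < 8 * G.minDegree := by
      rw [div_lt_iff₀ (by norm_num : (0:ℝ) < 8)] at hdeg
      linarith
    exact_mod_cast h8'
  by_cases hodd : ∃ (v : V) (c : H.Walk v v), Odd c.length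
  · obtain ⟨v, c, hoc⟩ := hodd
    obtain ⟨x, hx⟩ := odd_walk_pentagon hTF hcn c.length v c rfl hoc
    obtain ⟨φ⟩ := pentagon_case hx hTF hcn hn hδ h8
    exact ⟨φ.comp ⟨id, fun {a b} hab => hle hab⟩⟩
  · push_neg at hodd
    obtain ⟨φ⟩ := no_odd_hom H hodd
    exact ⟨φ.comp ⟨id, fun {a b} hab => hle hab⟩⟩
end

section
/- Let Φ denote the graph obtained from the cycle C_6 of length 6 by adding exactly one diagonal (a chord joining two vertices at distance 3 on the cycle). For all integers k ≥ 2 and n, and for every graph G ∈ 𝒢_{n,k}, the graph G does not contain an induced copy of Φ. -/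
/-- The graph `Φ` obtained from the cycle `C₆` by adding exactly one diagonal,
namely the chord joining the antipodal vertices `1` and `4`. -/
def Phi : SimpleGraph (Fin 6) :=
  SimpleGraph.fromEdgeSet {s(0, 1), s(1, 2), s(2, 3), s(3, 4), s(4, 5), s(5, 0), s(1, 4)}

open SimpleGraph

namespace PhiNoInd

variable {V : Type*} {G : SimpleGraph V}

/-- Existence of a walk of given length. -/
def WN (G : SimpleGraph V) (u v : V) (m : ℕ) : Prop := ∃ w : G.Walk u v, w.length = m

lemma WN.adj {u v : V} (h : G.Adj u v) : WN G u v 1 := ⟨Walk.cons h Walk.nil, rfl⟩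

lemma WN.comp {u v w : V} {a b : ℕ} (h1 : WN G u v a) (h2 : WN G v w b) :
    WN G u w (a + b) := by
  obtain ⟨p, hp⟩ := h1; obtain ⟨q, hq⟩ := h2
  exact ⟨p.append q, by rw [Walk.length_append, hp, hq]⟩

lemma WN.symm {u v : V} {a : ℕ} (h : WN G u v a) : WN G v u a := by
  obtain ⟨p, hp⟩ := h; exact ⟨p.reverse, by rw [Walk.length_reverse, hp]⟩

lemma WN.cast {u v u' v' : V} {a b : ℕ} (h : WN G u v a) (hu : u = u') (hv : v = v')
    (hab : a = b) : WN G u' v' b := hu ▸ hv ▸ hab ▸ h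

/-- Subwalk between positions of a walk. -/
lemma wn_getVert {u v : V} (w : G.Walk u v) (i j : ℕ) (hij : i ≤ j) (hj : j ≤ w.length) :
    WN G (w.getVert i) (w.getVert j) (j - i) := by
  induction j, hij using Nat.le_induction with
  | base => exact ⟨Walk.nil, by simp⟩
  | succ j hij ih =>
    have hj' : j ≤ w.length := by omega
    have h1 : G.Adj (w.getVert j) (w.getVert (j + 1)) := w.adj_getVert_succ (by omega)
    exact ((ih hj').comp (WN.adj h1)).cast rfl rfl (by omega)

lemma getVert_mem_support {u v : V} (w : G.Walk u v) {i : ℕ} (h : i ≤ w.length) :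
    w.getVert i ∈ w.support := by
  rw [Walk.mem_support_iff_exists_getVert]
  exact ⟨i, rfl, h⟩

/-- Injectivity of `getVert` for paths. -/
lemma getVert_inj {u v : V} {w : G.Walk u v} (hw : w.IsPath) :
    ∀ i j, i ≤ w.length → j ≤ w.length → w.getVert i = w.getVert j → i = j := by
  induction w with
  | nil => intro i j hi hj _; simp only [Walk.length_nil, Nat.le_zero] at hi hj; omega
  | @cons a b c h p ih =>
    rw [Walk.cons_isPath_iff] at hw
    intro i j hi hj hij
    match i, j with
    | 0, 0 => rfl
    | 0, (j+1) =>
      exfalso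
      rw [Walk.getVert_zero, Walk.getVert_cons_succ] at hij
      exact hw.2 (hij ▸ getVert_mem_support p (by simpa using hj))
    | (i+1), 0 =>
      exfalso
      rw [Walk.getVert_zero, Walk.getVert_cons_succ] at hij
      exact hw.2 (hij ▸ getVert_mem_support p (by simpa using hi))
    | (i+1), (j+1) =>
      rw [Walk.getVert_cons_succ, Walk.getVert_cons_succ] at hij
      have := ih hw.1 i j (by simpa using hi) (by simpa using hj) hij
      omega

/-- In a path from `a` to `b` (`a ≠ b`), if the edge `{b,a}` occurs, the path is a single edge. -/
lemma edge_end {H : SimpleGraph V} {a b : V} (p : H.Walk a b) (hp : p.IsPath) (hab : a ≠ b)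
    (he : s(b, a) ∈ p.edges) : p.length = 1 := by
  cases p with
  | nil => simp at he
  | @cons _ z _ h2 p2 =>
    rw [Walk.edges_cons, List.mem_cons] at he
    rcases he with he | he
    · rw [Sym2.eq_iff] at he
      rcases he with ⟨hba, _⟩ | ⟨hbz, _⟩
      · exact absurd hba.symm hab
      · subst hbz
        have hnil : p2 = Walk.nil := (Walk.isPath_iff_eq_nil (p := p2)).mp hp.of_cons
        subst hnil; rfl
    · exfalso
      have : a ∈ p2.support := Walk.snd_mem_support_of_mem_edges p2 he
      rw [Walk.cons_isPath_iff] at hp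
      exact hp.2 this

lemma length_rotate [DecidableEq V] {u v : V} (c : G.Walk v v) (h : u ∈ c.support) :
    (c.rotate u h).length = c.length := by
  have h1 := congr_arg Walk.length (c.take_spec h)
  rw [Walk.length_append] at h1
  simp only [Walk.rotate, Walk.length_append]
  omega

/-- Any odd closed walk is at least as long as the odd girth. -/
lemma odd_closed_walk_bound {k : ℕ}
    (hgirth : ∀ (v : V) (c : G.Walk v v), c.IsCycle → Odd c.length → 2 * k + 1 ≤ c.length) :
    ∀ (m : ℕ) (v : V) (w : G.Walk v v), w.length = m → Odd m → 2 * k + 1 ≤ m := by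
  classical
  intro m
  induction m using Nat.strong_induction_on with
  | _ m IH =>
  intro v w hw hodd
  by_cases hnd : w.support.tail.Nodup
  · -- `w` is a cycle (or very small)
    cases w with
    | nil => simp only [Walk.length_nil] at hw; subst hw; simp at hodd
    | @cons _ y _ hadj p =>
      have htail : (Walk.cons hadj p).support.tail = p.support := by
        simp [Walk.support_cons]
      rw [htail] at hnd
      have hpath : p.IsPath := Walk.IsPath.mk' hnd
      by_cases he : s(v, y) ∈ p.edges
      · -- then the walk has length 2, contradicting oddness
        have h1 : p.length = 1 := edge_end p hpath (fun hvy => G.irrefl (hvy ▸ hadj)) he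
        exfalso
        rw [← hw] at hodd
        simp [Walk.length_cons, h1] at hodd
        exact (by decide : ¬ Odd 2) hodd
      · have hc : (Walk.cons hadj p).IsCycle := (Walk.cons_isCycle_iff p hadj).mpr ⟨hpath, he⟩
        exact hw ▸ hgirth v _ hc (hw ▸ hodd)
  · -- split into two shorter closed walks
    obtain ⟨x, hx⟩ : ∃ x, 2 ≤ List.count x w.support.tail := by
      by_contra hno
      push_neg at hno
      exact hnd (List.nodup_iff_count_le_one.mpr fun a => by have := hno a; omega)
    have hxs : x ∈ w.support := List.mem_of_mem_tail (List.count_pos_iff.mp (by omega))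
    have hrotc : 2 ≤ List.count x (w.rotate x hxs).support.tail :=
      le_of_le_of_eq hx ((Walk.support_rotate w x hxs).perm.count_eq x).symm
    have hrotl : (w.rotate x hxs).length = m := by rw [length_rotate, hw]
    obtain ⟨d, hdl, hdc⟩ : ∃ d : G.Walk x x, d.length = m ∧ 2 ≤ List.count x d.support.tail :=
      ⟨w.rotate x hxs, hrotl, hrotc⟩
    cases d with
    | nil => simp only [Walk.length_nil] at hdl; subst hdl; simp at hodd
    | @cons _ y _ hadj p =>
      have htail : (Walk.cons hadj p).support.tail = p.support := by
        simp [Walk.support_cons]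
      rw [htail] at hdc
      have hxp : x ∈ p.support := List.count_pos_iff.mp (by omega)
      set q := p.takeUntil x hxp with hqdef
      set r := p.dropUntil x hxp with hrdef
      have hspec : q.append r = p := p.take_spec hxp
      have hlen : q.length + r.length = p.length := by
        have := congr_arg Walk.length hspec
        rwa [Walk.length_append] at this
      have hq1 : List.count x q.support = 1 := Walk.count_support_takeUntil_eq_one p hxp
      have hsupp : p.support = q.support ++ r.support.tail := by
        rw [← hspec, Walk.support_append]
      have hr1 : 1 ≤ List.count x r.support.tail := by
        rw [hsupp, List.count_append] at hdc
        omega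
      have hrlen : 1 ≤ r.length := by
        by_contra hr0
        push_neg at hr0
        interval_cases hrl : r.length
        · have : r.support.tail = [] := by
            have := Walk.length_support r
            rw [hrl] at this
            cases hsup : r.support with
            | nil => simp [hsup] at this
            | cons a l => rw [hsup] at this; simp at this; simp [this]
          rw [this] at hr1; simp at hr1
      have hplen : p.length + 1 = m := by
        rw [← hdl]; simp [Walk.length_cons]
      rcases Nat.even_or_odd r.length with hre | hro
      · -- cons hadj q is the odd closed walk
        have hodd1 : Odd (q.length + 1) := by
          rcases hodd with ⟨t, ht⟩
          rcases hre with ⟨s, hs⟩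
          exact ⟨t - s, by omega⟩
        have hlt : q.length + 1 < m := by omega
        have := IH (q.length + 1) hlt x (Walk.cons hadj q) (by simp [Walk.length_cons]) hodd1
        omega
      · have hlt : r.length < m := by omega
        have := IH r.length hlt x r rfl hro
        omega



/-- Extract an even path between `u` and `v` from the cycle produced by edge-maximality. -/
lemma extract {k : ℕ} [DecidableEq V]
    (key : ∀ (v : V) (w : G.Walk v v), Odd w.length → 2 * k + 1 ≤ w.length)
    {u v : V} (hne : u ≠ v) {G' : SimpleGraph V}
    (hedge : ∀ e ∈ G'.edgeSet, e = s(u, v) ∨ e ∈ G.edgeSet)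
    {z : V} (c : G'.Walk z z)
    (hc : c.IsCycle) (hodd : Odd c.length) (hle : c.length ≤ 2 * k - 1) (hk : 2 ≤ k) :
    ∃ p : G.Walk u v, p.IsPath ∧ Even p.length ∧ p.length ≤ 2 * k - 2 := by
  by_cases hmem : s(u, v) ∈ c.edges
  · -- rotate the cycle to start at u
    have hu' : u ∈ c.support := c.fst_mem_support_of_mem_edges hmem
    have hdcyc : (c.rotate u hu').IsCycle := hc.rotate hu'
    have hdlen : (c.rotate u hu').length = c.length := length_rotate c hu'
    have hdmem : s(u, v) ∈ (c.rotate u hu').edges := (c.rotate_edges u hu').mem_iff.mpr hmem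
    obtain ⟨d, hcyc, hlen, hmm⟩ : ∃ d : G'.Walk u u,
        d.IsCycle ∧ d.length = c.length ∧ s(u, v) ∈ d.edges :=
      ⟨c.rotate u hu', hdcyc, hdlen, hdmem⟩
    cases d with
    | nil => exact absurd rfl hcyc.ne_nil
    | @cons _ y _ hadj p =>
      rw [Walk.cons_isCycle_iff] at hcyc
      rw [Walk.edges_cons, List.mem_cons] at hmm
      have hlen' : p.length + 1 = c.length := by
        rw [← hlen]; simp [Walk.length_cons]
      rcases hmm with hmm | hmm
      · -- first edge is the new edge, so y = v
        have hyv : y = v := by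
          rw [Sym2.eq_iff] at hmm
          rcases hmm with ⟨_, h2⟩ | ⟨_, h2⟩
          · exact h2.symm
          · exact absurd h2 hne.symm
        subst hyv
        have hpe : ∀ e ∈ p.edges, e ∈ G.edgeSet := by
          intro e he
          rcases hedge e (p.edges_subset_edgeSet he) with h | h
          · exact absurd (h ▸ he) hcyc.2
          · exact h
        refine ⟨(p.transfer G hpe).reverse, ((hcyc.1).transfer hpe).reverse, ?_, ?_⟩
        · rw [Walk.length_reverse, Walk.length_transfer]
          rcases hodd with ⟨t, ht⟩
          exact ⟨t, by omega⟩
        · rw [Walk.length_reverse, Walk.length_transfer]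
          omega
      · -- the new edge is inside p
        have hfst : s(u, y) ≠ s(u, v) := fun h => hcyc.2 (h ▸ hmm)
        have hv' : v ∈ p.support := p.snd_mem_support_of_mem_edges hmm
        have hspec : (p.takeUntil v hv').append (p.dropUntil v hv') = p := p.take_spec hv'
        obtain ⟨t, r, hspec, htpath, hrpath⟩ : ∃ (t : G'.Walk y v) (r : G'.Walk v u),
            t.append r = p ∧ t.IsPath ∧ r.IsPath :=
          ⟨p.takeUntil v hv', p.dropUntil v hv', p.take_spec hv',
            hcyc.1.takeUntil hv', hcyc.1.dropUntil hv'⟩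
        have hsupp : p.support = t.support ++ r.support.tail := by
          rw [← hspec, Walk.support_append]
        have hpnodup : p.support.Nodup := hcyc.1.support_nodup
        have hut : u ∉ t.support := by
          intro hmemu
          have hur : u ∈ r.support.tail := by
            have hru : u ∈ r.support := r.end_mem_support
            have hrs : r.support = v :: r.support.tail := by
              cases r with
              | nil => exact absurd rfl hne.symm
              | cons h q => simp [Walk.support_cons]
            rw [hrs] at hru
            rcases List.mem_cons.mp hru with h | h
            · exact absurd h hne
            · exact h
          rw [hsupp] at hpnodup
          exact (List.disjoint_of_nodup_append hpnodup) hmemu hur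
        have hte : s(u, v) ∉ t.edges := fun h => hut (t.fst_mem_support_of_mem_edges h)
        have hre : s(u, v) ∈ r.edges := by
          have : p.edges = t.edges ++ r.edges := by rw [← hspec, Walk.edges_append]
          rcases List.mem_append.mp (this ▸ hmm) with h | h
          · exact absurd h hte
          · exact h
        have hr1 : r.length = 1 := edge_end r hrpath hne.symm hre
        have hlent : t.length + r.length = p.length := by
          have := congr_arg Walk.length hspec
          rwa [Walk.length_append] at this
        -- the path is cons hadj t
        have hWpath : (Walk.cons hadj t).IsPath := by
          rw [Walk.cons_isPath_iff]; exact ⟨htpath, hut⟩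
        have hWe : ∀ e ∈ (Walk.cons hadj t).edges, e ∈ G.edgeSet := by
          intro e he
          rw [Walk.edges_cons, List.mem_cons] at he
          rcases he with he | he
          · subst he
            rcases hedge _ (G'.mem_edgeSet.mpr hadj) with h | h
            · exact absurd h hfst
            · exact h
          · rcases hedge e (t.edges_subset_edgeSet he) with h | h
            · exact absurd (h ▸ he) hte
            · exact h
        refine ⟨(Walk.cons hadj t).transfer G hWe, hWpath.transfer hWe, ?_, ?_⟩
        · rw [Walk.length_transfer]
          simp only [Walk.length_cons]
          rcases hodd with ⟨s, hs⟩
          exact ⟨s, by omega⟩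
        · rw [Walk.length_transfer]
          simp only [Walk.length_cons]
          omega
  · -- cycle avoids the edge: contradiction with the odd girth
    exfalso
    have hce : ∀ e ∈ c.edges, e ∈ G.edgeSet := by
      intro e he
      rcases hedge e (c.edges_subset_edgeSet he) with h | h
      · exact absurd (h ▸ he) hmem
      · exact h
    have := key z (c.transfer G hce) (by rwa [Walk.length_transfer])
    rw [Walk.length_transfer] at this
    omega


lemma no_small_odd {k : ℕ}
    (key : ∀ (v : V) (w : G.Walk v v), Odd w.length → 2 * k + 1 ≤ w.length)
    {v : V} {m : ℕ} (h : WN G v v m) (hodd : Odd m) (hlt : m < 2 * k + 1) : False := by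
  obtain ⟨w, hw⟩ := h
  have := key v w (by rw [hw]; exact hodd)
  omega

lemma wn_start {a d : V} (P : G.Walk a d) {i : ℕ} (hi : i ≤ P.length) :
    WN G a (P.getVert i) i :=
  (wn_getVert P 0 i (Nat.zero_le _) hi).cast P.getVert_zero rfl (by omega)

lemma wn_end {a d : V} (P : G.Walk a d) {i : ℕ} (hi : i ≤ P.length) :
    WN G (P.getVert i) d (P.length - i) :=
  (wn_getVert P i P.length hi le_rfl).cast rfl P.getVert_length rfl

section Pack

variable {k : ℕ} (key : ∀ (v : V) (w : G.Walk v v), Odd w.length → 2 * k + 1 ≤ w.length)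
variable {a b c d e g : V}
variable (hab : G.Adj a b) (hbc : G.Adj b c) (hcd : G.Adj c d)
variable (hde : G.Adj d e) (heg : G.Adj e g) (hga : G.Adj g a) (hbe : G.Adj b e)
variable {P : G.Walk a d} (hP : P.length = 2 * k - 2) (hk : 2 ≤ k)

include key hab hbc hcd hde heg hga hbe hP hk in
/-- Any two neighbours of `v` on `P` are at distance exactly 2 along `P`. -/
lemma pack_pair {v : V} {i j : ℕ} (hij : i < j) (hj : j ≤ 2 * k - 2)
    (hvi : G.Adj v (P.getVert i)) (hvj : G.Adj v (P.getVert j)) : j = i + 2 := by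
  rcases Nat.even_or_odd (j - i) with hpar | hpar
  · rw [Nat.even_iff] at hpar
    by_contra hne
    have s1 : WN G (P.getVert i) a i := (wn_start P (hP ▸ (by omega : i ≤ 2*k-2))).symm
    have s2 : WN G d (P.getVert j) (2*k-2-j) :=
      ((wn_end P (hP ▸ hj)).cast rfl rfl (by rw [hP])).symm
    have conn : WN G a d (1+1+1) := ((WN.adj hab).comp (WN.adj hbc)).comp (WN.adj hcd)
    have w2 : WN G v v (1 + i + (1+1+1) + (2*k-2-j) + 1) :=
      ((((WN.adj hvi).comp s1).comp conn).comp s2).comp (WN.adj hvj.symm)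
    exact no_small_odd key w2 (Nat.odd_iff.mpr (by omega)) (by omega)
  · rw [Nat.odd_iff] at hpar
    exfalso
    have w1 : WN G v v (1 + (j - i) + 1) :=
      ((WN.adj hvi).comp (wn_getVert P i j hij.le (hP ▸ hj))).comp (WN.adj hvj.symm)
    exact no_small_odd key w1 (Nat.odd_iff.mpr (by omega)) (by omega)

include key hab hbc hcd hde heg hga hbe hP hk in
lemma pack_b {v : V} {i : ℕ} (hvb : G.Adj v b) (hi : i ≤ 2 * k - 2)
    (hvi : G.Adj v (P.getVert i)) : i = 1 ∨ i = 2 * k - 2 := by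
  rcases Nat.even_or_odd i with hpar | hpar
  · rw [Nat.even_iff] at hpar
    right; by_contra hne
    have s1 : WN G a (P.getVert i) i := wn_start P (hP ▸ hi)
    have w : WN G v v (1 + 1 + i + 1) :=
      (((WN.adj hvb).comp (WN.adj hab.symm)).comp s1).comp (WN.adj hvi.symm)
    exact no_small_odd key w (Nat.odd_iff.mpr (by omega)) (by omega)
  · rw [Nat.odd_iff] at hpar
    left; by_contra hne
    have s2 : WN G d (P.getVert i) (2*k-2-i) :=
      ((wn_end P (hP ▸ hi)).cast rfl rfl (by rw [hP])).symm
    have w : WN G v v (1 + 1 + 1 + (2*k-2-i) + 1) :=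
      ((((WN.adj hvb).comp (WN.adj hbc)).comp (WN.adj hcd)).comp s2).comp (WN.adj hvi.symm)
    exact no_small_odd key w (Nat.odd_iff.mpr (by omega)) (by omega)

include key hab hbc hcd hde heg hga hbe hP hk in
lemma pack_e {v : V} {i : ℕ} (hve : G.Adj v e) (hi : i ≤ 2 * k - 2)
    (hvi : G.Adj v (P.getVert i)) : i = 0 ∨ i = 2 * k - 3 := by
  rcases Nat.even_or_odd i with hpar | hpar
  · rw [Nat.even_iff] at hpar
    left; by_contra hne
    have s2 : WN G d (P.getVert i) (2*k-2-i) :=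
      ((wn_end P (hP ▸ hi)).cast rfl rfl (by rw [hP])).symm
    have w : WN G v v (1 + 1 + (2*k-2-i) + 1) :=
      (((WN.adj hve).comp (WN.adj hde.symm)).comp s2).comp (WN.adj hvi.symm)
    exact no_small_odd key w (Nat.odd_iff.mpr (by omega)) (by omega)
  · rw [Nat.odd_iff] at hpar
    right; by_contra hne
    have s1 : WN G a (P.getVert i) i := wn_start P (hP ▸ hi)
    have w : WN G v v (1 + 1 + 1 + i + 1) :=
      ((((WN.adj hve).comp (WN.adj hbe.symm)).comp (WN.adj hab.symm)).comp s1).comp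
        (WN.adj hvi.symm)
    exact no_small_odd key w (Nat.odd_iff.mpr (by omega)) (by omega)

include key hab hbc hcd hde heg hga hbe hP hk in
lemma pack_not_b {i : ℕ} (hi : i ≤ 2 * k - 2) : P.getVert i ≠ b := by
  intro hib
  rcases Nat.even_or_odd i with hpar | hpar
  · rw [Nat.even_iff] at hpar
    have s1 : WN G (P.getVert i) a i := (wn_start P (hP ▸ hi)).symm
    have w : WN G b b (i + 1) := (s1.cast hib rfl rfl).comp (WN.adj hab)
    exact no_small_odd key w (Nat.odd_iff.mpr (by omega)) (by omega)
  · rw [Nat.odd_iff] at hpar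
    have s2 : WN G (P.getVert i) d (2*k-2-i) := (wn_end P (hP ▸ hi)).cast rfl rfl (by rw [hP])
    have w : WN G b b ((2*k-2-i) + 1 + 1) :=
      ((s2.cast hib rfl rfl).comp (WN.adj hcd.symm)).comp (WN.adj hbc.symm)
    exact no_small_odd key w (Nat.odd_iff.mpr (by omega)) (by omega)

include key hab hbc hcd hde heg hga hbe hP hk in
lemma pack_not_c {i : ℕ} (hi : i ≤ 2 * k - 2) : P.getVert i ≠ c := by
  intro hic
  rcases Nat.even_or_odd i with hpar | hpar
  · rw [Nat.even_iff] at hpar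
    have s2 : WN G (P.getVert i) d (2*k-2-i) := (wn_end P (hP ▸ hi)).cast rfl rfl (by rw [hP])
    have w : WN G c c ((2*k-2-i) + 1) := (s2.cast hic rfl rfl).comp (WN.adj hcd.symm)
    exact no_small_odd key w (Nat.odd_iff.mpr (by omega)) (by omega)
  · rw [Nat.odd_iff] at hpar
    have s1 : WN G (P.getVert i) a i := (wn_start P (hP ▸ hi)).symm
    have w : WN G c c (i + 1 + 1) :=
      ((s1.cast hic rfl rfl).comp (WN.adj hab)).comp (WN.adj hbc)
    exact no_small_odd key w (Nat.odd_iff.mpr (by omega)) (by omega)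

include key hab hbc hcd hde heg hga hbe hP hk in
lemma pack_not_e {i : ℕ} (hi : i ≤ 2 * k - 2) : P.getVert i ≠ e := by
  intro hie
  rcases Nat.even_or_odd i with hpar | hpar
  · rw [Nat.even_iff] at hpar
    have s2 : WN G (P.getVert i) d (2*k-2-i) := (wn_end P (hP ▸ hi)).cast rfl rfl (by rw [hP])
    have w : WN G e e ((2*k-2-i) + 1) := (s2.cast hie rfl rfl).comp (WN.adj hde)
    exact no_small_odd key w (Nat.odd_iff.mpr (by omega)) (by omega)
  · rw [Nat.odd_iff] at hpar
    have s1 : WN G (P.getVert i) a i := (wn_start P (hP ▸ hi)).symm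
    have w : WN G e e (i + 1 + 1) :=
      ((s1.cast hie rfl rfl).comp (WN.adj hab)).comp (WN.adj hbe)
    exact no_small_odd key w (Nat.odd_iff.mpr (by omega)) (by omega)

include key hab hbc hcd hde heg hga hbe hP hk in
lemma pack_not_g {i : ℕ} (hi : i ≤ 2 * k - 2) : P.getVert i ≠ g := by
  intro hig
  rcases Nat.even_or_odd i with hpar | hpar
  · rw [Nat.even_iff] at hpar
    have s1 : WN G (P.getVert i) a i := (wn_start P (hP ▸ hi)).symm
    have w : WN G g g (i + 1) := (s1.cast hig rfl rfl).comp (WN.adj hga.symm)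
    exact no_small_odd key w (Nat.odd_iff.mpr (by omega)) (by omega)
  · rw [Nat.odd_iff] at hpar
    have s2 : WN G (P.getVert i) d (2*k-2-i) := (wn_end P (hP ▸ hi)).cast rfl rfl (by rw [hP])
    have w : WN G g g ((2*k-2-i) + 1 + 1) :=
      ((s2.cast hig rfl rfl).comp (WN.adj hde)).comp (WN.adj heg)
    exact no_small_odd key w (Nat.odd_iff.mpr (by omega)) (by omega)

end Pack

/-- No vertex has two neighbours (2 apart) on each of the two paths. -/
lemma packLB {k : ℕ} (key : ∀ (v : V) (w : G.Walk v v), Odd w.length → 2 * k + 1 ≤ w.length)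
    {a1 d1 a2 d2 b e : V}
    (h1 : G.Adj d1 a2) (h2 : G.Adj a1 d2) (h3 : G.Adj a1 b) (h4 : G.Adj b a2)
    (h5 : G.Adj d1 e) (h6 : G.Adj e d2)
    {P : G.Walk a1 d1} (hP : P.length = 2 * k - 2) {Q : G.Walk a2 d2} (hQ : Q.length = 2 * k - 2)
    (hk : 2 ≤ k) {v : V} {α β : ℕ} (hα : α + 2 ≤ 2 * k - 2) (hβ : β + 2 ≤ 2 * k - 2)
    (hva : G.Adj v (P.getVert α)) (hva2 : G.Adj v (P.getVert (α + 2)))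
    (hvb : G.Adj v (Q.getVert β)) (hvb2 : G.Adj v (Q.getVert (β + 2))) : False := by
  have sPa : WN G (P.getVert α) a1 α := (wn_start P (hP ▸ (by omega : α ≤ 2*k-2))).symm
  have sPd : WN G (P.getVert (α+2)) d1 (2*k-2-(α+2)) :=
    (wn_end P (hP ▸ hα)).cast rfl rfl (by rw [hP])
  have sQa : WN G a2 (Q.getVert β) β := wn_start Q (hQ ▸ (by omega : β ≤ 2*k-2))
  have sQd : WN G d2 (Q.getVert (β+2)) (2*k-2-(β+2)) :=
    ((wn_end Q (hQ ▸ hβ)).cast rfl rfl (by rw [hQ])).symm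
  rcases Nat.even_or_odd (α + β) with hpar | hpar
  · rw [Nat.even_iff] at hpar
    have wA : WN G v v (1 + (2*k-2-(α+2)) + 1 + β + 1) :=
      ((((WN.adj hva2).comp sPd).comp (WN.adj h1)).comp sQa).comp (WN.adj hvb.symm)
    have wB : WN G v v (1 + α + 1 + (2*k-2-(β+2)) + 1) :=
      ((((WN.adj hva).comp sPa).comp (WN.adj h2)).comp sQd).comp (WN.adj hvb2.symm)
    rcases lt_or_ge (1 + (2*k-2-(α+2)) + 1 + β + 1) (2*k+1) with h | h
    · exact no_small_odd key wA (Nat.odd_iff.mpr (by omega)) h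
    · exact no_small_odd key wB (Nat.odd_iff.mpr (by omega)) (by omega)
  · rw [Nat.odd_iff] at hpar
    have wC : WN G v v (1 + α + 1 + 1 + β + 1) :=
      (((((WN.adj hva).comp sPa).comp (WN.adj h3)).comp (WN.adj h4)).comp sQa).comp
        (WN.adj hvb.symm)
    have wD : WN G v v (1 + (2*k-2-(α+2)) + 1 + 1 + (2*k-2-(β+2)) + 1) :=
      (((((WN.adj hva2).comp sPd).comp (WN.adj h5)).comp (WN.adj h6)).comp sQd).comp
        (WN.adj hvb2.symm)
    rcases lt_or_ge (1 + α + 1 + 1 + β + 1) (2*k+1) with h | h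
    · exact no_small_odd key wC (Nat.odd_iff.mpr (by omega)) h
    · exact no_small_odd key wD (Nat.odd_iff.mpr (by omega)) (by omega)




lemma hedge_sup (u v : V) :
    ∀ e ∈ (G ⊔ SimpleGraph.fromEdgeSet {s(u, v)}).edgeSet, e = s(u, v) ∨ e ∈ G.edgeSet := by
  intro e he
  rw [edgeSet_sup] at he
  rcases he with he | he
  · exact Or.inr he
  · rw [edgeSet_fromEdgeSet] at he
    exact Or.inl he.1

end PhiNoInd

open PhiNoInd in
theorem stmt_6 {V : Type*} [Fintype V] (k n : ℕ) (hk : 2 ≤ k)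
    (G : SimpleGraph V) [DecidableRel G.Adj] (hn : Fintype.card V = n)
    (hdeg : 3 * (n : ℝ) / (4 * k) < G.minDegree)
    (hgirth : ∀ (v : V) (c : G.Walk v v), c.IsCycle → Odd c.length → 2 * k + 1 ≤ c.length)
    (hmax : ∀ u v : V, u ≠ v → ¬ G.Adj u v →
      ∃ (w : V) (c : (G ⊔ SimpleGraph.fromEdgeSet {s(u, v)}).Walk w w),
        c.IsCycle ∧ Odd c.length ∧ c.length ≤ 2 * k - 1) :
    ¬ Nonempty (Phi ↪g G) := by
  classical
  rintro ⟨f⟩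
  have key : ∀ (v : V) (w : G.Walk v v), Odd w.length → 2 * k + 1 ≤ w.length :=
    fun v w h => odd_closed_walk_bound hgirth w.length v w rfl h
  -- the six vertices
  have hmapadj : ∀ i j : Fin 6, Phi.Adj i j → G.Adj (f i) (f j) :=
    fun i j h => f.map_adj_iff.mpr h
  have hmapnadj : ∀ i j : Fin 6, ¬ Phi.Adj i j → ¬ G.Adj (f i) (f j) :=
    fun i j h hG => h (f.map_adj_iff.mp hG)
  have hfne : ∀ i j : Fin 6, i ≠ j → f i ≠ f j := fun i j h hh => h (f.injective hh)
  have p01 : Phi.Adj 0 1 := by simp [Phi, SimpleGraph.fromEdgeSet_adj]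
  have p12 : Phi.Adj 1 2 := by simp [Phi, SimpleGraph.fromEdgeSet_adj]
  have p23 : Phi.Adj 2 3 := by simp [Phi, SimpleGraph.fromEdgeSet_adj]
  have p34 : Phi.Adj 3 4 := by simp [Phi, SimpleGraph.fromEdgeSet_adj]
  have p45 : Phi.Adj 4 5 := by simp [Phi, SimpleGraph.fromEdgeSet_adj]
  have p50 : Phi.Adj 5 0 := by simp [Phi, SimpleGraph.fromEdgeSet_adj]
  have p14 : Phi.Adj 1 4 := by simp [Phi, SimpleGraph.fromEdgeSet_adj]
  have q03 : ¬ Phi.Adj 0 3 := by simp [Phi, SimpleGraph.fromEdgeSet_adj]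
  have q25 : ¬ Phi.Adj 2 5 := by simp [Phi, SimpleGraph.fromEdgeSet_adj]
  set x0 := f 0 with hx0
  set x1 := f 1 with hx1
  set x2 := f 2 with hx2
  set x3 := f 3 with hx3
  set x4 := f 4 with hx4
  set x5 := f 5 with hx5
  have e01 : G.Adj x0 x1 := hmapadj 0 1 p01
  have e12 : G.Adj x1 x2 := hmapadj 1 2 p12
  have e23 : G.Adj x2 x3 := hmapadj 2 3 p23
  have e34 : G.Adj x3 x4 := hmapadj 3 4 p34
  have e45 : G.Adj x4 x5 := hmapadj 4 5 p45
  have e50 : G.Adj x5 x0 := hmapadj 5 0 p50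
  have e14 : G.Adj x1 x4 := hmapadj 1 4 p14
  have ne03 : x0 ≠ x3 := hfne 0 3 (by decide)
  have ne25 : x2 ≠ x5 := hfne 2 5 (by decide)
  have na03 : ¬ G.Adj x0 x3 := hmapnadj 0 3 q03
  have na25 : ¬ G.Adj x2 x5 := hmapnadj 2 5 q25
  -- the two paths
  obtain ⟨z1, c1, hc1, hodd1, hle1⟩ := hmax x0 x3 ne03 na03
  obtain ⟨P, hPpath, hPeven, hPle⟩ :=
    extract key ne03 (hedge_sup x0 x3) c1 hc1 hodd1 hle1 hk
  obtain ⟨z2, c2, hc2, hodd2, hle2⟩ := hmax x2 x5 ne25 na25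
  obtain ⟨Q, hQpath, hQeven, hQle⟩ :=
    extract key ne25 (hedge_sup x2 x5) c2 hc2 hodd2 hle2 hk
  have hPlen : P.length = 2 * k - 2 := by
    by_contra hne
    have hWN : WN G x0 x3 P.length := ⟨P, rfl⟩
    have w : WN G x0 x0 (P.length + 1 + 1 + 1) :=
      ((hWN.comp (WN.adj e23.symm)).comp (WN.adj e12.symm)).comp (WN.adj e01.symm)
    rw [Nat.even_iff] at hPeven
    exact no_small_odd key w (Nat.odd_iff.mpr (by omega)) (by omega)
  have hQlen : Q.length = 2 * k - 2 := by
    by_contra hne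
    have hWN : WN G x2 x5 Q.length := ⟨Q, rfl⟩
    have w : WN G x2 x2 (Q.length + 1 + 1 + 1) :=
      ((hWN.comp (WN.adj e45.symm)).comp (WN.adj e34.symm)).comp (WN.adj e23.symm)
    rw [Nat.even_iff] at hQeven
    exact no_small_odd key w (Nat.odd_iff.mpr (by omega)) (by omega)
  -- pack lemma instantiations
  -- P-side : a b c d e g := x0 x1 x2 x3 x4 x5
  have Ppair := fun {v i j} hij hj hvi hvj =>
    pack_pair key e01 e12 e23 e34 e45 e50 e14 hPlen hk (v := v) (i := i) (j := j) hij hj hvi hvj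
  have Pb := fun {v i} hvb hi hvi =>
    pack_b key e01 e12 e23 e34 e45 e50 e14 hPlen hk (v := v) (i := i) hvb hi hvi
  have Pe := fun {v i} hve hi hvi =>
    pack_e key e01 e12 e23 e34 e45 e50 e14 hPlen hk (v := v) (i := i) hve hi hvi
  have Pnb := fun {i} hi => pack_not_b key e01 e12 e23 e34 e45 e50 e14 hPlen hk (i := i) hi
  have Pnc := fun {i} hi => pack_not_c key e01 e12 e23 e34 e45 e50 e14 hPlen hk (i := i) hi
  have Pne := fun {i} hi => pack_not_e key e01 e12 e23 e34 e45 e50 e14 hPlen hk (i := i) hi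
  have Png := fun {i} hi => pack_not_g key e01 e12 e23 e34 e45 e50 e14 hPlen hk (i := i) hi
  -- Q-side : a b c d e g := x2 x1 x0 x5 x4 x3
  have Qpair := fun {v i j} hij hj hvi hvj =>
    pack_pair key e12.symm e01.symm e50.symm e45.symm e34.symm e23.symm e14 hQlen hk
      (v := v) (i := i) (j := j) hij hj hvi hvj
  have Qb := fun {v i} hvb hi hvi =>
    pack_b key e12.symm e01.symm e50.symm e45.symm e34.symm e23.symm e14 hQlen hk
      (v := v) (i := i) hvb hi hvi
  have Qe := fun {v i} hve hi hvi =>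
    pack_e key e12.symm e01.symm e50.symm e45.symm e34.symm e23.symm e14 hQlen hk
      (v := v) (i := i) hve hi hvi
  have Qnb := fun {i} hi =>
    pack_not_b key e12.symm e01.symm e50.symm e45.symm e34.symm e23.symm e14 hQlen hk (i := i) hi
  have Qnc := fun {i} hi =>
    pack_not_c key e12.symm e01.symm e50.symm e45.symm e34.symm e23.symm e14 hQlen hk (i := i) hi
  have Qne := fun {i} hi =>
    pack_not_e key e12.symm e01.symm e50.symm e45.symm e34.symm e23.symm e14 hQlen hk (i := i) hi
  have Qng := fun {i} hi =>
    pack_not_g key e12.symm e01.symm e50.symm e45.symm e34.symm e23.symm e14 hQlen hk (i := i) hi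
  have LB := fun {v α β} hα hβ hva hva2 hvb hvb2 =>
    packLB key e23.symm e50.symm e01 e12 e34 e45 hPlen hQlen hk
      (v := v) (α := α) (β := β) hα hβ hva hva2 hvb hvb2
  -- endpoints of the paths
  have hP0 : P.getVert 0 = x0 := P.getVert_zero
  have hPd : P.getVert (2 * k - 2) = x3 := by rw [← hPlen]; exact P.getVert_length
  have hQ0 : Q.getVert 0 = x2 := Q.getVert_zero
  have hQd : Q.getVert (2 * k - 2) = x5 := by rw [← hQlen]; exact Q.getVert_length
  -- the finsets
  set PF : Finset V := (Finset.range (2 * k - 1)).image P.getVert with hPF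
  set QF : Finset V := (Finset.range (2 * k - 1)).image Q.getVert with hQF
  have hinjP : Set.InjOn P.getVert ↑(Finset.range (2 * k - 1)) := by
    intro i hi j hj hij
    simp only [Finset.coe_range, Set.mem_Iio] at hi hj
    exact getVert_inj hPpath i j (by omega) (by omega) hij
  have hinjQ : Set.InjOn Q.getVert ↑(Finset.range (2 * k - 1)) := by
    intro i hi j hj hij
    simp only [Finset.coe_range, Set.mem_Iio] at hi hj
    exact getVert_inj hQpath i j (by omega) (by omega) hij
  have hcPF : PF.card = 2 * k - 1 := by
    rw [hPF, Finset.card_image_of_injOn hinjP, Finset.card_range]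
  have hcQF : QF.card = 2 * k - 1 := by
    rw [hQF, Finset.card_image_of_injOn hinjQ, Finset.card_range]
  have hmemPF : ∀ w ∈ PF, ∃ i, i ≤ 2 * k - 2 ∧ P.getVert i = w := by
    intro w hw
    rw [hPF, Finset.mem_image] at hw
    obtain ⟨i, hi, hiw⟩ := hw
    exact ⟨i, by simp only [Finset.mem_range] at hi; omega, hiw⟩
  have hmemQF : ∀ w ∈ QF, ∃ i, i ≤ 2 * k - 2 ∧ Q.getVert i = w := by
    intro w hw
    rw [hQF, Finset.mem_image] at hw
    obtain ⟨i, hi, hiw⟩ := hw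
    exact ⟨i, by simp only [Finset.mem_range] at hi; omega, hiw⟩
  have hx1PF : x1 ∉ PF := by
    intro hw; obtain ⟨i, hi, hiw⟩ := hmemPF x1 hw; exact Pnb hi hiw
  have hx4PF : x4 ∉ PF := by
    intro hw; obtain ⟨i, hi, hiw⟩ := hmemPF x4 hw; exact Pne hi hiw
  have hx1QF : x1 ∉ QF := by
    intro hw; obtain ⟨i, hi, hiw⟩ := hmemQF x1 hw; exact Qnb hi hiw
  have hx4QF : x4 ∉ QF := by
    intro hw; obtain ⟨i, hi, hiw⟩ := hmemQF x4 hw; exact Qne hi hiw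
  have hPQ : Disjoint PF QF := by
    rw [Finset.disjoint_left]
    intro w hwP hwQ
    obtain ⟨i, hi, hiw⟩ := hmemPF w hwP
    obtain ⟨j, hj, hjw⟩ := hmemQF w hwQ
    rcases Nat.eq_zero_or_pos i with hi0 | hipos
    · -- w = x0, contradiction with x0 ∉ Q (Q-side c = x0)
      subst hi0
      exact Qnc hj (by rw [hjw, ← hiw, hP0])
    rcases Nat.eq_zero_or_pos j with hj0 | hjpos
    · subst hj0
      exact Pnc hi (by rw [hiw, ← hjw, hQ0])
    rcases eq_or_lt_of_le hi with hitop | hitop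
    · exact Qng hj (by rw [hjw, ← hiw, hitop, hPd])
    rcases eq_or_lt_of_le hj with hjtop | hjtop
    · exact Png hi (by rw [hiw, ← hjw, hjtop, hQd])
    -- interior case
    have hadjP1 : G.Adj w (P.getVert (i - 1)) := by
      have := P.adj_getVert_succ (i := i - 1) (by omega)
      rw [show i - 1 + 1 = i from by omega, hiw] at this
      exact this.symm
    have hadjP2 : G.Adj w (P.getVert (i - 1 + 2)) := by
      have := P.adj_getVert_succ (i := i) (by omega)
      rw [hiw] at this
      rw [show i - 1 + 2 = i + 1 from by omega]
      exact this
    have hadjQ1 : G.Adj w (Q.getVert (j - 1)) := by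
      have := Q.adj_getVert_succ (i := j - 1) (by omega)
      rw [show j - 1 + 1 = j from by omega, hjw] at this
      exact this.symm
    have hadjQ2 : G.Adj w (Q.getVert (j - 1 + 2)) := by
      have := Q.adj_getVert_succ (i := j) (by omega)
      rw [hjw] at this
      rw [show j - 1 + 2 = j + 1 from by omega]
      exact this
    exact LB (by omega) (by omega) hadjP1 hadjP2 hadjQ1 hadjQ2
  have hx14 : x1 ≠ x4 := hfne 1 4 (by decide)
  set S : Finset V := PF ∪ QF ∪ {x1, x4} with hS
  have hScard : S.card = 4 * k := by
    rw [hS, Finset.card_union_of_disjoint, Finset.card_union_of_disjoint hPQ, hcPF, hcQF]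
    · rw [Finset.card_insert_of_notMem (by simp [hx14]), Finset.card_singleton]
      omega
    · rw [Finset.disjoint_right]
      intro w hw
      simp only [Finset.mem_insert, Finset.mem_singleton] at hw
      rcases hw with hw | hw <;> subst hw <;> simp [hx1PF, hx1QF, hx4PF, hx4QF]
  -- the per-vertex bound
  have hbound : ∀ v : V, (S.filter (fun u => G.Adj u v)).card ≤ 3 := by
    intro v
    have hsplit : (S.filter (fun u => G.Adj u v)).card ≤
        (PF.filter (fun u => G.Adj u v)).card + (QF.filter (fun u => G.Adj u v)).card +
          (({x1, x4} : Finset V).filter (fun u => G.Adj u v)).card := by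
      calc (S.filter (fun u => G.Adj u v)).card
          = ((PF.filter (fun u => G.Adj u v)) ∪ (QF.filter (fun u => G.Adj u v)) ∪
              (({x1, x4} : Finset V).filter (fun u => G.Adj u v))).card := by
            rw [hS, Finset.filter_union, Finset.filter_union]
        _ ≤ ((PF.filter (fun u => G.Adj u v)) ∪ (QF.filter (fun u => G.Adj u v))).card +
              (({x1, x4} : Finset V).filter (fun u => G.Adj u v)).card :=
            Finset.card_union_le _ _
        _ ≤ (PF.filter (fun u => G.Adj u v)).card + (QF.filter (fun u => G.Adj u v)).card +
              (({x1, x4} : Finset V).filter (fun u => G.Adj u v)).card :=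
            Nat.add_le_add_right (Finset.card_union_le _ _) _
    set IP := (Finset.range (2 * k - 1)).filter (fun i => G.Adj v (P.getVert i)) with hIP
    set IQ := (Finset.range (2 * k - 1)).filter (fun i => G.Adj v (Q.getVert i)) with hIQ
    have hcardIP : (PF.filter (fun u => G.Adj u v)).card = IP.card := by
      rw [hPF, Finset.filter_image]
      rw [Finset.card_image_of_injOn (hinjP.mono (by
        intro i hi
        simp only [Finset.coe_filter, Set.mem_setOf_eq] at hi
        simp only [Finset.coe_range, Set.mem_Iio]
        exact Finset.mem_range.mp hi.1))]
      congr 1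
      apply Finset.filter_congr
      intro i _
      exact ⟨fun h => h.symm, fun h => h.symm⟩
    have hcardIQ : (QF.filter (fun u => G.Adj u v)).card = IQ.card := by
      rw [hQF, Finset.filter_image]
      rw [Finset.card_image_of_injOn (hinjQ.mono (by
        intro i hi
        simp only [Finset.coe_filter, Set.mem_setOf_eq] at hi
        simp only [Finset.coe_range, Set.mem_Iio]
        exact Finset.mem_range.mp hi.1))]
      congr 1
      apply Finset.filter_congr
      intro i _
      exact ⟨fun h => h.symm, fun h => h.symm⟩
    have hIPmem : ∀ i ∈ IP, i ≤ 2 * k - 2 ∧ G.Adj v (P.getVert i) := by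
      intro i hi
      rw [hIP, Finset.mem_filter, Finset.mem_range] at hi
      exact ⟨by omega, hi.2⟩
    have hIQmem : ∀ i ∈ IQ, i ≤ 2 * k - 2 ∧ G.Adj v (Q.getVert i) := by
      intro i hi
      rw [hIQ, Finset.mem_filter, Finset.mem_range] at hi
      exact ⟨by omega, hi.2⟩
    by_cases hb1 : G.Adj v x1
    · by_cases hb4 : G.Adj v x4
      · exfalso
        have w : WN G v v (1 + 1 + 1) :=
          ((WN.adj hb1).comp (WN.adj e14)).comp (WN.adj hb4.symm)
        exact no_small_odd key w ⟨1, rfl⟩ (by omega)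
      · -- only x1
        have hIP1 : IP.card ≤ 1 := by
          rw [Finset.card_le_one]
          intro i hi j hj
          obtain ⟨hi', hvi⟩ := hIPmem i hi
          obtain ⟨hj', hvj⟩ := hIPmem j hj
          have hdi := Pb hb1 hi' hvi
          have hdj := Pb hb1 hj' hvj
          rcases Nat.lt_trichotomy i j with h | h | h
          · have := Ppair h hj' hvi hvj; omega
          · exact h
          · have := Ppair h hi' hvj hvi; omega
        have hIQ1 : IQ.card ≤ 1 := by
          rw [Finset.card_le_one]
          intro i hi j hj
          obtain ⟨hi', hvi⟩ := hIQmem i hi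
          obtain ⟨hj', hvj⟩ := hIQmem j hj
          have hdi := Qb hb1 hi' hvi
          have hdj := Qb hb1 hj' hvj
          rcases Nat.lt_trichotomy i j with h | h | h
          · have := Qpair h hj' hvi hvj; omega
          · exact h
          · have := Qpair h hi' hvj hvi; omega
        have hp1 : (({x1, x4} : Finset V).filter (fun u => G.Adj u v)).card ≤ 1 := by
          apply Finset.card_le_one.mpr
          intro u hu w hw
          simp only [Finset.mem_filter, Finset.mem_insert, Finset.mem_singleton] at hu hw
          rcases hu.1 with h | h
          · rcases hw.1 with h' | h'
            · rw [h, h']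
            · exact absurd (h' ▸ hw.2).symm hb4
          · exact absurd (h ▸ hu.2).symm hb4
        omega
    · by_cases hb4 : G.Adj v x4
      · have hIP1 : IP.card ≤ 1 := by
          rw [Finset.card_le_one]
          intro i hi j hj
          obtain ⟨hi', hvi⟩ := hIPmem i hi
          obtain ⟨hj', hvj⟩ := hIPmem j hj
          have hdi := Pe hb4 hi' hvi
          have hdj := Pe hb4 hj' hvj
          rcases Nat.lt_trichotomy i j with h | h | h
          · have := Ppair h hj' hvi hvj; omega
          · exact h
          · have := Ppair h hi' hvj hvi; omega
        have hIQ1 : IQ.card ≤ 1 := by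
          rw [Finset.card_le_one]
          intro i hi j hj
          obtain ⟨hi', hvi⟩ := hIQmem i hi
          obtain ⟨hj', hvj⟩ := hIQmem j hj
          have hdi := Qe hb4 hi' hvi
          have hdj := Qe hb4 hj' hvj
          rcases Nat.lt_trichotomy i j with h | h | h
          · have := Qpair h hj' hvi hvj; omega
          · exact h
          · have := Qpair h hi' hvj hvi; omega
        have hp1 : (({x1, x4} : Finset V).filter (fun u => G.Adj u v)).card ≤ 1 := by
          apply Finset.card_le_one.mpr
          intro u hu w hw
          simp only [Finset.mem_filter, Finset.mem_insert, Finset.mem_singleton] at hu hw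
          rcases hu.1 with h | h
          · exact absurd (h ▸ hu.2).symm hb1
          · rcases hw.1 with h' | h'
            · exact absurd (h' ▸ hw.2).symm hb1
            · rw [h, h']
        omega
      · -- neither
        have hp0 : (({x1, x4} : Finset V).filter (fun u => G.Adj u v)).card = 0 := by
          rw [Finset.card_eq_zero, Finset.filter_eq_empty_iff]
          intro u hu
          simp only [Finset.mem_insert, Finset.mem_singleton] at hu
          rcases hu with h | h
          · exact fun hadj => hb1 (h ▸ hadj).symm
          · exact fun hadj => hb4 (h ▸ hadj).symm
        have htwoP : 2 ≤ IP.card →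
            ∃ m, m + 2 ≤ 2 * k - 2 ∧ G.Adj v (P.getVert m) ∧ G.Adj v (P.getVert (m + 2)) := by
          intro h2
          obtain ⟨a, ha, b, hb, hab⟩ := Finset.one_lt_card.mp (show 1 < IP.card by omega)
          obtain ⟨ha', hva⟩ := hIPmem a ha
          obtain ⟨hb', hvb⟩ := hIPmem b hb
          rcases Nat.lt_trichotomy a b with h | h | h
          · have := Ppair h hb' hva hvb
            exact ⟨a, by omega, hva, by rw [← this]; exact hvb⟩
          · exact absurd h hab
          · have := Ppair h ha' hvb hva
            exact ⟨b, by omega, hvb, by rw [← this]; exact hva⟩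
        have htwoQ : 2 ≤ IQ.card →
            ∃ m, m + 2 ≤ 2 * k - 2 ∧ G.Adj v (Q.getVert m) ∧ G.Adj v (Q.getVert (m + 2)) := by
          intro h2
          obtain ⟨a, ha, b, hb, hab⟩ := Finset.one_lt_card.mp (show 1 < IQ.card by omega)
          obtain ⟨ha', hva⟩ := hIQmem a ha
          obtain ⟨hb', hvb⟩ := hIQmem b hb
          rcases Nat.lt_trichotomy a b with h | h | h
          · have := Qpair h hb' hva hvb
            exact ⟨a, by omega, hva, by rw [← this]; exact hvb⟩
          · exact absurd h hab
          · have := Qpair h ha' hvb hva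
            exact ⟨b, by omega, hvb, by rw [← this]; exact hva⟩
        have hIP2 : IP.card ≤ 2 := by
          by_contra h3
          obtain ⟨a, b, c, ha, hb, hc, hab, hac, hbc⟩ :=
            Finset.two_lt_card_iff.mp (show 2 < IP.card by omega)
          obtain ⟨ha', hva⟩ := hIPmem a ha
          obtain ⟨hb', hvb⟩ := hIPmem b hb
          obtain ⟨hc', hvc⟩ := hIPmem c hc
          have key3 : ∀ x y z : ℕ, x ≤ 2*k-2 → y ≤ 2*k-2 → z ≤ 2*k-2 →
              G.Adj v (P.getVert x) → G.Adj v (P.getVert y) → G.Adj v (P.getVert z) →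
              x < y → y < z → False := by
            intro x y z hx hy hz hvx hvy hvz hxy hyz
            have e1 := Ppair hxy hy hvx hvy
            have e2 := Ppair hyz hz hvy hvz
            have e3 := Ppair (hxy.trans hyz) hz hvx hvz
            omega
          rcases Nat.lt_trichotomy a b with h1 | h1 | h1
          · rcases Nat.lt_trichotomy b c with h2 | h2 | h2
            · exact key3 a b c ha' hb' hc' hva hvb hvc h1 h2
            · exact hbc h2
            · rcases Nat.lt_trichotomy a c with h3' | h3' | h3'
              · exact key3 a c b ha' hc' hb' hva hvc hvb h3' h2
              · exact hac h3'
              · exact key3 c a b hc' ha' hb' hvc hva hvb h3' h1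
          · exact hab h1
          · rcases Nat.lt_trichotomy a c with h2 | h2 | h2
            · exact key3 b a c hb' ha' hc' hvb hva hvc h1 h2
            · exact hac h2
            · rcases Nat.lt_trichotomy b c with h3' | h3' | h3'
              · exact key3 b c a hb' hc' ha' hvb hvc hva h3' h2
              · exact hbc h3'
              · exact key3 c b a hc' hb' ha' hvc hvb hva h3' h1
        have hIQ2 : IQ.card ≤ 2 := by
          by_contra h3
          obtain ⟨a, b, c, ha, hb, hc, hab, hac, hbc⟩ :=
            Finset.two_lt_card_iff.mp (show 2 < IQ.card by omega)
          obtain ⟨ha', hva⟩ := hIQmem a ha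
          obtain ⟨hb', hvb⟩ := hIQmem b hb
          obtain ⟨hc', hvc⟩ := hIQmem c hc
          have key3 : ∀ x y z : ℕ, x ≤ 2*k-2 → y ≤ 2*k-2 → z ≤ 2*k-2 →
              G.Adj v (Q.getVert x) → G.Adj v (Q.getVert y) → G.Adj v (Q.getVert z) →
              x < y → y < z → False := by
            intro x y z hx hy hz hvx hvy hvz hxy hyz
            have e1 := Qpair hxy hy hvx hvy
            have e2 := Qpair hyz hz hvy hvz
            have e3 := Qpair (hxy.trans hyz) hz hvx hvz
            omega
          rcases Nat.lt_trichotomy a b with h1 | h1 | h1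
          · rcases Nat.lt_trichotomy b c with h2 | h2 | h2
            · exact key3 a b c ha' hb' hc' hva hvb hvc h1 h2
            · exact hbc h2
            · rcases Nat.lt_trichotomy a c with h3' | h3' | h3'
              · exact key3 a c b ha' hc' hb' hva hvc hvb h3' h2
              · exact hac h3'
              · exact key3 c a b hc' ha' hb' hvc hva hvb h3' h1
          · exact hab h1
          · rcases Nat.lt_trichotomy a c with h2 | h2 | h2
            · exact key3 b a c hb' ha' hc' hvb hva hvc h1 h2
            · exact hac h2
            · rcases Nat.lt_trichotomy b c with h3' | h3' | h3'
              · exact key3 b c a hb' hc' ha' hvb hvc hva h3' h2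
              · exact hbc h3'
              · exact key3 c b a hc' hb' ha' hvc hvb hva h3' h1
        have hnotboth : ¬ (2 ≤ IP.card ∧ 2 ≤ IQ.card) := by
          rintro ⟨h1, h2⟩
          obtain ⟨m, hm, hvm, hvm2⟩ := htwoP h1
          obtain ⟨m', hm', hvm', hvm2'⟩ := htwoQ h2
          exact LB hm hm' hvm hvm2 hvm' hvm2'
        omega
  -- double counting
  have hsum1 : ∑ u ∈ S, G.degree u = ∑ v : V, (S.filter (fun u => G.Adj u v)).card := by
    have h1 : ∀ u : V, G.degree u = ∑ v : V, if G.Adj u v then 1 else 0 := by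
      intro u
      rw [← SimpleGraph.card_neighborFinset_eq_degree, neighborFinset_eq_filter,
        Finset.card_filter]
    calc ∑ u ∈ S, G.degree u = ∑ u ∈ S, ∑ v : V, if G.Adj u v then 1 else 0 :=
          Finset.sum_congr rfl fun u _ => h1 u
      _ = ∑ v : V, ∑ u ∈ S, if G.Adj u v then 1 else 0 := Finset.sum_comm
      _ = ∑ v : V, (S.filter (fun u => G.Adj u v)).card :=
          Finset.sum_congr rfl fun v _ => (Finset.card_filter _ _).symm
  have hlower : 4 * k * G.minDegree ≤ ∑ u ∈ S, G.degree u := by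
    have h := Finset.sum_le_sum (f := fun _ : V => G.minDegree) (g := fun u => G.degree u)
      (s := S) (fun u _ => G.minDegree_le_degree u)
    rw [Finset.sum_const, hScard, smul_eq_mul] at h
    exact h
  have hupper : ∑ v : V, (S.filter (fun u => G.Adj u v)).card ≤ 3 * n := by
    calc ∑ v : V, (S.filter (fun u => G.Adj u v)).card ≤ ∑ _v : V, 3 :=
          Finset.sum_le_sum fun v _ => hbound v
      _ = 3 * n := by rw [Finset.sum_const, Finset.card_univ, hn, smul_eq_mul]; ring
  have hfinal : 4 * k * G.minDegree ≤ 3 * n := by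
    rw [hsum1] at hlower
    omega
  -- contradiction with the minimum degree condition
  have h4k : (0 : ℝ) < 4 * (k : ℝ) := by
    have : (2 : ℝ) ≤ (k : ℝ) := by exact_mod_cast hk
    linarith
  rw [div_lt_iff₀ h4k] at hdeg
  have hcast : ((4 * k * G.minDegree : ℕ) : ℝ) ≤ ((3 * n : ℕ) : ℝ) := by exact_mod_cast hfinal
  push_cast at hcast
  nlinarith [hdeg, hcast]
end

section
/- For all integers k ≥ 2 and n, no graph G ∈ 𝒢_{n,k} contains a copy of the graph Φ′ consisting of a cycle v_0 v_1 … v_{4k−1} v_0 of length 4k together with the three diagonals {v_0, v_{2k}}, {v_1, v_{2k+1}}, and {v_2, v_{2k+2}} (not necessarily induced). -/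
open SimpleGraph

private lemma path_edge_end {V : Type*} {G : SimpleGraph V} {y v : V}
    (t : G.Walk y v) (ht : t.IsPath) (he : s(v, y) ∈ t.edges) : t.length = 1 := by
  induction t with
  | nil => simp at he
  | cons h' t' ih =>
    rename_i a b c
    rw [SimpleGraph.Walk.edges_cons, List.mem_cons] at he
    rcases he with he | he
    · rw [Sym2.eq_iff] at he
      rcases he with ⟨h1, h2⟩ | ⟨h1, h2⟩
      · subst h1; subst h2; exact absurd h' G.irrefl
      · subst h1
        have : t' = SimpleGraph.Walk.nil := SimpleGraph.Walk.isPath_iff_eq_nil.1 ht.of_cons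
        subst this
        simp
    · exfalso
      have hy : a ∈ t'.support := SimpleGraph.Walk.snd_mem_support_of_mem_edges _ he
      have := ht.support_nodup
      rw [SimpleGraph.Walk.support_cons] at this
      exact (List.nodup_cons.1 this).1 hy

private lemma odd_closed_walk_cycle {V : Type*} {G : SimpleGraph V} :
    ∀ (n : ℕ) {v : V} (w : G.Walk v v), w.length = n → Odd n →
    ∃ (u : V) (c : G.Walk u u), c.IsCycle ∧ Odd c.length ∧ c.length ≤ n := by
  intro n
  induction n using Nat.strong_induction_on with
  | _ n ih =>
    classical
    intro v w hw hodd
    by_cases hnd : w.support.tail.Nodup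
    · cases w with
      | nil => simp at hw; subst hw; simp at hodd
      | cons h t =>
        rename_i y
        have hnd' : t.support.Nodup := by
          rwa [SimpleGraph.Walk.support_cons, List.tail_cons] at hnd
        have ht : t.IsPath := SimpleGraph.Walk.IsPath.mk' hnd'
        have hedge : s(v, y) ∉ t.edges := by
          intro hmem
          have := path_edge_end t ht hmem
          rw [SimpleGraph.Walk.length_cons, this] at hw
          subst hw
          simp [Nat.odd_iff] at hodd
        exact ⟨v, SimpleGraph.Walk.cons h t,
          (SimpleGraph.Walk.cons_isCycle_iff t h).2 ⟨ht, hedge⟩, hw ▸ hodd, hw.le⟩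
    · obtain ⟨x, hx2⟩ : ∃ x, 2 ≤ w.support.tail.count x := by
        by_contra hc
        push_neg at hc
        exact hnd (List.nodup_iff_count_le_one.2 fun a => by
          have := hc a; omega)
      have hxt : x ∈ w.support.tail := by
        rw [← List.count_pos_iff]; omega
      have hxs : x ∈ w.support := by
        rw [w.support_eq_cons]; exact List.mem_cons_of_mem _ hxt
      obtain ⟨r, hrl, hrc⟩ : ∃ r : G.Walk x x,
          r.length = w.length ∧ 2 ≤ r.support.tail.count x := by
        refine ⟨w.rotate x hxs, ?_, ?_⟩
        · rw [SimpleGraph.Walk.rotate, SimpleGraph.Walk.length_append, Nat.add_comm,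
            ← SimpleGraph.Walk.length_append, w.take_spec hxs]
        · rw [((w.support_rotate x hxs).perm.count_eq x)]
          exact hx2
      cases r with
      | nil =>
        simp only [SimpleGraph.Walk.length_nil] at hrl
        rw [Nat.odd_iff] at hodd
        omega
      | cons h' t' =>
        have htc : 2 ≤ t'.support.count x := by
          rwa [SimpleGraph.Walk.support_cons, List.tail_cons] at hrc
        have hxm : x ∈ t'.support := by
          rw [← List.count_pos_iff]; omega
        have hsum : (t'.takeUntil x hxm).length + (t'.dropUntil x hxm).length = t'.length := by
          rw [← SimpleGraph.Walk.length_append, t'.take_spec hxm]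
        have hcnt : t'.support.count x =
            (t'.takeUntil x hxm).support.count x + (t'.dropUntil x hxm).support.tail.count x := by
          conv_lhs => rw [← t'.take_spec hxm]
          rw [SimpleGraph.Walk.support_append, List.count_append]
        have hp1c : (t'.takeUntil x hxm).support.count x = 1 :=
          t'.count_support_takeUntil_eq_one hxm
        have hp2pos : 1 ≤ (t'.dropUntil x hxm).length := by
          by_contra hp0
          push_neg at hp0
          have hl : (t'.dropUntil x hxm).length = 0 := by omega
          have h1 : (t'.dropUntil x hxm).support.length = 1 := by
            rw [SimpleGraph.Walk.length_support, hl]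
          have h2 : (t'.dropUntil x hxm).support.tail = [] := by
            cases hs : (t'.dropUntil x hxm).support with
            | nil => rw [hs] at h1; simp at h1
            | cons a l => rw [hs] at h1; simp at h1; simp [h1]
          rw [hp1c, h2] at hcnt
          simp at hcnt
          omega
        have hlen : 1 + (t'.takeUntil x hxm).length + (t'.dropUntil x hxm).length = n := by
          rw [SimpleGraph.Walk.length_cons] at hrl
          omega
        rcases Nat.even_or_odd (t'.dropUntil x hxm).length with hev | hodd2
        · have hodd1 : Odd (SimpleGraph.Walk.cons h' (t'.takeUntil x hxm)).length := by
            rw [SimpleGraph.Walk.length_cons, Nat.odd_iff]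
            have hodd' := hodd
            rw [Nat.odd_iff] at hodd'
            rcases hev with ⟨m, hm⟩
            omega
          obtain ⟨u, c, hc, hco, hcl⟩ := ih (SimpleGraph.Walk.cons h' (t'.takeUntil x hxm)).length
            (by rw [SimpleGraph.Walk.length_cons]; omega)
            (SimpleGraph.Walk.cons h' (t'.takeUntil x hxm)) rfl hodd1
          exact ⟨u, c, hc, hco, le_trans hcl (by rw [SimpleGraph.Walk.length_cons]; omega)⟩
        · obtain ⟨u, c, hc, hco, hcl⟩ := ih (t'.dropUntil x hxm).length (by omega)
            (t'.dropUntil x hxm) rfl hodd2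
          exact ⟨u, c, hc, hco, le_trans hcl (by omega)⟩

private lemma val_sub_char {N : ℕ} [NeZero N] (x y : ZMod N) :
    (x.val ≤ y.val ∧ (y - x).val = y.val - x.val) ∨
    (y.val < x.val ∧ (y - x).val = y.val + N - x.val) := by
  have hx := ZMod.val_lt x
  have hy := ZMod.val_lt y
  have h1 : (y - x) = ((y.val + N - x.val : ℕ) : ZMod N) := by
    rw [Nat.cast_sub (by omega), Nat.cast_add, ZMod.natCast_self, ZMod.natCast_zmod_val,
      ZMod.natCast_zmod_val, add_zero]
  rw [h1, ZMod.val_natCast]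
  rcases le_or_gt x.val y.val with h | h
  · left
    refine ⟨h, ?_⟩
    have h2 : y.val + N - x.val = (y.val - x.val) + N := by omega
    rw [h2, Nat.add_mod_right, Nat.mod_eq_of_lt (by omega)]
  · right
    exact ⟨h, Nat.mod_eq_of_lt (by omega)⟩

private lemma four_distinct {α : Type*} [DecidableEq α] {s : Finset α} (h : 4 ≤ s.card) :
    ∃ a b c d, a ∈ s ∧ b ∈ s ∧ c ∈ s ∧ d ∈ s ∧
      a ≠ b ∧ a ≠ c ∧ a ≠ d ∧ b ≠ c ∧ b ≠ d ∧ c ≠ d := by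
  obtain ⟨t, hts, ht⟩ := Finset.exists_subset_card_eq h
  rw [Finset.card_eq_succ] at ht
  obtain ⟨a, t1, ha1, rfl, ht1⟩ := ht
  rw [Finset.card_eq_succ] at ht1
  obtain ⟨b, t2, hb2, rfl, ht2⟩ := ht1
  rw [Finset.card_eq_succ] at ht2
  obtain ⟨c, t3, hc3, rfl, ht3⟩ := ht2
  rw [Finset.card_eq_one] at ht3
  obtain ⟨d, rfl⟩ := ht3
  simp only [Finset.mem_insert, Finset.mem_singleton, not_or] at ha1 hb2 hc3
  exact ⟨a, b, c, d, hts (by simp), hts (by simp), hts (by simp), hts (by simp),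
    ha1.1, ha1.2.1, ha1.2.2, hb2.1, hb2.2, hc3⟩


private def cd (k x y : ℕ) : Prop :=
  y = x + (2*k-1) ∨ y = x + (2*k+1) ∨ x = y + (2*k-1) ∨ x = y + (2*k+1)

private lemma cd_symm {k x y : ℕ} (h : cd k x y) : cd k y x := by
  unfold cd at *; omega

private lemma cross_pair (k x y D D' : ℕ) (hk : 2 ≤ k) (hx : x < 4*k) (hy : y < 4*k)
    (hxy : x ≠ y)
    (hD : (x ≤ y ∧ D = y - x) ∨ (y < x ∧ D = y + 4*k - x))
    (hD' : (y ≤ x ∧ D' = x - y) ∨ (x < y ∧ D' = x + 4*k - y))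
    (hF : (2 + D) % 2 = 1 → 2*k + 1 ≤ 2 + D)
    (hF' : (2 + D') % 2 = 1 → 2*k + 1 ≤ 2 + D') :
    x % 2 ≠ y % 2 → cd k x y := by
  intro hpar
  unfold cd
  omega

private lemma three_cross (k a b c d : ℕ) (hk : 2 ≤ k)
    (ba : a < 4*k) (bb : b < 4*k) (bc : c < 4*k) (bd : d < 4*k)
    (dab : a ≠ b) (dac : a ≠ c) (dbc : b ≠ c)
    (h1 : cd k a d) (h2 : cd k b d) (h3 : cd k c d) : False := by
  unfold cd at h1 h2 h3
  omega

private lemma two_two (k a b c d : ℕ) (hk : 2 ≤ k)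
    (ba : a < 4*k) (bb : b < 4*k) (bc : c < 4*k) (bd : d < 4*k)
    (dab : a ≠ b) (dcd : c ≠ d)
    (hac : cd k a c) (had : cd k a d) (hbc : cd k b c) (hbd : cd k b d) : False := by
  unfold cd at hac had hbc hbd
  omega

set_option maxHeartbeats 1000000 in
private lemma phase1 (k x1 x2 x3 x4 : ℕ) (hk : 2 ≤ k)
    (b1 : x1 < 4*k) (b2 : x2 < 4*k) (b3 : x3 < 4*k) (b4 : x4 < 4*k)
    (d12 : x1 ≠ x2) (d13 : x1 ≠ x3) (d14 : x1 ≠ x4)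
    (d23 : x2 ≠ x3) (d24 : x2 ≠ x4) (d34 : x3 ≠ x4)
    (K12 : x1 % 2 ≠ x2 % 2 → cd k x1 x2) (K13 : x1 % 2 ≠ x3 % 2 → cd k x1 x3)
    (K14 : x1 % 2 ≠ x4 % 2 → cd k x1 x4) (K23 : x2 % 2 ≠ x3 % 2 → cd k x2 x3)
    (K24 : x2 % 2 ≠ x4 % 2 → cd k x2 x4) (K34 : x3 % 2 ≠ x4 % 2 → cd k x3 x4) :
    x1 % 2 = x2 % 2 ∧ x1 % 2 = x3 % 2 ∧ x1 % 2 = x4 % 2 := by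
  rcases Nat.mod_two_eq_zero_or_one x1 with e1 | e1 <;>
    rcases Nat.mod_two_eq_zero_or_one x2 with e2 | e2 <;>
      rcases Nat.mod_two_eq_zero_or_one x3 with e3 | e3 <;>
        rcases Nat.mod_two_eq_zero_or_one x4 with e4 | e4
  · exact ⟨by omega, by omega, by omega⟩
  · exact absurd (three_cross k x1 x2 x3 x4 hk b1 b2 b3 b4 d12 d13 d23 (K14 (by omega)) (K24 (by omega)) (K34 (by omega))) not_false
  · exact absurd (three_cross k x1 x2 x4 x3 hk b1 b2 b4 b3 d12 d14 d24 (K13 (by omega)) (K23 (by omega)) (cd_symm (K34 (by omega)))) not_false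
  · exact absurd (two_two k x1 x2 x3 x4 hk b1 b2 b3 b4 d12 d34 (K13 (by omega)) (K14 (by omega)) (K23 (by omega)) (K24 (by omega))) not_false
  · exact absurd (three_cross k x1 x3 x4 x2 hk b1 b3 b4 b2 d13 d14 d34 (K12 (by omega)) (cd_symm (K23 (by omega))) (cd_symm (K24 (by omega)))) not_false
  · exact absurd (two_two k x1 x3 x2 x4 hk b1 b3 b2 b4 d13 d24 (K12 (by omega)) (K14 (by omega)) (cd_symm (K23 (by omega))) (K34 (by omega))) not_false
  · exact absurd (two_two k x1 x4 x2 x3 hk b1 b4 b2 b3 d14 d23 (K12 (by omega)) (K13 (by omega)) (cd_symm (K24 (by omega))) (cd_symm (K34 (by omega)))) not_false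
  · exact absurd (three_cross k x2 x3 x4 x1 hk b2 b3 b4 b1 d23 d24 d34 (cd_symm (K12 (by omega))) (cd_symm (K13 (by omega))) (cd_symm (K14 (by omega)))) not_false
  · exact absurd (three_cross k x2 x3 x4 x1 hk b2 b3 b4 b1 d23 d24 d34 (cd_symm (K12 (by omega))) (cd_symm (K13 (by omega))) (cd_symm (K14 (by omega)))) not_false
  · exact absurd (two_two k x2 x3 x1 x4 hk b2 b3 b1 b4 d23 d14 (cd_symm (K12 (by omega))) (K24 (by omega)) (cd_symm (K13 (by omega))) (K34 (by omega))) not_false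
  · exact absurd (two_two k x2 x4 x1 x3 hk b2 b4 b1 b3 d24 d13 (cd_symm (K12 (by omega))) (K23 (by omega)) (cd_symm (K14 (by omega))) (cd_symm (K34 (by omega)))) not_false
  · exact absurd (three_cross k x1 x3 x4 x2 hk b1 b3 b4 b2 d13 d14 d34 (K12 (by omega)) (cd_symm (K23 (by omega))) (cd_symm (K24 (by omega)))) not_false
  · exact absurd (two_two k x3 x4 x1 x2 hk b3 b4 b1 b2 d34 d12 (cd_symm (K13 (by omega))) (cd_symm (K23 (by omega))) (cd_symm (K14 (by omega))) (cd_symm (K24 (by omega)))) not_false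
  · exact absurd (three_cross k x1 x2 x4 x3 hk b1 b2 b4 b3 d12 d14 d24 (K13 (by omega)) (K23 (by omega)) (cd_symm (K34 (by omega)))) not_false
  · exact absurd (three_cross k x1 x2 x3 x4 hk b1 b2 b3 b4 d12 d13 d23 (K14 (by omega)) (K24 (by omega)) (K34 (by omega))) not_false
  · exact ⟨by omega, by omega, by omega⟩


private lemma m0_char (k x Dl Dr : ℕ) (hk : 2 ≤ k) (hx : x < 4*k)
    (hDl : (x ≤ 0 ∧ Dl = 0 - x) ∨ (0 < x ∧ Dl = 0 + 4*k - x))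
    (hDr : (0 ≤ x ∧ Dr = x - 0) ∨ (x < 0 ∧ Dr = x + 4*k - 0)) :
    (x ≤ 2*k ∧ min Dl Dr = x) ∨ (2*k < x ∧ min Dl Dr = 4*k - x) := by
  omega

private lemma m1_char (k x Dl Dr : ℕ) (hk : 2 ≤ k) (hx : x < 4*k)
    (hDl : (x ≤ 1 ∧ Dl = 1 - x) ∨ (1 < x ∧ Dl = 1 + 4*k - x))
    (hDr : (1 ≤ x ∧ Dr = x - 1) ∨ (x < 1 ∧ Dr = x + 4*k - 1)) :
    (1 ≤ x ∧ x ≤ 2*k+1 ∧ min Dl Dr = x - 1) ∨ (x = 0 ∧ min Dl Dr = 1) ∨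
      (2*k+1 ≤ x ∧ min Dl Dr = 4*k+1 - x) := by
  omega

private lemma n0_char (k x Dl Dr : ℕ) (hk : 2 ≤ k) (hx : x < 4*k)
    (hDl : (2*k ≤ x ∧ Dl = x - 2*k) ∨ (x < 2*k ∧ Dl = x + 4*k - 2*k))
    (hDr : (x ≤ 2*k ∧ Dr = 2*k - x) ∨ (2*k < x ∧ Dr = 2*k + 4*k - x)) :
    (x ≤ 2*k ∧ min Dl Dr = 2*k - x) ∨ (2*k < x ∧ min Dl Dr = x - 2*k) := by
  omega

private lemma n1_char (k x Dl Dr : ℕ) (hk : 2 ≤ k) (hx : x < 4*k)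
    (hDl : (2*k+1 ≤ x ∧ Dl = x - (2*k+1)) ∨ (x < 2*k+1 ∧ Dl = x + 4*k - (2*k+1)))
    (hDr : (x ≤ 2*k+1 ∧ Dr = 2*k+1 - x) ∨ (2*k+1 < x ∧ Dr = 2*k+1 + 4*k - x)) :
    (1 ≤ x ∧ x ≤ 2*k+1 ∧ min Dl Dr = 2*k+1 - x) ∨ (x = 0 ∧ min Dl Dr = 2*k-1) ∨
      (2*k+1 < x ∧ min Dl Dr = x - (2*k+1)) := by
  omega

private lemma side_char (k x M0 M1 : ℕ) (hk : 2 ≤ k) (hx : x < 4*k)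
    (c0 : (x ≤ 2*k ∧ M0 = x) ∨ (2*k < x ∧ M0 = 4*k - x))
    (c1 : (1 ≤ x ∧ x ≤ 2*k+1 ∧ M1 = x - 1) ∨ (x = 0 ∧ M1 = 1) ∨
      (2*k+1 ≤ x ∧ M1 = 4*k+1 - x)) :
    (x = M0 ∧ M1 + 1 = M0 ∧ 1 ≤ M0 ∧ M0 ≤ 2*k) ∨
      (M1 = M0 + 1 ∧ M0 ≤ 2*k ∧ (x + M0 = 4*k ∨ (x = 0 ∧ M0 = 0))) := by
  omega

private lemma sideS (M0 M1 x k : ℕ)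
    (D : (x = M0 ∧ M1 + 1 = M0 ∧ 1 ≤ M0 ∧ M0 ≤ 2*k) ∨
      (M1 = M0 + 1 ∧ M0 ≤ 2*k ∧ (x + M0 = 4*k ∨ (x = 0 ∧ M0 = 0)))) :
    M1 + 1 = M0 ∨ M1 = M0 + 1 := by
  omega

private lemma spread_step0 (k x y Mx My Ny : ℕ) (hk : 2 ≤ k)
    (hMx : (x ≤ 2*k ∧ Mx = x) ∨ (2*k < x ∧ Mx = 4*k - x))
    (hMy : (y ≤ 2*k ∧ My = y) ∨ (2*k < y ∧ My = 4*k - y))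
    (hNy : (y ≤ 2*k ∧ Ny = 2*k - y) ∨ (2*k < y ∧ Ny = y - 2*k))
    (hpar : x % 2 = y % 2) (hx : x < 4*k) (hy : y < 4*k)
    (hfact : (3 + Mx + Ny) % 2 = 1 → 2*k + 1 ≤ 3 + Mx + Ny) :
    My ≤ Mx + 2 := by
  omega

private lemma spread_step1 (k x y Mx My Ny : ℕ) (hk : 2 ≤ k)
    (hMx : (1 ≤ x ∧ x ≤ 2*k+1 ∧ Mx = x - 1) ∨ (x = 0 ∧ Mx = 1) ∨
      (2*k+1 ≤ x ∧ Mx = 4*k+1 - x))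
    (hMy : (1 ≤ y ∧ y ≤ 2*k+1 ∧ My = y - 1) ∨ (y = 0 ∧ My = 1) ∨
      (2*k+1 ≤ y ∧ My = 4*k+1 - y))
    (hNy : (1 ≤ y ∧ y ≤ 2*k+1 ∧ Ny = 2*k+1 - y) ∨ (y = 0 ∧ Ny = 2*k-1) ∨
      (2*k+1 < y ∧ Ny = y - (2*k+1)))
    (hpar : x % 2 = y % 2) (hx : x < 4*k) (hy : y < 4*k)
    (hfact : (3 + Mx + Ny) % 2 = 1 → 2*k + 1 ≤ 3 + Mx + Ny) :
    My ≤ Mx + 2 := by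
  omega

private lemma pairrel (k x y M0x M0y M1x M1y r ax ay : ℕ) (hk : 2 ≤ k)
    (hx : x < 4*k) (hy : y < 4*k) (hr : r ≤ 1)
    (qx : x = 2*ax + r) (qy : y = 2*ay + r) (dxy : x ≠ y)
    (Dx : (x = M0x ∧ M1x + 1 = M0x ∧ 1 ≤ M0x ∧ M0x ≤ 2*k) ∨
      (M1x = M0x + 1 ∧ M0x ≤ 2*k ∧ (x + M0x = 4*k ∨ (x = 0 ∧ M0x = 0))))
    (Dy : (y = M0y ∧ M1y + 1 = M0y ∧ 1 ≤ M0y ∧ M0y ≤ 2*k) ∨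
      (M1y = M0y + 1 ∧ M0y ≤ 2*k ∧ (y + M0y = 4*k ∨ (y = 0 ∧ M0y = 0))))
    (t0 : M0y ≤ M0x + 2) (t0' : M0x ≤ M0y + 2)
    (t1 : M1y ≤ M1x + 2) (t1' : M1x ≤ M1y + 2) :
    (M0x = M0y ∧ M1x + M1y = M0x + M0y) ∨
      ((M0y = M0x + 2 ∨ M0x = M0y + 2) ∧
        (M1y = M1x + 2 ∨ M1x = M1y + 2 ∨ M1x = M1y)) := by
  rcases Dx with ⟨ex, fx, gx, jx⟩ | ⟨ex, fx, gx⟩ <;>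
    rcases Dy with ⟨ey, fy, gy, jy⟩ | ⟨ey, fy, gy⟩ <;>
      omega

set_option maxHeartbeats 1000000 in
private lemma assembly (M01 M02 M03 M04 M11 M12 M13 M14 : ℕ)
    (S1 : M11 + 1 = M01 ∨ M11 = M01 + 1) (S2 : M12 + 1 = M02 ∨ M12 = M02 + 1)
    (S3 : M13 + 1 = M03 ∨ M13 = M03 + 1) (S4 : M14 + 1 = M04 ∨ M14 = M04 + 1)
    (P12 : (M01 = M02 ∧ M11 + M12 = M01 + M02) ∨
      ((M02 = M01 + 2 ∨ M01 = M02 + 2) ∧ (M12 = M11 + 2 ∨ M11 = M12 + 2 ∨ M11 = M12)))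
    (P13 : (M01 = M03 ∧ M11 + M13 = M01 + M03) ∨
      ((M03 = M01 + 2 ∨ M01 = M03 + 2) ∧ (M13 = M11 + 2 ∨ M11 = M13 + 2 ∨ M11 = M13)))
    (P14 : (M01 = M04 ∧ M11 + M14 = M01 + M04) ∨
      ((M04 = M01 + 2 ∨ M01 = M04 + 2) ∧ (M14 = M11 + 2 ∨ M11 = M14 + 2 ∨ M11 = M14)))
    (P23 : (M02 = M03 ∧ M12 + M13 = M02 + M03) ∨
      ((M03 = M02 + 2 ∨ M02 = M03 + 2) ∧ (M13 = M12 + 2 ∨ M12 = M13 + 2 ∨ M12 = M13)))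
    (P24 : (M02 = M04 ∧ M12 + M14 = M02 + M04) ∨
      ((M04 = M02 + 2 ∨ M02 = M04 + 2) ∧ (M14 = M12 + 2 ∨ M12 = M14 + 2 ∨ M12 = M14)))
    (P34 : (M03 = M04 ∧ M13 + M14 = M03 + M04) ∨
      ((M04 = M03 + 2 ∨ M03 = M04 + 2) ∧ (M14 = M13 + 2 ∨ M13 = M14 + 2 ∨ M13 = M14))) :
    False := by
  omega

set_option maxHeartbeats 1000000 in
theorem stmt_7 {V : Type*} [Fintype V] (k n : ℕ) (hk : 2 ≤ k)
    (G : SimpleGraph V) [DecidableRel G.Adj] (hn : Fintype.card V = n)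
    (hdeg : 3 * (n : ℝ) / (4 * k) < G.minDegree)
    (hgirth : ∀ (v : V) (c : G.Walk v v), c.IsCycle → Odd c.length → 2 * k + 1 ≤ c.length)
    (hmax : ∀ u v : V, u ≠ v → ¬ G.Adj u v →
      ∃ (w : V) (c : (G ⊔ SimpleGraph.fromEdgeSet {s(u, v)}).Walk w w),
        c.IsCycle ∧ Odd c.length ∧ c.length ≤ 2 * k - 1) :
    ¬ ∃ f : ZMod (4 * k) → V, Function.Injective f ∧
        (∀ i : ZMod (4 * k), G.Adj (f i) (f (i + 1))) ∧
        G.Adj (f 0) (f (2 * k)) ∧ G.Adj (f 1) (f (2 * k + 1)) ∧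
        G.Adj (f 2) (f (2 * k + 2)) := by
  rintro ⟨f, hfinj, hadj, hd0, hd1, hd2⟩
  haveI : NeZero (4 * k) := ⟨by omega⟩
  have key : ∀ {a : V} (w : G.Walk a a), Odd w.length → 2 * k + 1 ≤ w.length := by
    intro a w hw
    obtain ⟨u, c, hc, hco, hcl⟩ := odd_closed_walk_cycle w.length w rfl hw
    exact le_trans (hgirth u c hc hco) hcl
  -- walks along the cycle
  have hwalk0 : ∀ (m : ℕ) (i : ZMod (4*k)),
      ∃ w : G.Walk (f i) (f (i + (m : ZMod (4*k)))), w.length = m := by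
    intro m
    induction m with
    | zero =>
      intro i
      refine ⟨SimpleGraph.Walk.nil.copy rfl (congrArg f ?_), by simp⟩
      push_cast
      ring
    | succ m ihm =>
      intro i
      obtain ⟨w, hw⟩ := ihm i
      refine ⟨(w.concat (hadj (i + (m : ZMod (4*k))))).copy rfl (congrArg f ?_), ?_⟩
      · push_cast
        ring
      · rw [SimpleGraph.Walk.length_copy, SimpleGraph.Walk.length_concat, hw]
  have hwalk : ∀ x y : ZMod (4*k), ∃ w : G.Walk (f x) (f y), w.length = (y - x).val := by
    intro x y
    obtain ⟨w, hw⟩ := hwalk0 (y - x).val x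
    refine ⟨w.copy rfl (congrArg f ?_), by rwa [SimpleGraph.Walk.length_copy]⟩
    rw [ZMod.natCast_zmod_val]
    ring
  have hwalk2 : ∀ (x y : ZMod (4*k)) (m : ℕ), (m = (y - x).val ∨ m = (x - y).val) →
      ∃ w : G.Walk (f x) (f y), w.length = m := by
    intro x y m hm
    rcases hm with rfl | rfl
    · exact hwalk x y
    · obtain ⟨w, hw⟩ := hwalk y x
      exact ⟨w.reverse, by rwa [SimpleGraph.Walk.length_reverse]⟩
  -- pigeonhole for a vertex with 4 neighbours on the cycle
  have hdeg' : 3 * n < 4 * k * G.minDegree := by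
    have h4 : (0:ℝ) < 4 * (k:ℝ) := by positivity
    have h5 := (div_lt_iff₀ h4).1 hdeg
    have h6 : (3 * n : ℝ) < ((4 * k * G.minDegree : ℕ) : ℝ) := by push_cast; nlinarith
    exact_mod_cast h6
  obtain ⟨u, hu4⟩ : ∃ u : V,
      4 ≤ (Finset.univ.filter (fun i : ZMod (4*k) => G.Adj u (f i))).card := by
    by_contra hc
    push_neg at hc
    have hsum : ∑ v : V, (Finset.univ.filter (fun i : ZMod (4*k) => G.Adj v (f i))).card
        ≤ 3 * n := by
      calc ∑ v : V, (Finset.univ.filter (fun i : ZMod (4*k) => G.Adj v (f i))).card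
          ≤ ∑ _v : V, 3 := Finset.sum_le_sum (fun v _ => by have := hc v; omega)
        _ = 3 * n := by rw [Finset.sum_const, Finset.card_univ, hn, smul_eq_mul, mul_comm]
    have hdegeq : ∀ i : ZMod (4*k),
        (∑ v : V, if G.Adj v (f i) then 1 else 0) = G.degree (f i) := by
      intro i
      rw [SimpleGraph.degree, SimpleGraph.neighborFinset_eq_filter, Finset.card_filter]
      exact Finset.sum_congr rfl (fun v _ => by simp [SimpleGraph.adj_comm])
    have hsum2 : ∑ v : V, (Finset.univ.filter (fun i : ZMod (4*k) => G.Adj v (f i))).card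
        = ∑ i : ZMod (4*k), G.degree (f i) := by
      simp_rw [Finset.card_filter]
      rw [Finset.sum_comm]
      exact Finset.sum_congr rfl (fun i _ => hdegeq i)
    have hdegsum : 4 * k * G.minDegree ≤ ∑ i : ZMod (4*k), G.degree (f i) := by
      calc 4 * k * G.minDegree = ∑ _i : ZMod (4*k), G.minDegree := by
            rw [Finset.sum_const, Finset.card_univ, ZMod.card, smul_eq_mul]
        _ ≤ ∑ i : ZMod (4*k), G.degree (f i) :=
            Finset.sum_le_sum (fun i _ => G.minDegree_le_degree _)
    omega
  -- closed-walk facts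
  have fact0 : ∀ p q : ZMod (4*k), G.Adj u (f p) → G.Adj u (f q) → ∀ m : ℕ,
      (m = (q - p).val ∨ m = (p - q).val) → (2 + m) % 2 = 1 → 2 * k + 1 ≤ 2 + m := by
    intro p q hp hq m hm hodd
    obtain ⟨w, hw⟩ := hwalk2 p q m hm
    have h := key (SimpleGraph.Walk.cons hp (w.concat hq.symm)) ?_
    · rwa [SimpleGraph.Walk.length_cons, SimpleGraph.Walk.length_concat, hw,
        show m + 1 + 1 = 2 + m by omega] at h
    · rw [SimpleGraph.Walk.length_cons, SimpleGraph.Walk.length_concat, hw, Nat.odd_iff]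
      omega
  have fact2 : ∀ p q a b : ZMod (4*k), G.Adj u (f p) → G.Adj u (f q) → G.Adj (f a) (f b) →
      ∀ m1 m2 : ℕ, (m1 = (a - p).val ∨ m1 = (p - a).val) →
      (m2 = (q - b).val ∨ m2 = (b - q).val) →
      (3 + m1 + m2) % 2 = 1 → 2 * k + 1 ≤ 3 + m1 + m2 := by
    intro p q a b hp hq hab m1 m2 hm1 hm2 hodd
    obtain ⟨w1, hw1⟩ := hwalk2 p a m1 hm1
    obtain ⟨w2, hw2⟩ := hwalk2 b q m2 hm2
    have h := key (SimpleGraph.Walk.cons hp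
      (w1.append (SimpleGraph.Walk.cons hab (w2.concat hq.symm)))) ?_
    · rwa [SimpleGraph.Walk.length_cons, SimpleGraph.Walk.length_append,
        SimpleGraph.Walk.length_cons, SimpleGraph.Walk.length_concat, hw1, hw2,
        show m1 + (m2 + 1 + 1) + 1 = 3 + m1 + m2 by omega] at h
    · rw [SimpleGraph.Walk.length_cons, SimpleGraph.Walk.length_append,
        SimpleGraph.Walk.length_cons, SimpleGraph.Walk.length_concat, hw1, hw2, Nat.odd_iff]
      omega
  have fact3 : ∀ p q a b : ZMod (4*k), G.Adj u (f p) → G.Adj u (f q) → G.Adj (f a) (f b) →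
      (3 + min (a - p).val (p - a).val + min (q - b).val (b - q).val) % 2 = 1 →
      2 * k + 1 ≤ 3 + min (a - p).val (p - a).val + min (q - b).val (b - q).val :=
    fun p q a b hp hq hab =>
      fact2 p q a b hp hq hab _ _ (min_choice _ _) (min_choice _ _)
  -- the four neighbours
  obtain ⟨p1, p2, p3, p4, hm1, hm2, hm3, hm4, h12, h13, h14, h23, h24, h34⟩ :=
    four_distinct hu4
  rw [Finset.mem_filter] at hm1 hm2 hm3 hm4
  have hp1 := hm1.2
  have hp2 := hm2.2
  have hp3 := hm3.2
  have hp4 := hm4.2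
  -- diagonal endpoints
  have hb0 : ((2 * k : ℕ) : ZMod (4*k)) = 2 * (k : ZMod (4*k)) := by push_cast; ring
  have hb1 : ((2 * k + 1 : ℕ) : ZMod (4*k)) = 2 * (k : ZMod (4*k)) + 1 := by push_cast; ring
  have hd0' : G.Adj (f 0) (f ((2 * k : ℕ) : ZMod (4*k))) := by rwa [hb0]
  have hd1' : G.Adj (f 1) (f ((2 * k + 1 : ℕ) : ZMod (4*k))) := by rwa [hb1]
  have hz0 : (0 : ZMod (4*k)).val = 0 := ZMod.val_zero
  have hz1 : (1 : ZMod (4*k)).val = 1 := by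
    rw [show (1 : ZMod (4*k)) = ((1 : ℕ) : ZMod (4*k)) by push_cast; ring, ZMod.val_natCast,
      Nat.mod_eq_of_lt (by omega)]
  have hzb0 : ((2 * k : ℕ) : ZMod (4*k)).val = 2 * k := by
    rw [ZMod.val_natCast, Nat.mod_eq_of_lt (by omega)]
  have hzb1 : ((2 * k + 1 : ℕ) : ZMod (4*k)).val = 2 * k + 1 := by
    rw [ZMod.val_natCast, Nat.mod_eq_of_lt (by omega)]
  -- distinctness of values
  have hv12 : p1.val ≠ p2.val := fun h => h12 (ZMod.val_injective _ h)
  have hv13 : p1.val ≠ p3.val := fun h => h13 (ZMod.val_injective _ h)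
  have hv14 : p1.val ≠ p4.val := fun h => h14 (ZMod.val_injective _ h)
  have hv23 : p2.val ≠ p3.val := fun h => h23 (ZMod.val_injective _ h)
  have hv24 : p2.val ≠ p4.val := fun h => h24 (ZMod.val_injective _ h)
  have hv34 : p3.val ≠ p4.val := fun h => h34 (ZMod.val_injective _ h)
  have hl1 := ZMod.val_lt p1
  have hl2 := ZMod.val_lt p2
  have hl3 := ZMod.val_lt p3
  have hl4 := ZMod.val_lt p4
  have K12 := cross_pair k p1.val p2.val _ _ hk hl1 hl2 hv12 (val_sub_char p1 p2) (val_sub_char p2 p1) (fact0 p1 p2 hp1 hp2 _ (Or.inl rfl)) (fact0 p2 p1 hp2 hp1 _ (Or.inl rfl))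
  have K13 := cross_pair k p1.val p3.val _ _ hk hl1 hl3 hv13 (val_sub_char p1 p3) (val_sub_char p3 p1) (fact0 p1 p3 hp1 hp3 _ (Or.inl rfl)) (fact0 p3 p1 hp3 hp1 _ (Or.inl rfl))
  have K14 := cross_pair k p1.val p4.val _ _ hk hl1 hl4 hv14 (val_sub_char p1 p4) (val_sub_char p4 p1) (fact0 p1 p4 hp1 hp4 _ (Or.inl rfl)) (fact0 p4 p1 hp4 hp1 _ (Or.inl rfl))
  have K23 := cross_pair k p2.val p3.val _ _ hk hl2 hl3 hv23 (val_sub_char p2 p3) (val_sub_char p3 p2) (fact0 p2 p3 hp2 hp3 _ (Or.inl rfl)) (fact0 p3 p2 hp3 hp2 _ (Or.inl rfl))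
  have K24 := cross_pair k p2.val p4.val _ _ hk hl2 hl4 hv24 (val_sub_char p2 p4) (val_sub_char p4 p2) (fact0 p2 p4 hp2 hp4 _ (Or.inl rfl)) (fact0 p4 p2 hp4 hp2 _ (Or.inl rfl))
  have K34 := cross_pair k p3.val p4.val _ _ hk hl3 hl4 hv34 (val_sub_char p3 p4) (val_sub_char p4 p3) (fact0 p3 p4 hp3 hp4 _ (Or.inl rfl)) (fact0 p4 p3 hp4 hp3 _ (Or.inl rfl))
  obtain ⟨e2, e3, e4⟩ := phase1 k p1.val p2.val p3.val p4.val hk hl1 hl2 hl3 hl4 hv12 hv13 hv14 hv23 hv24 hv34 K12 K13 K14 K23 K24 K34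
  have e23 : p2.val % 2 = p3.val % 2 := by omega
  have e24 : p2.val % 2 = p4.val % 2 := by omega
  have e34 : p3.val % 2 = p4.val % 2 := by omega
  obtain ⟨r, a1, a2, a3, a4, hr, q1, q2, q3, q4⟩ : ∃ r a1 a2 a3 a4, r ≤ 1 ∧ p1.val = 2*a1 + r ∧ p2.val = 2*a2 + r ∧ p3.val = 2*a3 + r ∧ p4.val = 2*a4 + r := ⟨p1.val % 2, p1.val / 2, p2.val / 2, p3.val / 2, p4.val / 2, by omega, by omega, by omega, by omega, by omega⟩
  have a1l := val_sub_char p1 (0 : ZMod (4*k))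
  have a1r := val_sub_char (0 : ZMod (4*k)) p1
  rw [hz0] at a1l a1r
  have cM0_1 := m0_char k p1.val _ _ hk hl1 a1l a1r
  have b1l := val_sub_char p1 (1 : ZMod (4*k))
  have b1r := val_sub_char (1 : ZMod (4*k)) p1
  rw [hz1] at b1l b1r
  have cM1_1 := m1_char k p1.val _ _ hk hl1 b1l b1r
  have c1l := val_sub_char ((2 * k : ℕ) : ZMod (4*k)) p1
  have c1r := val_sub_char p1 ((2 * k : ℕ) : ZMod (4*k))
  rw [hzb0] at c1l c1r
  have cN0_1 := n0_char k p1.val _ _ hk hl1 c1l c1r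
  have d1l := val_sub_char ((2 * k + 1 : ℕ) : ZMod (4*k)) p1
  have d1r := val_sub_char p1 ((2 * k + 1 : ℕ) : ZMod (4*k))
  rw [hzb1] at d1l d1r
  have cN1_1 := n1_char k p1.val _ _ hk hl1 d1l d1r
  have D_1 := side_char k p1.val _ _ hk hl1 cM0_1 cM1_1
  have S_1 := sideS _ _ _ _ D_1
  have a2l := val_sub_char p2 (0 : ZMod (4*k))
  have a2r := val_sub_char (0 : ZMod (4*k)) p2
  rw [hz0] at a2l a2r
  have cM0_2 := m0_char k p2.val _ _ hk hl2 a2l a2r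
  have b2l := val_sub_char p2 (1 : ZMod (4*k))
  have b2r := val_sub_char (1 : ZMod (4*k)) p2
  rw [hz1] at b2l b2r
  have cM1_2 := m1_char k p2.val _ _ hk hl2 b2l b2r
  have c2l := val_sub_char ((2 * k : ℕ) : ZMod (4*k)) p2
  have c2r := val_sub_char p2 ((2 * k : ℕ) : ZMod (4*k))
  rw [hzb0] at c2l c2r
  have cN0_2 := n0_char k p2.val _ _ hk hl2 c2l c2r
  have d2l := val_sub_char ((2 * k + 1 : ℕ) : ZMod (4*k)) p2
  have d2r := val_sub_char p2 ((2 * k + 1 : ℕ) : ZMod (4*k))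
  rw [hzb1] at d2l d2r
  have cN1_2 := n1_char k p2.val _ _ hk hl2 d2l d2r
  have D_2 := side_char k p2.val _ _ hk hl2 cM0_2 cM1_2
  have S_2 := sideS _ _ _ _ D_2
  have a3l := val_sub_char p3 (0 : ZMod (4*k))
  have a3r := val_sub_char (0 : ZMod (4*k)) p3
  rw [hz0] at a3l a3r
  have cM0_3 := m0_char k p3.val _ _ hk hl3 a3l a3r
  have b3l := val_sub_char p3 (1 : ZMod (4*k))
  have b3r := val_sub_char (1 : ZMod (4*k)) p3
  rw [hz1] at b3l b3r
  have cM1_3 := m1_char k p3.val _ _ hk hl3 b3l b3r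
  have c3l := val_sub_char ((2 * k : ℕ) : ZMod (4*k)) p3
  have c3r := val_sub_char p3 ((2 * k : ℕ) : ZMod (4*k))
  rw [hzb0] at c3l c3r
  have cN0_3 := n0_char k p3.val _ _ hk hl3 c3l c3r
  have d3l := val_sub_char ((2 * k + 1 : ℕ) : ZMod (4*k)) p3
  have d3r := val_sub_char p3 ((2 * k + 1 : ℕ) : ZMod (4*k))
  rw [hzb1] at d3l d3r
  have cN1_3 := n1_char k p3.val _ _ hk hl3 d3l d3r
  have D_3 := side_char k p3.val _ _ hk hl3 cM0_3 cM1_3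
  have S_3 := sideS _ _ _ _ D_3
  have a4l := val_sub_char p4 (0 : ZMod (4*k))
  have a4r := val_sub_char (0 : ZMod (4*k)) p4
  rw [hz0] at a4l a4r
  have cM0_4 := m0_char k p4.val _ _ hk hl4 a4l a4r
  have b4l := val_sub_char p4 (1 : ZMod (4*k))
  have b4r := val_sub_char (1 : ZMod (4*k)) p4
  rw [hz1] at b4l b4r
  have cM1_4 := m1_char k p4.val _ _ hk hl4 b4l b4r
  have c4l := val_sub_char ((2 * k : ℕ) : ZMod (4*k)) p4
  have c4r := val_sub_char p4 ((2 * k : ℕ) : ZMod (4*k))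
  rw [hzb0] at c4l c4r
  have cN0_4 := n0_char k p4.val _ _ hk hl4 c4l c4r
  have d4l := val_sub_char ((2 * k + 1 : ℕ) : ZMod (4*k)) p4
  have d4r := val_sub_char p4 ((2 * k + 1 : ℕ) : ZMod (4*k))
  rw [hzb1] at d4l d4r
  have cN1_4 := n1_char k p4.val _ _ hk hl4 d4l d4r
  have D_4 := side_char k p4.val _ _ hk hl4 cM0_4 cM1_4
  have S_4 := sideS _ _ _ _ D_4
  have T0_12 := spread_step0 k p1.val p2.val _ _ _ hk cM0_1 cM0_2 cN0_2 e2 hl1 hl2 (fact3 p1 p2 (0 : ZMod (4*k)) ((2 * k : ℕ) : ZMod (4*k)) hp1 hp2 hd0')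
  have T1_12 := spread_step1 k p1.val p2.val _ _ _ hk cM1_1 cM1_2 cN1_2 e2 hl1 hl2 (fact3 p1 p2 (1 : ZMod (4*k)) ((2 * k + 1 : ℕ) : ZMod (4*k)) hp1 hp2 hd1')
  have T0_13 := spread_step0 k p1.val p3.val _ _ _ hk cM0_1 cM0_3 cN0_3 e3 hl1 hl3 (fact3 p1 p3 (0 : ZMod (4*k)) ((2 * k : ℕ) : ZMod (4*k)) hp1 hp3 hd0')
  have T1_13 := spread_step1 k p1.val p3.val _ _ _ hk cM1_1 cM1_3 cN1_3 e3 hl1 hl3 (fact3 p1 p3 (1 : ZMod (4*k)) ((2 * k + 1 : ℕ) : ZMod (4*k)) hp1 hp3 hd1')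
  have T0_14 := spread_step0 k p1.val p4.val _ _ _ hk cM0_1 cM0_4 cN0_4 e4 hl1 hl4 (fact3 p1 p4 (0 : ZMod (4*k)) ((2 * k : ℕ) : ZMod (4*k)) hp1 hp4 hd0')
  have T1_14 := spread_step1 k p1.val p4.val _ _ _ hk cM1_1 cM1_4 cN1_4 e4 hl1 hl4 (fact3 p1 p4 (1 : ZMod (4*k)) ((2 * k + 1 : ℕ) : ZMod (4*k)) hp1 hp4 hd1')
  have T0_21 := spread_step0 k p2.val p1.val _ _ _ hk cM0_2 cM0_1 cN0_1 e2.symm hl2 hl1 (fact3 p2 p1 (0 : ZMod (4*k)) ((2 * k : ℕ) : ZMod (4*k)) hp2 hp1 hd0')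
  have T1_21 := spread_step1 k p2.val p1.val _ _ _ hk cM1_2 cM1_1 cN1_1 e2.symm hl2 hl1 (fact3 p2 p1 (1 : ZMod (4*k)) ((2 * k + 1 : ℕ) : ZMod (4*k)) hp2 hp1 hd1')
  have T0_23 := spread_step0 k p2.val p3.val _ _ _ hk cM0_2 cM0_3 cN0_3 e23 hl2 hl3 (fact3 p2 p3 (0 : ZMod (4*k)) ((2 * k : ℕ) : ZMod (4*k)) hp2 hp3 hd0')
  have T1_23 := spread_step1 k p2.val p3.val _ _ _ hk cM1_2 cM1_3 cN1_3 e23 hl2 hl3 (fact3 p2 p3 (1 : ZMod (4*k)) ((2 * k + 1 : ℕ) : ZMod (4*k)) hp2 hp3 hd1')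
  have T0_24 := spread_step0 k p2.val p4.val _ _ _ hk cM0_2 cM0_4 cN0_4 e24 hl2 hl4 (fact3 p2 p4 (0 : ZMod (4*k)) ((2 * k : ℕ) : ZMod (4*k)) hp2 hp4 hd0')
  have T1_24 := spread_step1 k p2.val p4.val _ _ _ hk cM1_2 cM1_4 cN1_4 e24 hl2 hl4 (fact3 p2 p4 (1 : ZMod (4*k)) ((2 * k + 1 : ℕ) : ZMod (4*k)) hp2 hp4 hd1')
  have T0_31 := spread_step0 k p3.val p1.val _ _ _ hk cM0_3 cM0_1 cN0_1 e3.symm hl3 hl1 (fact3 p3 p1 (0 : ZMod (4*k)) ((2 * k : ℕ) : ZMod (4*k)) hp3 hp1 hd0')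
  have T1_31 := spread_step1 k p3.val p1.val _ _ _ hk cM1_3 cM1_1 cN1_1 e3.symm hl3 hl1 (fact3 p3 p1 (1 : ZMod (4*k)) ((2 * k + 1 : ℕ) : ZMod (4*k)) hp3 hp1 hd1')
  have T0_32 := spread_step0 k p3.val p2.val _ _ _ hk cM0_3 cM0_2 cN0_2 e23.symm hl3 hl2 (fact3 p3 p2 (0 : ZMod (4*k)) ((2 * k : ℕ) : ZMod (4*k)) hp3 hp2 hd0')
  have T1_32 := spread_step1 k p3.val p2.val _ _ _ hk cM1_3 cM1_2 cN1_2 e23.symm hl3 hl2 (fact3 p3 p2 (1 : ZMod (4*k)) ((2 * k + 1 : ℕ) : ZMod (4*k)) hp3 hp2 hd1')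
  have T0_34 := spread_step0 k p3.val p4.val _ _ _ hk cM0_3 cM0_4 cN0_4 e34 hl3 hl4 (fact3 p3 p4 (0 : ZMod (4*k)) ((2 * k : ℕ) : ZMod (4*k)) hp3 hp4 hd0')
  have T1_34 := spread_step1 k p3.val p4.val _ _ _ hk cM1_3 cM1_4 cN1_4 e34 hl3 hl4 (fact3 p3 p4 (1 : ZMod (4*k)) ((2 * k + 1 : ℕ) : ZMod (4*k)) hp3 hp4 hd1')
  have T0_41 := spread_step0 k p4.val p1.val _ _ _ hk cM0_4 cM0_1 cN0_1 e4.symm hl4 hl1 (fact3 p4 p1 (0 : ZMod (4*k)) ((2 * k : ℕ) : ZMod (4*k)) hp4 hp1 hd0')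
  have T1_41 := spread_step1 k p4.val p1.val _ _ _ hk cM1_4 cM1_1 cN1_1 e4.symm hl4 hl1 (fact3 p4 p1 (1 : ZMod (4*k)) ((2 * k + 1 : ℕ) : ZMod (4*k)) hp4 hp1 hd1')
  have T0_42 := spread_step0 k p4.val p2.val _ _ _ hk cM0_4 cM0_2 cN0_2 e24.symm hl4 hl2 (fact3 p4 p2 (0 : ZMod (4*k)) ((2 * k : ℕ) : ZMod (4*k)) hp4 hp2 hd0')
  have T1_42 := spread_step1 k p4.val p2.val _ _ _ hk cM1_4 cM1_2 cN1_2 e24.symm hl4 hl2 (fact3 p4 p2 (1 : ZMod (4*k)) ((2 * k + 1 : ℕ) : ZMod (4*k)) hp4 hp2 hd1')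
  have T0_43 := spread_step0 k p4.val p3.val _ _ _ hk cM0_4 cM0_3 cN0_3 e34.symm hl4 hl3 (fact3 p4 p3 (0 : ZMod (4*k)) ((2 * k : ℕ) : ZMod (4*k)) hp4 hp3 hd0')
  have T1_43 := spread_step1 k p4.val p3.val _ _ _ hk cM1_4 cM1_3 cN1_3 e34.symm hl4 hl3 (fact3 p4 p3 (1 : ZMod (4*k)) ((2 * k + 1 : ℕ) : ZMod (4*k)) hp4 hp3 hd1')
  have P12 := pairrel k p1.val p2.val _ _ _ _ r a1 a2 hk hl1 hl2 hr q1 q2 hv12 D_1 D_2 T0_12 T0_21 T1_12 T1_21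
  have P13 := pairrel k p1.val p3.val _ _ _ _ r a1 a3 hk hl1 hl3 hr q1 q3 hv13 D_1 D_3 T0_13 T0_31 T1_13 T1_31
  have P14 := pairrel k p1.val p4.val _ _ _ _ r a1 a4 hk hl1 hl4 hr q1 q4 hv14 D_1 D_4 T0_14 T0_41 T1_14 T1_41
  have P23 := pairrel k p2.val p3.val _ _ _ _ r a2 a3 hk hl2 hl3 hr q2 q3 hv23 D_2 D_3 T0_23 T0_32 T1_23 T1_32
  have P24 := pairrel k p2.val p4.val _ _ _ _ r a2 a4 hk hl2 hl4 hr q2 q4 hv24 D_2 D_4 T0_24 T0_42 T1_24 T1_42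
  have P34 := pairrel k p3.val p4.val _ _ _ _ r a3 a4 hk hl3 hl4 hr q3 q4 hv34 D_3 D_4 T0_34 T0_43 T1_34 T1_43
  exact assembly _ _ _ _ _ _ _ _ S_1 S_2 S_3 S_4 P12 P13 P14 P23 P24 P34
end

section
/- For all integers k ≥ 2 and n, every graph G ∈ 𝒢_{n,k} that is not bipartite contains a cycle of length exactly 2k+1. -/
open SimpleGraph

private lemma path_loop_nil {V : Type*} {G : SimpleGraph V} {v : V} (p : G.Walk v v)
    (hp : p.IsPath) : p.length = 0 := by
  cases p with
  | nil => rfl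
  | cons h q =>
    rw [Walk.cons_isPath_iff] at hp
    exact absurd q.end_mem_support hp.2

private lemma path_edge_start {V : Type*} {G : SimpleGraph V} {u v x : V} (p : G.Walk u x)
    (hp : p.IsPath) (he : s(u, v) ∈ p.edges) :
    ∃ (h : G.Adj u v) (q : G.Walk v x), p = Walk.cons h q ∧ s(u, v) ∉ q.edges := by
  cases p with
  | nil => simp at he
  | @cons _ y _ h' q =>
    rw [Walk.cons_isPath_iff] at hp
    rw [Walk.edges_cons, List.mem_cons] at he
    by_cases hy : y = v
    · subst hy
      exact ⟨h', q, rfl, fun hq => hp.2 (Walk.fst_mem_support_of_mem_edges q hq)⟩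
    · exfalso
      rcases he with h1 | h1
      · exact hy (Sym2.congr_right.mp h1).symm
      · exact hp.2 (Walk.fst_mem_support_of_mem_edges q h1)

private lemma length_rotate' {V : Type*} {G : SimpleGraph V} [DecidableEq V] {u v : V}
    (c : G.Walk v v) (h : u ∈ c.support) : (c.rotate u h).length = c.length := by
  have h1 := congrArg Walk.length (c.take_spec h)
  rw [Walk.length_append] at h1
  simp only [Walk.rotate, Walk.length_append]
  omega

private lemma cycle_split_at {V : Type*} {G : SimpleGraph V} {u v : V} (c : G.Walk u u)
    (hc : c.IsCycle) (he : s(u, v) ∈ c.edges) :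
    ∃ p : G.Walk u v, p.length + 1 = c.length ∧ s(u, v) ∉ p.edges := by
  classical
  cases c with
  | nil => simp at he
  | @cons _ y _ h' q =>
    obtain ⟨hqpath, hqe⟩ := (Walk.cons_isCycle_iff q h').mp hc
    rw [Walk.edges_cons, List.mem_cons] at he
    by_cases hy : y = v
    · subst hy
      refine ⟨q.reverse, by simp, ?_⟩
      rw [Walk.edges_reverse, List.mem_reverse]
      exact hqe
    · have heq : s(u, v) ∈ q.edges := by
        rcases he with h1 | h1
        · exact absurd (Sym2.congr_right.mp h1).symm hy
        · exact h1
      have heqr : s(u, v) ∈ q.reverse.edges := by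
        rw [Walk.edges_reverse, List.mem_reverse]; exact heq
      obtain ⟨hadj, r, hqr, hre⟩ := path_edge_start q.reverse hqpath.reverse heqr
      refine ⟨Walk.cons h' r.reverse, ?_, ?_⟩
      · have hlq := congrArg Walk.length hqr
        rw [Walk.length_reverse, Walk.length_cons] at hlq
        rw [Walk.length_cons, Walk.length_cons, Walk.length_reverse]
        omega
      · rw [Walk.edges_cons, List.mem_cons]
        rintro (h1 | h1)
        · exact hy (Sym2.congr_right.mp h1).symm
        · rw [Walk.edges_reverse, List.mem_reverse] at h1
          exact hre h1

private lemma cycle_split {V : Type*} {G : SimpleGraph V} {a u v : V} (c : G.Walk a a)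
    (hc : c.IsCycle) (he : s(u, v) ∈ c.edges) :
    ∃ p : G.Walk u v, p.length + 1 = c.length ∧ s(u, v) ∉ p.edges := by
  classical
  have hu : u ∈ c.support := c.fst_mem_support_of_mem_edges he
  have hrotlen := length_rotate' c hu
  have hcy : (c.rotate u hu).IsCycle := hc.rotate hu
  have he₂ : s(u, v) ∈ (c.rotate u hu).edges := (c.rotate_edges u hu).mem_iff.mpr he
  obtain ⟨p, hp1, hp2⟩ := cycle_split_at (c.rotate u hu) hcy he₂
  exact ⟨p, by omega, hp2⟩

private lemma odd_walk_cycle {V : Type*} {G : SimpleGraph V} :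
    ∀ (m : ℕ) {v : V} (p : G.Walk v v), p.length ≤ m → Odd p.length →
      ∃ (w : V) (c : G.Walk w w), c.IsCycle ∧ Odd c.length ∧ c.length ≤ p.length := by
  classical
  intro m
  induction m with
  | zero =>
    intro v p hl ho
    rw [Nat.odd_iff] at ho
    omega
  | succ m ih =>
    intro v p hl ho
    cases p with
    | nil => rw [Nat.odd_iff] at ho; simp at ho
    | @cons _ x _ h q =>
      by_cases hnd : q.support.Nodup
      · by_cases he : s(v, x) ∈ q.edges
        · exfalso
          have hq : q.IsPath := (Walk.isPath_def q).mpr hnd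
          obtain ⟨hadj, r, hqr, -⟩ := path_edge_start q hq (by rw [Sym2.eq_swap]; exact he)
          have hr : r.IsPath := by
            rw [hqr, Walk.cons_isPath_iff] at hq
            exact hq.1
          have h0 : r.length = 0 := path_loop_nil r hr
          have hql : q.length = 1 := by
            have := congrArg Walk.length hqr
            rw [Walk.length_cons] at this
            omega
          rw [Nat.odd_iff, Walk.length_cons, hql] at ho
          omega
        · refine ⟨v, Walk.cons h q, ?_, ho, le_refl _⟩
          exact (Walk.cons_isCycle_iff q h).mpr ⟨(Walk.isPath_def q).mpr hnd, he⟩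
      · obtain ⟨wd, hdup⟩ := List.exists_duplicate_iff_not_nodup.mpr hnd
        have hw2 : 2 ≤ q.support.count wd := List.duplicate_iff_two_le_count.mp hdup
        have hwq : wd ∈ q.support := by
          rw [← List.count_pos_iff]
          omega
        have hwp : wd ∈ (Walk.cons h q).support := by
          rw [Walk.support_cons]
          exact List.mem_cons_of_mem _ hwq
        have hrl := length_rotate' (Walk.cons h q) hwp
        have hrot := Walk.support_rotate (Walk.cons h q) wd hwp
        cases hP : (Walk.cons h q).rotate wd hwp with
        | nil =>
          exfalso
          rw [hP] at hrl
          rw [Walk.length_nil, Walk.length_cons] at hrl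
          omega
        | @cons _ y _ h' q' =>
          rw [hP] at hrl hrot
          rw [Walk.length_cons, Walk.length_cons] at hrl
          have htail : (Walk.cons h' q').support.tail = q'.support := by
            rw [Walk.support_cons, List.tail_cons]
          rw [htail] at hrot
          have hcount' : 2 ≤ q'.support.count wd := by
            rw [hrot.perm.count_eq]
            rw [Walk.support_cons, List.tail_cons]
            exact hw2
          have hmem : wd ∈ q'.support := by
            rw [← List.count_pos_iff]
            omega
          have hcount1 : (q'.takeUntil wd hmem).support.count wd = 1 :=
            q'.count_support_takeUntil_eq_one hmem
          have hq'supp : q'.support =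
              (q'.takeUntil wd hmem).support ++ (q'.dropUntil wd hmem).support.tail := by
            conv_lhs => rw [← q'.take_spec hmem]
            exact Walk.support_append _ _
          have hcnt2 : 1 ≤ ((q'.dropUntil wd hmem).support.tail).count wd := by
            rw [hq'supp, List.count_append] at hcount'
            omega
          have htlen : (q'.dropUntil wd hmem).support.tail.length
              = (q'.dropUntil wd hmem).length := by
            rw [List.length_tail, Walk.length_support]
            omega
          have hs2pos : 0 < (q'.dropUntil wd hmem).length := by
            rcases Nat.eq_zero_or_pos (q'.dropUntil wd hmem).length with h0 | h0
            · exfalso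
              have hnil : (q'.dropUntil wd hmem).support.tail = [] :=
                List.length_eq_zero_iff.mp (by rw [htlen, h0])
              rw [hnil] at hcnt2
              simp at hcnt2
            · exact h0
          have hlen12 := congrArg Walk.length (q'.take_spec hmem)
          rw [Walk.length_append] at hlen12
          have hC1len : (Walk.cons h' (q'.takeUntil wd hmem)).length
              = (q'.takeUntil wd hmem).length + 1 := Walk.length_cons _ _
          have hplen : (Walk.cons h q).length = q.length + 1 := Walk.length_cons _ _
          have hol := Nat.odd_iff.mp ho
          by_cases hC1 : Odd (Walk.cons h' (q'.takeUntil wd hmem)).length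
          · obtain ⟨wf, cf, h1f, h2f, h3f⟩ :=
              ih (Walk.cons h' (q'.takeUntil wd hmem)) (by omega) hC1
            exact ⟨wf, cf, h1f, h2f, by omega⟩
          · have hC2 : Odd (q'.dropUntil wd hmem).length := by
              rw [Nat.odd_iff] at hC1 ⊢
              omega
            obtain ⟨wf, cf, h1f, h2f, h3f⟩ := ih (q'.dropUntil wd hmem) (by omega) hC2
            exact ⟨wf, cf, h1f, h2f, by omega⟩

private lemma colorable_of_all_even {V : Type*} {G : SimpleGraph V}
    (h : ∀ (v : V) (p : G.Walk v v), Even p.length) : G.Colorable 2 := by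
  classical
  have hre : ∀ v : V, G.Reachable (G.connectedComponentMk v).out v := by
    intro v
    have h1 : G.connectedComponentMk ((G.connectedComponentMk v).out)
        = G.connectedComponentMk v := Quot.out_eq _
    exact SimpleGraph.ConnectedComponent.eq.mp h1
  have w : ∀ v : V, G.Walk (G.connectedComponentMk v).out v := fun v =>
    Classical.choice (hre v)
  refine ⟨SimpleGraph.Coloring.mk (fun v => (⟨(w v).length % 2, by omega⟩ : Fin 2)) ?_⟩
  intro u v huv hEq
  rw [Fin.mk.injEq] at hEq
  have hmk : G.connectedComponentMk u = G.connectedComponentMk v :=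
    SimpleGraph.ConnectedComponent.eq.mpr huv.reachable
  have hout : (G.connectedComponentMk v).out = (G.connectedComponentMk u).out := by rw [hmk]
  have hW := h _ ((w u).append (Walk.cons huv (((w v).copy hout rfl).reverse)))
  rw [Walk.length_append, Walk.length_cons, Walk.length_reverse, Walk.length_copy] at hW
  rw [Nat.even_iff] at hW
  omega

theorem stmt_11 {V : Type*} [Fintype V] (k n : ℕ) (hk : 2 ≤ k)
    (G : SimpleGraph V) [DecidableRel G.Adj] (hn : Fintype.card V = n)
    (hdeg : 3 * (n : ℝ) / (4 * k) < G.minDegree)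
    (hgirth : ∀ (v : V) (c : G.Walk v v), c.IsCycle → Odd c.length → 2 * k + 1 ≤ c.length)
    (hmax : ∀ u v : V, u ≠ v → ¬ G.Adj u v →
      ∃ (w : V) (c : (G ⊔ SimpleGraph.fromEdgeSet {s(u, v)}).Walk w w),
        c.IsCycle ∧ Odd c.length ∧ c.length ≤ 2 * k - 1)
    (hnotbip : ¬ G.Colorable 2) :
    ∃ (v : V) (c : G.Walk v v), c.IsCycle ∧ c.length = 2 * k + 1 := by
  classical
  have hex : ∃ (v : V) (p : G.Walk v v), Odd p.length := by
    by_contra hcon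
    push_neg at hcon
    exact hnotbip (colorable_of_all_even (fun v p => Nat.not_odd_iff_even.mp (hcon v p)))
  obtain ⟨v₀, p₀, hodd₀⟩ := hex
  obtain ⟨w₀, c₀, hc₀, ho₀, -⟩ := odd_walk_cycle p₀.length p₀ le_rfl hodd₀
  have hP : ∃ ℓ, ∃ (w : V) (c : G.Walk w w), c.IsCycle ∧ Odd c.length ∧ c.length = ℓ :=
    ⟨c₀.length, w₀, c₀, hc₀, ho₀, rfl⟩
  set ℓ := Nat.find hP with hℓdef
  obtain ⟨a, c, hc, hco, hclen⟩ := Nat.find_spec hP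
  rw [← hℓdef] at hclen
  have hmin : ∀ (w : V) (d : G.Walk w w), d.IsCycle → Odd d.length → ℓ ≤ d.length := by
    intro w d h1 h2
    by_contra hlt
    exact Nat.find_min hP (by omega) ⟨w, d, h1, h2, rfl⟩
  have hoddℓ : Odd ℓ := hclen ▸ hco
  have hg : 2 * k + 1 ≤ ℓ := by rw [← hclen]; exact hgirth a c hc hco
  by_cases hcase : ℓ = 2 * k + 1
  · exact ⟨a, c, hc, by omega⟩
  have hge : 2 * k + 3 ≤ ℓ := by
    rcases hoddℓ with ⟨t, ht⟩
    omega
  cases c with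
  | nil =>
    rw [Walk.length_nil] at hclen
    omega
  | @cons _ b1 _ h1 c1 =>
    cases c1 with
    | nil =>
      rw [Walk.length_cons, Walk.length_nil] at hclen
      omega
    | @cons _ b2 _ h2 c2 =>
      cases c2 with
      | nil =>
        rw [Walk.length_cons, Walk.length_cons, Walk.length_nil] at hclen
        omega
      | @cons _ b3 _ h3 d =>
        have hdlen : d.length + 1 + 1 + 1 = ℓ := by
          simpa only [Walk.length_cons] using hclen
        have hnd : d.support.Nodup := by
          have hnd0 := hc.support_nodup
          simp only [Walk.support_cons, List.tail_cons] at hnd0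
          rw [List.nodup_cons, List.nodup_cons] at hnd0
          exact hnd0.2.2
        have haneq : a ≠ b3 := by
          intro hav
          have hdp : (d.copy rfl hav).IsPath := by
            rw [Walk.isPath_copy]
            exact (Walk.isPath_def d).mpr hnd
          have h0 : (d.copy rfl hav).length = 0 := path_loop_nil _ hdp
          rw [Walk.length_copy] at h0
          omega
        have hnadj : ¬ G.Adj a b3 := by
          intro hadj
          have hW : Odd (Walk.cons hadj d).length := by
            rw [Walk.length_cons, Nat.odd_iff]
            rw [Nat.odd_iff] at hoddℓ
            omega
          obtain ⟨wf, cf, h1f, h2f, h3f⟩ := odd_walk_cycle _ (Walk.cons hadj d) le_rfl hW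
          have hmf := hmin wf cf h1f h2f
          rw [Walk.length_cons] at h3f
          omega
        obtain ⟨w', c', hc', hco', hlen'⟩ := hmax a b3 haneq hnadj
        by_cases hmem : s(a, b3) ∈ c'.edges
        · obtain ⟨p, hplen, hpedge⟩ := cycle_split c' hc' hmem
          have hsub : ∀ e ∈ p.edges, e ∈ G.edgeSet := by
            intro e hee
            have he1 := p.edges_subset_edgeSet hee
            rw [SimpleGraph.edgeSet_sup] at he1
            rcases he1 with he1 | he1
            · exact he1
            · rw [SimpleGraph.edgeSet_fromEdgeSet] at he1
              exact absurd (Set.mem_singleton_iff.mp he1.1 ▸ hee) hpedge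
          have hWodd : Odd (Walk.cons h1 (Walk.cons h2 (Walk.cons h3
              (p.transfer G hsub).reverse))).length := by
            simp only [Walk.length_cons, Walk.length_reverse, Walk.length_transfer]
            rw [Nat.odd_iff]
            rw [Nat.odd_iff] at hco'
            omega
          obtain ⟨wf, cf, h1f, h2f, h3f⟩ := odd_walk_cycle _ _ le_rfl hWodd
          have hlow := hgirth wf cf h1f h2f
          simp only [Walk.length_cons, Walk.length_reverse, Walk.length_transfer] at h3f
          exact ⟨wf, cf, h1f, by omega⟩
        · have hsub : ∀ e ∈ c'.edges, e ∈ G.edgeSet := by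
            intro e hee
            have he1 := c'.edges_subset_edgeSet hee
            rw [SimpleGraph.edgeSet_sup] at he1
            rcases he1 with he1 | he1
            · exact he1
            · rw [SimpleGraph.edgeSet_fromEdgeSet] at he1
              exact absurd (Set.mem_singleton_iff.mp he1.1 ▸ hee) hmem
          have hcG : (c'.transfer G hsub).IsCycle := by
            rw [Walk.isCycle_def] at hc' ⊢
            refine ⟨?_, ?_, ?_⟩
            · rw [Walk.isTrail_def, Walk.edges_transfer]
              exact hc'.1.edges_nodup
            · intro h0
              have hl0 := congrArg Walk.length h0
              rw [Walk.length_transfer, Walk.length_nil] at hl0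
              rw [Nat.odd_iff] at hco'
              omega
            · rw [Walk.support_transfer]
              exact hc'.2.2
          have hbig := hgirth w' (c'.transfer G hsub) hcG
            (by rw [Walk.length_transfer]; exact hco')
          rw [Walk.length_transfer] at hbig
          omega
end

section
/- Let k ≥ 2, let G be a graph with odd girth at least 2k+1, let C be a cycle of length 2k+1 in G, and let x be a vertex of G not on C. Then x has at most two neighbours on C, and if x has exactly two neighbours on C, then these two neighbours are at distance two along C. -/
open SimpleGraph

private lemma walk_support_eq_map {V : Type*} {G : SimpleGraph V} {u v : V} (p : G.Walk u v) :
    p.support = (List.range (p.length + 1)).map p.getVert := by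
  induction p with
  | nil => simp [List.range_succ]
  | cons h q ih =>
    rw [Walk.support_cons, ih, Walk.length_cons]
    conv_rhs => rw [List.range_succ_eq_map]
    rw [List.map_cons, List.map_map]
    simp [Function.comp_def, Walk.getVert_cons_succ]

/-- Vertices at positions `1..length` of a cycle are pairwise distinct. -/
private lemma cyc_inj {V : Type*} {G : SimpleGraph V} {v : V} {c : G.Walk v v}
    (hc : c.IsCycle) {a b : ℕ} (ha : 1 ≤ a) (ha' : a ≤ c.length) (hb : 1 ≤ b)
    (hb' : b ≤ c.length) (h : c.getVert a = c.getVert b) : a = b := by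
  have htail : c.support.tail.Nodup := hc.2
  have htail_eq : c.support.tail = (List.range c.length).map (fun i => c.getVert (i + 1)) := by
    rw [walk_support_eq_map c, List.range_succ_eq_map]
    simp [List.map_map, Function.comp_def]
  rw [htail_eq] at htail
  have h1 : a - 1 + 1 = a := by omega
  have h2 : b - 1 + 1 = b := by omega
  have hinj := List.inj_on_of_nodup_map htail
    (show a - 1 ∈ List.range c.length by rw [List.mem_range]; omega)
    (show b - 1 ∈ List.range c.length by rw [List.mem_range]; omega)
    (by rw [h1, h2]; exact h)
  omega

/-- An "arc" of a walk: a sub-walk between positions `m` and `m + d`. -/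
private lemma exists_arc {V : Type*} {G : SimpleGraph V} {u v : V} (p : G.Walk u v)
    (m d : ℕ) (h : m + d ≤ p.length) :
    ∃ q : G.Walk (p.getVert m) (p.getVert (m + d)),
      q.length = d ∧ q.support = (List.range (d + 1)).map (fun i => p.getVert (m + i)) := by
  induction d with
  | zero => exact ⟨Walk.nil, by simp, by simp [List.range_succ]⟩
  | succ d ih =>
    obtain ⟨q, hql, hqs⟩ := ih (by omega)
    refine ⟨q.concat (p.adj_getVert_succ (i := m + d) (by omega)), ?_, ?_⟩
    · simp [Walk.length_concat, hql]
    · rw [Walk.support_concat, hqs]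
      conv_rhs => rw [List.range_succ]
      simp

/-- An "arc" of a walk: a sub-walk between positions `m` and `n`. -/
private lemma exists_arc' {V : Type*} {G : SimpleGraph V} {u v : V} (p : G.Walk u v)
    {m n : ℕ} (hmn : m ≤ n) (h : n ≤ p.length) :
    ∃ q : G.Walk (p.getVert m) (p.getVert n),
      q.length = n - m ∧ q.support = (List.range (n - m + 1)).map (fun i => p.getVert (m + i)) := by
  obtain ⟨q, h1, h2⟩ := exists_arc p m (n - m) (by omega)
  have e : m + (n - m) = n := by omega
  exact ⟨q.copy rfl (by rw [e]), by simpa using h1, by simpa using h2⟩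

/-- Build a cycle from a path plus an apex vertex adjacent to both ends. -/
private lemma apex_cycle {V : Type*} {G : SimpleGraph V} [DecidableEq V] {x a b : V}
    (p : G.Walk a b) (hp : p.IsPath) (hxp : x ∉ p.support)
    (ha : G.Adj x a) (hb : G.Adj x b) (hab : a ≠ b) :
    ∃ w : G.Walk x x, w.IsCycle ∧ w.length = p.length + 2 := by
  refine ⟨Walk.cons ha (p.concat hb.symm), ?_, by simp [Walk.length_concat]⟩
  rw [Walk.cons_isCycle_iff]
  constructor
  · rw [Walk.isPath_def, Walk.support_concat, List.nodup_append]
    refine ⟨hp.support_nodup, List.nodup_singleton x, ?_⟩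
    intro y hy z hy' hyz
    subst hyz
    simp only [List.mem_singleton] at hy'
    subst hy'
    exact hxp hy
  · rw [Walk.edges_concat, List.concat_eq_append]
    intro hmem
    rcases List.mem_append.mp hmem with hmem | hmem
    · exact hxp (p.fst_mem_support_of_mem_edges hmem)
    · rw [List.mem_singleton, Sym2.eq_iff] at hmem
      rcases hmem with ⟨hxb, hax⟩ | ⟨-, hab'⟩
      · exact hxp (hxb ▸ p.end_mem_support)
      · exact hab hab'

private lemma pair_dist {V : Type*} [DecidableEq V] (k : ℕ) (hk : 2 ≤ k)
    (G : SimpleGraph V)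
    (hgirth : ∀ (v : V) (w : G.Walk v v), w.IsCycle → Odd w.length → 2 * k + 1 ≤ w.length)
    (v : V) (c : G.Walk v v) (hc : c.IsCycle) (hlen : c.length = 2 * k + 1)
    (x : V) (hx : x ∉ c.support)
    (i j : ℕ) (hij : i < j) (hj : j ≤ 2 * k)
    (hai : G.Adj x (c.getVert i)) (haj : G.Adj x (c.getVert j)) :
    j - i = 2 ∨ j - i = 2 * k - 1 := by
  have inj2 : ∀ a b : ℕ, 1 ≤ a → a ≤ 2 * k + 1 → 1 ≤ b → b ≤ 2 * k + 1 →
      c.getVert a = c.getVert b → a = b := by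
    intro a b h1 h2 h3 h4 h
    exact cyc_inj hc h1 (by omega) h3 (by omega) h
  have inj1 : ∀ a b : ℕ, a ≤ 2 * k → b ≤ 2 * k → c.getVert a = c.getVert b → a = b := by
    intro a b ha hb h
    rcases Nat.eq_zero_or_pos a with rfl | hapos
    · rcases Nat.eq_zero_or_pos b with rfl | hbpos
      · rfl
      · exfalso
        have hv : c.getVert (2 * k + 1) = c.getVert b := by
          refine Eq.trans ?_ (Eq.trans c.getVert_zero.symm h)
          rw [← hlen]; exact c.getVert_length
        have := inj2 (2 * k + 1) b (by omega) le_rfl hbpos (by omega) hv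
        omega
    · rcases Nat.eq_zero_or_pos b with rfl | hbpos
      · exfalso
        have hv : c.getVert a = c.getVert (2 * k + 1) := by
          refine Eq.trans (Eq.trans h c.getVert_zero) ?_
          rw [← hlen]; exact c.getVert_length.symm
        have := inj2 a (2 * k + 1) hapos (by omega) (by omega) le_rfl hv
        omega
      · exact inj2 a b hapos (by omega) hbpos (by omega) h
  have hmemsup : ∀ n : ℕ, n ≤ c.length → c.getVert n ∈ c.support := fun n hn =>
    Walk.mem_support_iff_exists_getVert.mpr ⟨n, rfl, hn⟩
  have hne : c.getVert i ≠ c.getVert j := fun h => by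
    have := inj1 i j (by omega) hj h; omega
  rcases Nat.even_or_odd (j - i) with hpar | hpar
  · -- j - i even : use the long arc (through v), of length 2k+1-(j-i)
    obtain ⟨q2, hq2l, hq2s⟩ := exists_arc' c (show j ≤ 2 * k + 1 by omega) (by omega)
    obtain ⟨q3, hq3l, hq3s⟩ := exists_arc' c (show 0 ≤ i by omega) (by omega)
    simp only [Nat.sub_zero, Nat.zero_add] at hq3l hq3s
    have ev : c.getVert (2 * k + 1) = c.getVert 0 := by
      rw [c.getVert_zero, ← hlen]; exact c.getVert_length
    let q3' : G.Walk (c.getVert (2 * k + 1)) (c.getVert i) := q3.copy ev.symm rfl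
    let w2 : G.Walk (c.getVert j) (c.getVert i) := q2.append q3'
    have hw2l : w2.length = 2 * k + 1 - j + i := by
      simp only [w2, Walk.length_append, hq2l, q3', Walk.length_copy, hq3l]
    have hw2s : w2.support = (List.range (2 * k + 1 - j + 1)).map (fun t => c.getVert (j + t))
        ++ (List.range i).map (fun t => c.getVert (t + 1)) := by
      have htl : q3.support.tail = (List.range i).map (fun t => c.getVert (t + 1)) := by
        rw [hq3s, List.range_succ_eq_map]
        simp [List.map_map, Function.comp_def]
      simp only [w2, Walk.support_append, q3', Walk.support_copy, hq2s, htl]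
    have hw2path : w2.IsPath := by
      rw [Walk.isPath_def, hw2s, List.nodup_append]
      refine ⟨?_, ?_, ?_⟩
      · refine List.Nodup.map_on ?_ List.nodup_range
        intro s hs t ht hst
        simp only [List.mem_range] at hs ht
        have := inj2 (j + s) (j + t) (by omega) (by omega) (by omega) (by omega) hst
        omega
      · refine List.Nodup.map_on ?_ List.nodup_range
        intro s hs t ht hst
        simp only [List.mem_range] at hs ht
        have := inj2 (s + 1) (t + 1) (by omega) (by omega) (by omega) (by omega) hst
        omega
      · intro y hy z hy' hyz
        subst hyz
        simp only [List.mem_map, List.mem_range] at hy hy'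
        obtain ⟨s, hs, rfl⟩ := hy
        obtain ⟨t, ht, hts⟩ := hy'
        have := inj2 (t + 1) (j + s) (by omega) (by omega) (by omega) (by omega) hts
        omega
    have hxw2 : x ∉ w2.support := by
      rw [hw2s]
      intro hmem
      rcases List.mem_append.mp hmem with hmem | hmem <;>
      · simp only [List.mem_map, List.mem_range] at hmem
        obtain ⟨t, ht, hteq⟩ := hmem
        exact hx (hteq ▸ hmemsup _ (by omega))
    obtain ⟨w, hwcyc, hwl⟩ := apex_cycle w2 hw2path hxw2 haj hai hne.symm
    obtain ⟨t, ht⟩ := hpar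
    have hodd : Odd w.length := by
      refine ⟨k + 1 - t, ?_⟩
      rw [hwl, hw2l]
      omega
    have := hgirth x w hwcyc hodd
    rw [hwl, hw2l] at this
    omega
  · -- j - i odd : use the short arc, of length j - i
    obtain ⟨q, hql, hqs⟩ := exists_arc' c (show i ≤ j by omega) (by omega)
    have hqpath : q.IsPath := by
      rw [Walk.isPath_def, hqs]
      refine List.Nodup.map_on ?_ List.nodup_range
      intro s hs t ht hst
      simp only [List.mem_range] at hs ht
      have := inj1 (i + s) (i + t) (by omega) (by omega) hst
      omega
    have hxq : x ∉ q.support := by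
      rw [hqs]
      intro hmem
      simp only [List.mem_map, List.mem_range] at hmem
      obtain ⟨t, ht, hteq⟩ := hmem
      exact hx (hteq ▸ hmemsup _ (by omega))
    obtain ⟨w, hwcyc, hwl⟩ := apex_cycle q hqpath hxq hai haj hne
    obtain ⟨t, ht⟩ := hpar
    have hodd : Odd w.length := ⟨t + 1, by rw [hwl, hql]; omega⟩
    have := hgirth x w hwcyc hodd
    rw [hwl, hql] at this
    omega

theorem stmt_12 {V : Type*} [DecidableEq V] (k : ℕ) (hk : 2 ≤ k)
    (G : SimpleGraph V)
    (hgirth : ∀ (v : V) (w : G.Walk v v), w.IsCycle → Odd w.length → 2 * k + 1 ≤ w.length)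
    (v : V) (c : G.Walk v v) (hc : c.IsCycle) (hlen : c.length = 2 * k + 1)
    (x : V) (hx : x ∉ c.support) :
    Set.ncard {i : Fin (2 * k + 1) | G.Adj x (c.getVert i)} ≤ 2 ∧
      ∀ i j : Fin (2 * k + 1), i ≠ j →
        G.Adj x (c.getVert i) → G.Adj x (c.getVert j) →
        ((i : ℤ) - (j : ℤ)) % (2 * k + 1) = 2 ∨
        ((i : ℤ) - (j : ℤ)) % (2 * k + 1) = 2 * k - 1 := by
  have key := pair_dist k hk G hgirth v c hc hlen x hx
  constructor
  · by_contra hcard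
    push_neg at hcard
    obtain ⟨t, hts, htc⟩ := Set.exists_subset_card_eq (show 3 ≤ _ from hcard)
    rw [Set.ncard_eq_three] at htc
    obtain ⟨a, b, e, hab, hae, hbe, rfl⟩ := htc
    have ha : G.Adj x (c.getVert a) := hts (by simp)
    have hb : G.Adj x (c.getVert b) := hts (by simp)
    have he : G.Adj x (c.getVert e) := hts (by simp)
    have key3 : ∀ p q r : Fin (2 * k + 1), G.Adj x (c.getVert p) → G.Adj x (c.getVert q) →
        G.Adj x (c.getVert r) → (p : ℕ) < (q : ℕ) → (q : ℕ) < (r : ℕ) → False := by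
      intro p q r hp hq hr h1 h2
      have hr' := r.isLt
      have hq' := q.isLt
      have d1 := key p q h1 (by omega) hp hq
      have d2 := key q r h2 (by omega) hq hr
      have d3 := key p r (by omega) (by omega) hp hr
      omega
    have hne1 : (a : ℕ) ≠ (b : ℕ) := fun h => hab (Fin.ext h)
    have hne2 : (a : ℕ) ≠ (e : ℕ) := fun h => hae (Fin.ext h)
    have hne3 : (b : ℕ) ≠ (e : ℕ) := fun h => hbe (Fin.ext h)
    rcases lt_trichotomy (a : ℕ) (b : ℕ) with h1 | h1 | h1
    · rcases lt_trichotomy (b : ℕ) (e : ℕ) with h2 | h2 | h2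
      · exact key3 a b e ha hb he h1 h2
      · exact hne3 h2
      · rcases lt_trichotomy (a : ℕ) (e : ℕ) with h3 | h3 | h3
        · exact key3 a e b ha he hb h3 h2
        · exact hne2 h3
        · exact key3 e a b he ha hb h3 h1
    · exact hne1 h1
    · rcases lt_trichotomy (a : ℕ) (e : ℕ) with h2 | h2 | h2
      · exact key3 b a e hb ha he h1 h2
      · exact hne2 h2
      · rcases lt_trichotomy (b : ℕ) (e : ℕ) with h3 | h3 | h3
        · exact key3 b e a hb he ha h3 h2
        · exact hne3 h3
        · exact key3 e b a he hb ha h3 h1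
  · intro i j hij hadi hadj
    have hi := i.isLt
    have hj := j.isLt
    rcases lt_trichotomy (j : ℕ) (i : ℕ) with h1 | h1 | h1
    · have hd := key j i h1 (by omega) hadj hadi
      have hval : ((i : ℤ) - (j : ℤ)) = (((i : ℕ) - (j : ℕ) : ℕ) : ℤ) := by omega
      rw [hval, Int.emod_eq_of_lt (by omega) (by omega)]
      rcases hd with hd | hd
      · left; omega
      · right; omega
    · exact absurd (Fin.ext h1.symm) hij
    · have hd := key i j h1 (by omega) hadi hadj
      rcases hd with hd | hd
      · right
        have hval : ((i : ℤ) - (j : ℤ)) = (2 * (k : ℤ) - 1) + (2 * (k : ℤ) + 1) * (-1) := by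
          omega
        rw [hval, Int.add_mul_emod_self_left, Int.emod_eq_of_lt (by omega) (by omega)]
      · left
        have hval : ((i : ℤ) - (j : ℤ)) = (2 : ℤ) + (2 * (k : ℤ) + 1) * (-1) := by
          omega
        rw [hval, Int.add_mul_emod_self_left, Int.emod_eq_of_lt (by omega) (by omega)]
end

section
/- For every integer k ≥ 2, the Möbius ladder M_{4k} is not homomorphic to the cycle C_{2k+1} of length 2k+1. -/
/-- The Möbius ladder `M_{4k}`: the cycle of length `4k` on `ZMod (4k)` together with
all diagonals, i.e. chords joining vertices at distance `2k` along the cycle. -/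
def mobiusLadder (k : ℕ) : SimpleGraph (ZMod (4 * k)) :=
  SimpleGraph.fromRel fun i j => i - j = 1 ∨ i - j = (2 * k : ℕ)

/-- Arithmetic helper: an even integer `S` with `|S| ≤ 2k` congruent to `±1` mod `2k+1`
must equal `±2k`. -/
lemma windowSum (k : ℕ) (hk : 2 ≤ k) (S : ℤ) (hpar : S % 2 = 0)
    (hb1 : -(2 * (k : ℤ)) ≤ S) (hb2 : S ≤ 2 * (k : ℤ))
    (hd : (2 * (k : ℤ) + 1) ∣ S - 1 ∨ (2 * (k : ℤ) + 1) ∣ S + 1) :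
    S = 2 * (k : ℤ) ∨ S = -(2 * (k : ℤ)) := by
  have hk' : (2 : ℤ) ≤ (k : ℤ) := by exact_mod_cast hk
  rcases hd with ⟨c, hc⟩ | ⟨c, hc⟩
  · have hc0 : c = 0 ∨ c = -1 ∨ c = 1 := by
      rcases le_or_gt c (-2) with h | h
      · exfalso; nlinarith
      rcases le_or_gt 2 c with h' | h'
      · exfalso; nlinarith
      omega
    rcases hc0 with rfl | rfl | rfl
    · exfalso; simp at hc; omega
    · right; linarith
    · exfalso; nlinarith
  · have hc0 : c = 0 ∨ c = -1 ∨ c = 1 := by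
      rcases le_or_gt c (-2) with h | h
      · exfalso; nlinarith
      rcases le_or_gt 2 c with h' | h'
      · exfalso; nlinarith
      omega
    rcases hc0 with rfl | rfl | rfl
    · exfalso; simp at hc; omega
    · exfalso; nlinarith
    · left; linarith

theorem stmt_14 (k : ℕ) (hk : 2 ≤ k) :
    ¬ Nonempty (mobiusLadder k →g SimpleGraph.cycleGraph (2 * k + 1)) := by
  rintro ⟨φ⟩
  haveI : NeZero (4 * k) := ⟨by omega⟩
  haveI : Fact (1 < 4 * k) := ⟨by omega⟩
  haveI : Fact (1 < 2 * k + 1) := ⟨by omega⟩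
  -- adjacency along the cycle of the ladder
  have hedge : ∀ i : ZMod (4 * k), (mobiusLadder k).Adj i (i + 1) := by
    intro i
    simp only [mobiusLadder, SimpleGraph.fromRel_adj]
    refine ⟨fun h => one_ne_zero (α := ZMod (4 * k)) (by linear_combination -h), Or.inr ?_⟩
    exact Or.inl (by ring)
  -- adjacency along the diagonals
  have h2k : ((2 * k : ℕ) : ZMod (4 * k)) ≠ 0 := by
    rw [Ne, ZMod.natCast_eq_zero_iff]
    intro h; have := Nat.le_of_dvd (by omega) h; omega
  have hdiag : ∀ i : ZMod (4 * k), (mobiusLadder k).Adj i (i + (2 * k : ℕ)) := by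
    intro i
    simp only [mobiusLadder, SimpleGraph.fromRel_adj]
    exact ⟨fun h => h2k (by linear_combination -h), Or.inr (Or.inr (by ring))⟩
  -- adjacency in the odd cycle in terms of `ZMod` arithmetic
  have hkey : ∀ u v : ZMod (2 * k + 1), (SimpleGraph.cycleGraph (2 * k + 1)).Adj u v →
      u - v = 1 ∨ v - u = 1 := by
    intro u v h
    have h' := SimpleGraph.cycleGraph_adj'.mp h
    rcases h' with h' | h'
    · exact Or.inl ((ZMod.val_eq_one (by omega) _).mp h')
    · exact Or.inr ((ZMod.val_eq_one (by omega) _).mp h')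
  -- step differences along the cycle, with integer signs
  have hstep : ∀ j : ℕ, ∃ e : ℤ, (e = 1 ∨ e = -1) ∧
      ((e : ZMod (2 * k + 1)) =
        (φ (((j + 1 : ℕ) : ZMod (4 * k))) : ZMod (2 * k + 1)) - φ ((j : ZMod (4 * k)))) := by
    intro j
    have hc : (((j + 1 : ℕ)) : ZMod (4 * k)) = (j : ZMod (4 * k)) + 1 := by push_cast; ring
    have h := φ.map_adj (hedge (j : ZMod (4 * k)))
    rw [← hc] at h
    rcases hkey _ _ h with h' | h'
    · exact ⟨-1, Or.inr rfl, by rw [Int.cast_neg, Int.cast_one, ← h']; exact neg_sub _ _⟩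
    · exact ⟨1, Or.inl rfl, by rw [Int.cast_one]; exact h'.symm⟩
  choose ε hε1 hε2 using hstep
  -- diagonal differences with integer signs
  have hdstep : ∀ i : ℕ, ∃ e : ℤ, (e = 1 ∨ e = -1) ∧
      ((e : ZMod (2 * k + 1)) =
        (φ (((i + 2 * k : ℕ) : ZMod (4 * k))) : ZMod (2 * k + 1)) - φ ((i : ZMod (4 * k)))) := by
    intro i
    have hc : (((i + 2 * k : ℕ)) : ZMod (4 * k)) = (i : ZMod (4 * k)) + (2 * k : ℕ) := by
      push_cast; ring
    have h := φ.map_adj (hdiag (i : ZMod (4 * k)))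
    rw [← hc] at h
    rcases hkey _ _ h with h' | h'
    · exact ⟨-1, Or.inr rfl, by rw [Int.cast_neg, Int.cast_one, ← h']; exact neg_sub _ _⟩
    · exact ⟨1, Or.inl rfl, by rw [Int.cast_one]; exact h'.symm⟩
  choose εd hd1 hd2 using hdstep
  -- telescoping sums
  have tele : ∀ i m : ℕ, (∑ j ∈ Finset.range m, ((ε (i + j) : ℤ) : ZMod (2 * k + 1))) =
      (φ (((i + m : ℕ) : ZMod (4 * k))) : ZMod (2 * k + 1)) - φ ((i : ZMod (4 * k))) := by
    intro i m
    exact Eq.trans (b := ∑ j ∈ Finset.range m,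
            ((fun t => (φ (((i + t : ℕ) : ZMod (4 * k))) : ZMod (2 * k + 1))) (j + 1) -
             (fun t => (φ (((i + t : ℕ) : ZMod (4 * k))) : ZMod (2 * k + 1))) j))
          (Finset.sum_congr rfl (fun j _ => hε2 (i + j)))
      (Finset.sum_range_sub _ m)
  -- sign bounds
  have hbound : ∀ j : ℕ, -1 ≤ ε j ∧ ε j ≤ 1 := by
    intro j; rcases hε1 j with h | h <;> simp [h]
  -- each window of length 2k sums to ±2k
  have hwin : ∀ i : ℕ, (∑ j ∈ Finset.range (2 * k), ε (i + j)) = 2 * (k : ℤ) ∨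
      (∑ j ∈ Finset.range (2 * k), ε (i + j)) = -(2 * (k : ℤ)) := by
    intro i
    set S : ℤ := ∑ j ∈ Finset.range (2 * k), ε (i + j) with hS
    have hpar : S % 2 = 0 := by
      rw [hS, Finset.sum_int_mod]
      have : ∀ j ∈ Finset.range (2 * k), ε (i + j) % 2 = 1 := by
        intro j _; rcases hε1 (i + j) with h | h <;> simp [h]
      rw [Finset.sum_congr rfl this]
      simp
    have hb2 : S ≤ 2 * (k : ℤ) := by
      calc S ≤ ∑ j ∈ Finset.range (2 * k), (1 : ℤ) :=
            Finset.sum_le_sum (fun j _ => (hbound (i + j)).2)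
        _ = 2 * (k : ℤ) := by simp
    have hb1 : -(2 * (k : ℤ)) ≤ S := by
      have : ∑ j ∈ Finset.range (2 * k), (-1 : ℤ) ≤ S :=
        Finset.sum_le_sum (fun j _ => (hbound (i + j)).1)
      simpa using this
    have hcast : ((S : ℤ) : ZMod (2 * k + 1)) = ((εd i : ℤ) : ZMod (2 * k + 1)) := by
      rw [hd2 i, ← tele i (2 * k)]
      push_cast [hS]
      rfl
    have hdvd : ((2 * k + 1 : ℕ) : ℤ) ∣ S - εd i := by
      rw [← ZMod.intCast_zmod_eq_zero_iff_dvd]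
      push_cast
      rw [sub_eq_zero]
      exact_mod_cast hcast
    have hdvd' : (2 * (k : ℤ) + 1) ∣ S - 1 ∨ (2 * (k : ℤ) + 1) ∣ S + 1 := by
      rcases hd1 i with h | h
      · left; rw [h] at hdvd; exact_mod_cast hdvd
      · right; rw [h] at hdvd; push_cast at hdvd; exact_mod_cast hdvd
    exact windowSum k hk S hpar hb1 hb2 hdvd'
  -- hence all consecutive signs are equal
  have hstep_eq : ∀ i : ℕ, ε i = ε (i + 1) := by
    intro i
    have h01 : ∀ j ∈ Finset.range (2 * k), ε (i + j) = ε i ∨ True := fun _ _ => Or.inr trivial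
    rcases hwin i with h | h
    · have hz : ∑ j ∈ Finset.range (2 * k), (1 - ε (i + j)) = 0 := by
        rw [Finset.sum_sub_distrib, h]; simp
      have hall := (Finset.sum_eq_zero_iff_of_nonneg
        (fun j _ => by have := (hbound (i + j)).2; omega)).mp hz
      have e0 := hall 0 (Finset.mem_range.mpr (by omega))
      have e1 := hall 1 (Finset.mem_range.mpr (by omega))
      simp at e0 e1
      omega
    · have hz : ∑ j ∈ Finset.range (2 * k), (ε (i + j) + 1) = 0 := by
        rw [Finset.sum_add_distrib, h]; simp
      have hall := (Finset.sum_eq_zero_iff_of_nonneg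
        (fun j _ => by have := (hbound (i + j)).1; omega)).mp hz
      have e0 := hall 0 (Finset.mem_range.mpr (by omega))
      have e1 := hall 1 (Finset.mem_range.mpr (by omega))
      simp at e0 e1
      omega
  have hconst : ∀ i : ℕ, ε i = ε 0 := by
    intro i
    induction i with
    | zero => rfl
    | succ n ih => rw [← hstep_eq n]; exact ih
  -- total sum around the cycle
  have htot : (∑ j ∈ Finset.range (4 * k), ε j) = (4 * k : ℤ) * ε 0 := by
    rw [Finset.sum_congr rfl (fun j _ => hconst j)]
    simp [mul_comm]
  have htot0 : (((4 * k : ℤ) * ε 0 : ℤ) : ZMod (2 * k + 1)) = 0 := by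
    rw [← htot]
    push_cast
    have := tele 0 (4 * k)
    simp only [Nat.zero_add] at this
    rw [this]
    rw [ZMod.natCast_self]
    simp; exact rfl
  have hdvd : ((2 * k + 1 : ℕ) : ℤ) ∣ (4 * k : ℤ) * ε 0 := by
    rw [← ZMod.intCast_zmod_eq_zero_iff_dvd]
    push_cast
    push_cast at htot0
    exact htot0
  have hdvd4 : ((2 * k + 1 : ℕ) : ℤ) ∣ ((4 * k : ℕ) : ℤ) := by
    rcases hε1 0 with h | h
    · rw [h] at hdvd; push_cast; simpa using hdvd
    · rw [h] at hdvd; push_cast; rw [show (4 * (k:ℤ)) * (-1) = -(4 * k) by ring] at hdvd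
      simpa using (Int.dvd_neg.mp (by simpa using hdvd))
  have hnat : (2 * k + 1) ∣ 4 * k := Int.natCast_dvd_natCast.mp hdvd4
  have h42 : (2 * k + 1) ∣ 4 * k + 2 := ⟨2, by ring⟩
  have h2 : (2 * k + 1) ∣ 2 := by
    have := Nat.dvd_sub h42 hnat
    simpa using this
  have := Nat.le_of_dvd (by norm_num) h2
  omega
end
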